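/- arXiv:2006.13636 — 9 statements merged into one kernel-verified Lean document; each statement's English description precedes it below -/
import Mathlib

section
/- Let w = (w_1,…,w_n) be a sequence of n ≥ 1 non-negative real numbers, let W := (∑_{i=1}^n w_i)/n and D(w) := ∑_{i=1}^n |w_i − W|. Let m ≥ 1 and let I_1,…,I_m be i.i.d. samples drawn uniformly from {1,…,n} (i.e., distributed according to the m-fold product of the uniform distribution on {1,…,n}), and set Z_j := w_{I_j}. Define the estimator D̂ := (∑_{i=1}^n w_i) + (n/m)·(∑_{j=1}^m |Z_j − W| − ∑_{j=1}^m Z_j). Then for every δ ∈ (0,1), with probability at least 1 − δ, |D(w) − D̂| ≤ (∑_{i=1}^n w_i)·√(2 ln(2/δ)/m). -/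
open MeasureTheory Real ENNReal

lemma hoeffding_core {p : ℝ} (hp0 : 0 ≤ p) (hp1 : p ≤ 1) (h : ℝ) :
    Real.exp (-p * h) * (1 - p + p * Real.exp h) ≤ Real.exp (h ^ 2 / 8) := by
  set D : ℝ → ℝ := fun t => 1 - p + p * Real.exp t with hDdef
  have hD : ∀ t, 0 < D t := by
    intro t
    rcases lt_or_eq_of_le hp1 with h1 | h1
    · have : 0 ≤ p * Real.exp t := mul_nonneg hp0 (Real.exp_pos t).le
      simp only [hDdef]; linarith
    · have : D t = Real.exp t := by simp [hDdef, h1]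
      rw [this]; exact Real.exp_pos t
  set φ : ℝ → ℝ := fun t => t ^ 2 / 8 + p * t - Real.log (D t) with hφdef
  set ψ : ℝ → ℝ := fun t => t / 4 + p - p * Real.exp t / D t with hψdef
  have hDder : ∀ t, HasDerivAt D (p * Real.exp t) t := by
    intro t
    exact ((Real.hasDerivAt_exp t).const_mul p).const_add (1 - p)
  have hφder : ∀ t, HasDerivAt φ (ψ t) t := by
    intro t
    have h1 : HasDerivAt (fun t : ℝ => t ^ 2 / 8 + p * t)
        (t / 4 + p) t := by
      have := ((hasDerivAt_pow 2 t).div_const 8).add ((hasDerivAt_id t).const_mul p)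
      refine this.congr_deriv ?_; ring
    have h2 : HasDerivAt (fun t => Real.log (D t)) (p * Real.exp t / D t) t :=
      (hDder t).log (hD t).ne'
    exact h1.sub h2
  have hψder : ∀ t, HasDerivAt ψ (1 / 4 - p * Real.exp t * (1 - p) / (D t) ^ 2) t := by
    intro t
    have h1 : HasDerivAt (fun t : ℝ => t / 4 + p) (1 / 4) t := by
      simpa using ((hasDerivAt_id t).div_const 4).add_const p
    have h2 : HasDerivAt (fun t => p * Real.exp t / D t)
        ((p * Real.exp t * D t - p * Real.exp t * (p * Real.exp t)) / (D t) ^ 2) t :=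
      ((Real.hasDerivAt_exp t).const_mul p).div (hDder t) (hD t).ne'
    have h3 := h1.sub h2
    refine h3.congr_deriv ?_
    have : D t = 1 - p + p * Real.exp t := rfl
    rw [this]
    ring
  have hψmono : Monotone ψ := by
    apply monotone_of_deriv_nonneg (fun t => (hψder t).differentiableAt)
    intro t
    rw [(hψder t).deriv]
    have hkey : p * Real.exp t * (1 - p) / (D t) ^ 2 ≤ 1 / 4 := by
      rw [div_le_iff₀ (pow_pos (hD t) 2)]
      have : D t = 1 - p + p * Real.exp t := rfl
      nlinarith [sq_nonneg (1 - p - p * Real.exp t)]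
    linarith
  have hψ0 : ψ 0 = 0 := by
    simp only [hψdef, hDdef]
    norm_num
  have hφ0 : φ 0 = 0 := by
    simp only [hφdef, hDdef]
    norm_num
  have hφnonneg : ∀ t, 0 ≤ φ t := by
    intro t
    rcases le_or_gt 0 t with ht | ht
    · have hmono : MonotoneOn φ (Set.Ici (0 : ℝ)) := by
        apply monotoneOn_of_deriv_nonneg (convex_Ici 0)
          (fun x _ => (hφder x).differentiableAt.continuousAt.continuousWithinAt)
          (fun x _ => (hφder x).differentiableAt.differentiableWithinAt)
        intro x hx
        rw [(hφder x).deriv]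
        rw [interior_Ici] at hx
        calc (0:ℝ) = ψ 0 := hψ0.symm
          _ ≤ ψ x := hψmono hx.le
      have := hmono (Set.self_mem_Ici) (Set.mem_Ici.2 ht) ht
      linarith [hφ0]
    · have hmono : AntitoneOn φ (Set.Iic (0 : ℝ)) := by
        apply antitoneOn_of_deriv_nonpos (convex_Iic 0)
          (fun x _ => (hφder x).differentiableAt.continuousAt.continuousWithinAt)
          (fun x _ => (hφder x).differentiableAt.differentiableWithinAt)
        intro x hx
        rw [(hφder x).deriv]
        rw [interior_Iic] at hx
        calc ψ x ≤ ψ 0 := hψmono hx.le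
          _ = 0 := hψ0
      have := hmono (Set.mem_Iic.2 ht.le) (Set.self_mem_Iic) ht.le
      linarith [hφ0]
  have key := hφnonneg h
  have hlog : Real.log (D h) ≤ h ^ 2 / 8 + p * h := by
    simp only [hφdef] at key; linarith
  have : D h ≤ Real.exp (h ^ 2 / 8 + p * h) := by
    rw [← Real.exp_log (hD h)]
    exact Real.exp_le_exp.2 hlog
  calc Real.exp (-p * h) * D h ≤ Real.exp (-p * h) * Real.exp (h ^ 2 / 8 + p * h) := by
        apply mul_le_mul_of_nonneg_left this (Real.exp_pos _).le
    _ = Real.exp (h ^ 2 / 8) := by rw [← Real.exp_add]; ring_nf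

lemma mgf_bound {n : ℕ} (hn : 1 ≤ n) (g : Fin n → ℝ) (a b : ℝ)
    (ha : ∀ i, a ≤ g i) (hb : ∀ i, g i ≤ b) (lam : ℝ) :
    ∑ i, Real.exp (lam * (g i - (∑ i, g i) / n)) ≤
      (n : ℝ) * Real.exp (lam ^ 2 * (b - a) ^ 2 / 8) := by
  have hn0 : (0:ℝ) < n := by exact_mod_cast Nat.lt_of_lt_of_le Nat.zero_lt_one hn
  set μ : ℝ := (∑ i, g i) / n with hμdef
  have hsum_const : ∀ c : ℝ, ∑ _i : Fin n, c = n * c := by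
    intro c; simp [Finset.sum_const, Finset.card_univ, nsmul_eq_mul]
  have hμa : a ≤ μ := by
    rw [hμdef, le_div_iff₀ hn0]
    calc a * n = ∑ _i : Fin n, a := by rw [hsum_const]; ring
      _ ≤ ∑ i, g i := Finset.sum_le_sum fun i _ => ha i
  have hμb : μ ≤ b := by
    rw [hμdef, div_le_iff₀ hn0]
    calc ∑ i, g i ≤ ∑ _i : Fin n, b := Finset.sum_le_sum fun i _ => hb i
      _ = b * n := by rw [hsum_const]; ring
  by_cases hab : a < b
  · have hba : (0:ℝ) < b - a := sub_pos.2 hab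
    set p : ℝ := (μ - a) / (b - a) with hpdef
    have hp0 : 0 ≤ p := div_nonneg (by linarith) hba.le
    have hp1 : p ≤ 1 := (div_le_one hba).2 (by linarith)
    set h : ℝ := lam * (b - a) with hhdef
    have hA : Real.exp (lam * (a - μ)) = Real.exp (-p * h) := by
      congr 1
      rw [hpdef, hhdef]
      field_simp
      ring
    have hB : Real.exp (lam * (b - μ)) = Real.exp (-p * h + h) := by
      congr 1
      rw [hpdef, hhdef]
      field_simp
      ring
    have step1 : ∀ i, Real.exp (lam * (g i - μ)) ≤
        (b - g i) / (b - a) * Real.exp (lam * (a - μ)) +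
        (g i - a) / (b - a) * Real.exp (lam * (b - μ)) := by
      intro i
      have ht0 : (0:ℝ) ≤ (b - g i) / (b - a) := div_nonneg (by linarith [hb i]) hba.le
      have hs0 : (0:ℝ) ≤ (g i - a) / (b - a) := div_nonneg (by linarith [ha i]) hba.le
      have hts : (b - g i) / (b - a) + (g i - a) / (b - a) = 1 := by
        field_simp
        ring
      have := convexOn_exp.2 (Set.mem_univ (lam * (a - μ))) (Set.mem_univ (lam * (b - μ)))
        ht0 hs0 hts
      have harg : ((b - g i) / (b - a)) • (lam * (a - μ)) + ((g i - a) / (b - a)) • (lam * (b - μ))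
          = lam * (g i - μ) := by
        simp only [smul_eq_mul]
        field_simp
        ring
      rw [harg] at this
      simpa [smul_eq_mul] using this
    have step2 : ∑ i, Real.exp (lam * (g i - μ)) ≤
        (n : ℝ) * ((1 - p) * Real.exp (lam * (a - μ)) + p * Real.exp (lam * (b - μ))) := by
      calc ∑ i, Real.exp (lam * (g i - μ))
          ≤ ∑ i, ((b - g i) / (b - a) * Real.exp (lam * (a - μ)) +
              (g i - a) / (b - a) * Real.exp (lam * (b - μ))) :=
            Finset.sum_le_sum fun i _ => step1 i
        _ = (∑ i, (b - g i)) / (b - a) * Real.exp (lam * (a - μ)) +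
            (∑ i, (g i - a)) / (b - a) * Real.exp (lam * (b - μ)) := by
            rw [Finset.sum_add_distrib, ← Finset.sum_mul, ← Finset.sum_mul,
              ← Finset.sum_div, ← Finset.sum_div]
        _ = (n : ℝ) * ((1 - p) * Real.exp (lam * (a - μ)) + p * Real.exp (lam * (b - μ))) := by
            have e1 : ∑ i, (b - g i) = n * (b - μ) := by
              rw [Finset.sum_sub_distrib, hsum_const, hμdef]
              field_simp
            have e2 : ∑ i, (g i - a) = n * (μ - a) := by
              rw [Finset.sum_sub_distrib, hsum_const, hμdef]
              field_simp
            rw [e1, e2, hpdef]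
            field_simp
            ring
    have step3 : (1 - p) * Real.exp (lam * (a - μ)) + p * Real.exp (lam * (b - μ))
        = Real.exp (-p * h) * (1 - p + p * Real.exp h) := by
      rw [hA, hB, Real.exp_add]
      ring
    have step4 := hoeffding_core hp0 hp1 h
    have hh2 : h ^ 2 / 8 = lam ^ 2 * (b - a) ^ 2 / 8 := by
      rw [hhdef]; ring
    calc ∑ i, Real.exp (lam * (g i - μ)) ≤
        (n : ℝ) * ((1 - p) * Real.exp (lam * (a - μ)) + p * Real.exp (lam * (b - μ))) := step2
      _ = (n : ℝ) * (Real.exp (-p * h) * (1 - p + p * Real.exp h)) := by rw [step3]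
      _ ≤ (n : ℝ) * Real.exp (h ^ 2 / 8) := by
          apply mul_le_mul_of_nonneg_left step4 hn0.le
      _ = (n : ℝ) * Real.exp (lam ^ 2 * (b - a) ^ 2 / 8) := by rw [hh2]
  · -- a = b case: all g i equal
    push_neg at hab
    have hi : ∀ i, g i = μ := by
      intro i
      have h1 := ha i; have h2 := hb i
      have : g i = a := le_antisymm (le_trans h2 hab) h1
      have hμ : μ = a := le_antisymm (le_trans hμb hab) hμa
      rw [this, hμ]
    have : ∑ i, Real.exp (lam * (g i - μ)) = (n : ℝ) := by
      have : ∀ i : Fin n, Real.exp (lam * (g i - μ)) = 1 := by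
        intro i; rw [hi i]; simp
      rw [Finset.sum_congr rfl fun i _ => this i, hsum_const]; ring
    rw [this]
    nth_rewrite 1 [← mul_one (n:ℝ)]
    apply mul_le_mul_of_nonneg_left _ hn0.le
    exact Real.one_le_exp (by positivity)

lemma chernoff_count {n m : ℕ} (hn : 1 ≤ n) (hm : 1 ≤ m) (g : Fin n → ℝ) (a b : ℝ)
    (ha : ∀ i, a ≤ g i) (hb : ∀ i, g i ≤ b) (s : ℝ) (hs : 0 ≤ s) :
    ((Finset.univ.filter
        (fun I : Fin m → Fin n => s ≤ ∑ j, (g (I j) - (∑ i, g i) / n))).card : ℝ)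
      ≤ (n : ℝ) ^ m * Real.exp (-2 * s ^ 2 / (m * (b - a) ^ 2)) := by
  have hn0 : (0:ℝ) < n := by exact_mod_cast Nat.lt_of_lt_of_le Nat.zero_lt_one hn
  have hm0 : (0:ℝ) < m := by exact_mod_cast Nat.lt_of_lt_of_le Nat.zero_lt_one hm
  have hcard_univ : (Finset.univ : Finset (Fin m → Fin n)).card = n ^ m := by
    simp [Finset.card_univ]
  by_cases hab : a < b
  · set lam : ℝ := 4 * s / (m * (b - a) ^ 2) with hlamdef
    have hba : (0:ℝ) < b - a := sub_pos.2 hab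
    have hlam0 : 0 ≤ lam := by positivity
    set μ : ℝ := (∑ i, g i) / n with hμdef
    set S := Finset.univ.filter (fun I : Fin m → Fin n => s ≤ ∑ j, (g (I j) - μ)) with hSdef
    set E : ℝ := Real.exp (lam ^ 2 * (b - a) ^ 2 / 8) with hEdef
    have key : (S.card : ℝ) * Real.exp (lam * s) ≤ ((n : ℝ) * E) ^ m := by
      calc (S.card : ℝ) * Real.exp (lam * s)
          = ∑ _I ∈ S, Real.exp (lam * s) := by
            rw [Finset.sum_const, nsmul_eq_mul]
        _ ≤ ∑ I ∈ S, Real.exp (lam * ∑ j, (g (I j) - μ)) := by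
            apply Finset.sum_le_sum
            intro I hI
            apply Real.exp_le_exp.2
            apply mul_le_mul_of_nonneg_left _ hlam0
            exact (Finset.mem_filter.1 hI).2
        _ ≤ ∑ I : Fin m → Fin n, Real.exp (lam * ∑ j, (g (I j) - μ)) := by
            apply Finset.sum_le_sum_of_subset_of_nonneg (Finset.filter_subset _ _)
            intro I _ _
            exact (Real.exp_pos _).le
        _ = ∑ I : Fin m → Fin n, ∏ j, Real.exp (lam * (g (I j) - μ)) := by
            apply Finset.sum_congr rfl
            intro I _
            rw [Finset.mul_sum, Real.exp_sum]
        _ = (∑ i, Real.exp (lam * (g i - μ))) ^ m := by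
            have := Finset.prod_univ_sum (fun _ : Fin m => (Finset.univ : Finset (Fin n)))
              (fun _ i => Real.exp (lam * (g i - μ)))
            rw [Fintype.piFinset_univ] at this
            rw [← this, Finset.prod_const, Finset.card_univ, Fintype.card_fin]
        _ ≤ ((n : ℝ) * E) ^ m := by
            apply pow_le_pow_left₀ (Finset.sum_nonneg fun i _ => (Real.exp_pos _).le)
            exact mgf_bound hn g a b ha hb lam
    have key2 : (S.card : ℝ) ≤ ((n : ℝ) * E) ^ m * Real.exp (-(lam * s)) := by
      rw [Real.exp_neg, ← div_eq_mul_inv, le_div_iff₀ (Real.exp_pos _)]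
      exact key
    have key3 : ((n : ℝ) * E) ^ m * Real.exp (-(lam * s))
        = (n : ℝ) ^ m * Real.exp (-2 * s ^ 2 / (m * (b - a) ^ 2)) := by
      rw [mul_pow, hEdef, ← Real.exp_nat_mul, mul_assoc, ← Real.exp_add]
      congr 2
      rw [hlamdef]
      field_simp
      ring
    exact key2.trans_eq key3
  · push_neg at hab
    have hab' : a = b := le_antisymm (le_trans (ha ⟨0, hn⟩) (hb ⟨0, hn⟩)) hab
    have : (b - a) ^ 2 = 0 := by rw [hab']; ring
    rw [this]
    simp only [mul_zero, _root_.div_zero, Real.exp_zero, _root_.mul_one]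
    calc ((Finset.univ.filter _).card : ℝ) ≤ ((Finset.univ : Finset (Fin m → Fin n)).card : ℝ) := by
          exact_mod_cast Finset.card_filter_le _ _
      _ = (n : ℝ) ^ m := by rw [hcard_univ]; push_cast; ring

lemma pmf_unif_apply {Ω : Type*} [Fintype Ω] [Nonempty Ω] [MeasurableSpace Ω]
    [MeasurableSingletonClass Ω] (T : Set Ω) [DecidablePred (· ∈ T)] :
    (PMF.uniformOfFintype Ω).toMeasure T
      = (Finset.univ.filter (· ∈ T)).card * ((Fintype.card Ω : ℝ≥0∞))⁻¹ := by
  rw [PMF.toMeasure_apply _ ((Set.to_countable T).measurableSet), tsum_fintype]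
  have h : ∀ x : Ω, T.indicator (⇑(PMF.uniformOfFintype Ω)) x
      = if x ∈ T then ((Fintype.card Ω : ℝ≥0∞))⁻¹ else 0 := by
    intro x; by_cases hx : x ∈ T <;> simp [Set.indicator_apply, hx, PMF.uniformOfFintype_apply]
  rw [Finset.sum_congr rfl (fun x _ => h x), Finset.sum_ite, Finset.sum_const,
    Finset.sum_const_zero, add_zero, nsmul_eq_mul]

/-- Concentration of the discrepancy estimator (Lemma 3.1): sampling `m` indices i.i.d.
uniformly from `{1,…,n}` (i.e. according to the `m`-fold product of the uniform
distribution, which is the uniform distribution on `Fin m → Fin n`), with probability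
at least `1 - δ` the estimator `D̂` is within `‖w‖₁·√(2 ln(2/δ)/m)` of `D(w)`. -/
theorem stmt0 (n m : ℕ) (hn : 1 ≤ n) (hm : 1 ≤ m)
    (w : Fin n → ℝ) (hw : ∀ i, 0 ≤ w i) (δ : ℝ) (hδ : 0 < δ) (hδ1 : δ < 1) :
    ENNReal.ofReal (1 - δ) ≤
      (@PMF.uniformOfFintype (Fin m → Fin n) _ ⟨fun _ => ⟨0, hn⟩⟩).toMeasure
        {I : Fin m → Fin n |
          |(∑ i, |w i - (∑ i, w i) / (n : ℝ)|) -
              ((∑ i, w i) +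
                ((n : ℝ) / (m : ℝ)) *
                  ((∑ j, |w (I j) - (∑ i, w i) / (n : ℝ)|) - ∑ j, w (I j)))| ≤
            (∑ i, w i) * Real.sqrt (2 * Real.log (2 / δ) / (m : ℝ))} := by
  classical
  haveI : Nonempty (Fin n) := ⟨⟨0, hn⟩⟩
  haveI : Nonempty (Fin m → Fin n) := ⟨fun _ => ⟨0, hn⟩⟩
  have hn0 : (0:ℝ) < n := by exact_mod_cast Nat.lt_of_lt_of_le Nat.zero_lt_one hn
  have hm0 : (0:ℝ) < m := by exact_mod_cast Nat.lt_of_lt_of_le Nat.zero_lt_one hm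
  set Sw : ℝ := ∑ i, w i with hSwdef
  set Wav : ℝ := Sw / n with hWavdef
  have hSw0 : 0 ≤ Sw := Finset.sum_nonneg fun i _ => hw i
  set G : Set (Fin m → Fin n) :=
    {I : Fin m → Fin n |
      |(∑ i, |w i - Wav|) - (Sw + ((n : ℝ) / (m : ℝ)) *
          ((∑ j, |w (I j) - Wav|) - ∑ j, w (I j)))| ≤
        Sw * Real.sqrt (2 * Real.log (2 / δ) / (m : ℝ))} with hGdef
  rcases eq_or_lt_of_le hSw0 with hS0 | hSpos
  · -- all weights zero
    have hwz : ∀ i, w i = 0 := by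
      intro i
      have := Finset.sum_eq_zero_iff_of_nonneg (fun i _ => hw i) |>.1 hS0.symm
      exact this i (Finset.mem_univ i)
    have hGuniv : G = Set.univ := by
      ext I
      simp only [hGdef, Set.mem_setOf_eq, Set.mem_univ, iff_true]
      have hW0 : Wav = 0 := by rw [hWavdef, ← hS0]; simp
      simp [hwz, hW0, ← hS0, abs_of_nonneg]
    rw [hGuniv]
    haveI : IsProbabilityMeasure ((PMF.uniformOfFintype (Fin m → Fin n)).toMeasure) :=
      PMF.toMeasure.isProbabilityMeasure _
    rw [measure_univ]
    exact ENNReal.ofReal_le_one.2 (by linarith)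
  · -- main case
    have hWav : 0 < Wav := div_pos hSpos hn0
    set L : ℝ := Real.log (2 / δ) with hLdef
    have hL : 0 < L := Real.log_pos (by rw [lt_div_iff₀ hδ]; linarith)
    set q : ℝ := Real.sqrt (2 * L / m) with hqdef
    have hq0 : 0 ≤ q := Real.sqrt_nonneg _
    have hq2 : q ^ 2 = 2 * L / m := Real.sq_sqrt (by positivity)
    set f : Fin n → ℝ := fun i => |w i - Wav| - w i with hfdef
    set μf : ℝ := (∑ i, f i) / n with hμfdef
    have hfl : ∀ i, -Wav ≤ f i := fun i => by
      have := le_abs_self (w i - Wav); simp only [hfdef]; linarith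
    have hfu : ∀ i, f i ≤ Wav := fun i => by
      have h1 : |w i - Wav| ≤ |w i| + |Wav| := abs_sub _ _
      have h2 : |w i| = w i := abs_of_nonneg (hw i)
      have h3 : |Wav| = Wav := abs_of_nonneg hWav.le
      simp only [hfdef]; rw [h2, h3] at h1; linarith
    set s : ℝ := m * Wav * q with hsdef
    have hs0 : 0 ≤ s := by positivity
    -- the per-sample characterization
    have hiff : ∀ I : Fin m → Fin n, I ∈ G ↔ |∑ j, (f (I j) - μf)| ≤ s := by
      intro I
      have hsumf : ∑ j, f (I j) = (∑ j, |w (I j) - Wav|) - ∑ j, w (I j) := by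
        simp only [hfdef]; rw [Finset.sum_sub_distrib]
      have hfsum : ∑ i, f i = (∑ i, |w i - Wav|) - Sw := by
        simp only [hfdef]; rw [Finset.sum_sub_distrib, hSwdef]
      have hkey : (∑ i, |w i - Wav|) - (Sw + ((n : ℝ) / (m : ℝ)) *
          ((∑ j, |w (I j) - Wav|) - ∑ j, w (I j)))
          = -((n : ℝ) / m) * ∑ j, (f (I j) - μf) := by
        rw [Finset.sum_sub_distrib, Finset.sum_const, Finset.card_univ, Fintype.card_fin,
          nsmul_eq_mul, ← hsumf, hμfdef, hfsum]
        field_simp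
        ring
      have heps : Sw * q = ((n : ℝ) / m) * s := by
        rw [hsdef, hWavdef]; field_simp
      simp only [hGdef, Set.mem_setOf_eq, ← hqdef, hkey, heps]
      rw [abs_mul, abs_neg, abs_of_nonneg (by positivity : (0:ℝ) ≤ (n:ℝ)/m)]
      constructor
      · intro h
        have := mul_le_mul_of_nonneg_left h (by positivity : (0:ℝ) ≤ (m:ℝ)/n)
        calc |∑ j, (f (I j) - μf)| = ((m:ℝ)/n) * (((n:ℝ)/m) * |∑ j, (f (I j) - μf)|) := by
              field_simp
          _ ≤ ((m:ℝ)/n) * (((n:ℝ)/m) * s) := this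
          _ = s := by field_simp
      · intro h
        exact mul_le_mul_of_nonneg_left h (by positivity)
    -- bad sets
    set B1 := Finset.univ.filter
      (fun I : Fin m → Fin n => s ≤ ∑ j, (f (I j) - (∑ i, f i) / n)) with hB1def
    set B2 := Finset.univ.filter
      (fun I : Fin m → Fin n => s ≤ ∑ j, ((fun i => -f i) (I j) - (∑ i, (fun i => -f i) i) / n))
      with hB2def
    set Bfin := Finset.univ.filter (fun I : Fin m → Fin n => ¬ (I ∈ G)) with hBfindef
    have hsubset : Bfin ⊆ B1 ∪ B2 := by
      intro I hI
      rw [hBfindef, Finset.mem_filter] at hI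
      rw [hiff I, not_le] at hI
      have habs := hI.2
      rw [Finset.mem_union, hB1def, hB2def, Finset.mem_filter, Finset.mem_filter]
      have hneg : ∑ j, ((fun i => -f i) (I j) - (∑ i, (fun i => -f i) i) / n)
          = -∑ j, (f (I j) - μf) := by
        rw [← Finset.sum_neg_distrib]
        apply Finset.sum_congr rfl
        intro j _
        simp only [hμfdef]
        rw [Finset.sum_neg_distrib]
        field_simp
        ring
      rcases lt_abs.1 habs with h | h
      · exact Or.inl ⟨Finset.mem_univ I, h.le⟩
      · refine Or.inr ⟨Finset.mem_univ I, ?_⟩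
        rw [hneg]
        exact h.le
    -- counting bounds
    have hb1 : (B1.card : ℝ) ≤ (n:ℝ)^m * Real.exp (-2 * s^2 / (m * (Wav - -Wav)^2)) :=
      chernoff_count hn hm f (-Wav) Wav hfl hfu s hs0
    have hb2 : (B2.card : ℝ) ≤ (n:ℝ)^m * Real.exp (-2 * s^2 / (m * (Wav - -Wav)^2)) :=
      chernoff_count hn hm (fun i => -f i) (-Wav) Wav
        (fun i => neg_le_neg (hfu i)) (fun i => by simpa using neg_le_neg (hfl i)) s hs0
    have hexp : Real.exp (-2 * s^2 / (m * (Wav - -Wav)^2)) = δ/2 := by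
      have harg : -2 * s^2 / (m * (Wav - -Wav)^2) = -L := by
        rw [hsdef]
        have h1 : ((m:ℝ)*Wav*q)^2 = (m:ℝ)^2*Wav^2*q^2 := by ring
        rw [h1, hq2]
        field_simp
        ring
      rw [harg, Real.exp_neg, hLdef, Real.exp_log (by positivity), inv_div]
    have hcount : (Bfin.card : ℝ) ≤ δ * (n:ℝ)^m := by
      calc (Bfin.card : ℝ) ≤ ((B1 ∪ B2).card : ℝ) := by
            exact_mod_cast Finset.card_le_card hsubset
        _ ≤ (B1.card : ℝ) + (B2.card : ℝ) := by exact_mod_cast Finset.card_union_le B1 B2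
        _ ≤ (n:ℝ)^m * (δ/2) + (n:ℝ)^m * (δ/2) := by
            rw [← hexp]; exact add_le_add hb1 hb2
        _ = δ * (n:ℝ)^m := by ring
    set Gfin := Finset.univ.filter (· ∈ G) with hGfindef
    have htot : Gfin.card + Bfin.card = n^m := by
      rw [hGfindef, hBfindef, Finset.card_filter_add_card_filter_not]
      simp [Finset.card_univ]
    have hGcard : (1 - δ) * (n:ℝ)^m ≤ (Gfin.card : ℝ) := by
      have h1 : (Gfin.card : ℝ) + (Bfin.card : ℝ) = (n:ℝ)^m := by exact_mod_cast htot
      linarith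
    -- measure computation
    have hμG : (PMF.uniformOfFintype (Fin m → Fin n)).toMeasure G
        = (Gfin.card : ℝ≥0∞) * ((Fintype.card (Fin m → Fin n) : ℝ≥0∞))⁻¹ :=
      pmf_unif_apply G
    have hcardΩ : Fintype.card (Fin m → Fin n) = n ^ m := by simp
    have hNne : ((n ^ m : ℕ) : ℝ≥0∞) ≠ 0 :=
      Nat.cast_ne_zero.2 (pow_ne_zero m (by omega))
    have hNtop : ((n ^ m : ℕ) : ℝ≥0∞) ≠ ⊤ := ENNReal.natCast_ne_top _
    have h1 : ENNReal.ofReal (1 - δ) * ((n ^ m : ℕ) : ℝ≥0∞) ≤ (Gfin.card : ℝ≥0∞) := by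
      rw [← ENNReal.ofReal_natCast Gfin.card, ← ENNReal.ofReal_natCast (n ^ m),
        ← ENNReal.ofReal_mul (by linarith : (0:ℝ) ≤ 1 - δ)]
      apply ENNReal.ofReal_le_ofReal
      calc (1 - δ) * ((n ^ m : ℕ) : ℝ) = (1 - δ) * (n:ℝ)^m := by push_cast; ring
        _ ≤ (Gfin.card : ℝ) := hGcard
    calc ENNReal.ofReal (1 - δ)
        = ENNReal.ofReal (1 - δ) * (((n ^ m : ℕ) : ℝ≥0∞) * ((n ^ m : ℕ) : ℝ≥0∞)⁻¹) := by
          rw [ENNReal.mul_inv_cancel hNne hNtop, mul_one]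
      _ = (ENNReal.ofReal (1 - δ) * ((n ^ m : ℕ) : ℝ≥0∞)) * ((n ^ m : ℕ) : ℝ≥0∞)⁻¹ := by
          rw [mul_assoc]
      _ ≤ (Gfin.card : ℝ≥0∞) * ((n ^ m : ℕ) : ℝ≥0∞)⁻¹ := mul_le_mul_left h1 _
      _ = (PMF.uniformOfFintype (Fin m → Fin n)).toMeasure G := by
          rw [hμG, hcardΩ]
end

section
/- Let w = (w_1,…,w_n) be a sequence of n ≥ 1 non-negative real numbers, let W := (∑_{i=1}^n w_i)/n and D(w) := ∑_{i=1}^n |w_i − W|. Let (I_j)_{j≥1} be an infinite i.i.d. sequence of samples drawn uniformly from {1,…,n} (infinite product of the uniform distribution on {1,…,n}), and for each m ≥ 1 define the estimator D̂_m := (∑_{i=1}^n w_i) + (n/m)·(∑_{j=1}^m |w_{I_j} − W| − ∑_{j=1}^m w_{I_j}). Then for every δ ∈ (0,1), with probability at least 1 − δ/2, simultaneously for all integers m ≥ 1: |D(w) − D̂_m| ≤ (∑_{i=1}^n w_i)·√(2 ln(2π²m²/(3δ))/m). -/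
open MeasureTheory ProbabilityTheory
open Real


/-- Core Hoeffding inequality, `u ≥ 0` case with `0 < p < 1`. -/
lemma hoeff_core_aux (p : ℝ) (hp : 0 < p) (hp1 : p < 1) (u : ℝ) (hu : 0 ≤ u) :
    p * exp (-(1 - p) * u) + (1 - p) * exp (p * u) ≤ exp (u ^ 2 / 8) := by
  set q : ℝ := 1 - p with hq
  have hq0 : 0 < q := by simp [hq]; linarith
  set D : ℝ → ℝ := fun u => p * exp (-q * u) + q * exp (p * u) with hD
  set N : ℝ → ℝ := fun u => p * q * (exp (p * u) - exp (-q * u)) with hN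
  have hDpos : ∀ x, 0 < D x := fun x => by positivity
  have hDder : ∀ x, HasDerivAt D (N x) x := by
    intro x
    have h1 : HasDerivAt (fun x : ℝ => exp (-q * x)) (exp (-q * x) * (-q)) x := by
      simpa using ((hasDerivAt_id x).const_mul (-q)).exp
    have h2 : HasDerivAt (fun x : ℝ => exp (p * x)) (exp (p * x) * p) x := by
      simpa using ((hasDerivAt_id x).const_mul p).exp
    have := ((h1.const_mul p).add (h2.const_mul q))
    refine this.congr_deriv ?_
    simp only [hN]; ring
  have hNder : ∀ x, HasDerivAt N (p * q * (exp (p * x) * p + exp (-q * x) * q)) x := by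
    intro x
    have h1 : HasDerivAt (fun x : ℝ => exp (-q * x)) (exp (-q * x) * (-q)) x := by
      simpa using ((hasDerivAt_id x).const_mul (-q)).exp
    have h2 : HasDerivAt (fun x : ℝ => exp (p * x)) (exp (p * x) * p) x := by
      simpa using ((hasDerivAt_id x).const_mul p).exp
    have := (h2.sub h1).const_mul (p * q)
    refine this.congr_deriv ?_
    ring
  -- h = u/4 - N/D is monotone
  set h : ℝ → ℝ := fun u => u / 4 - N u / D u with hh
  have hhder : ∀ x, HasDerivAt h
      (1 / 4 - (p * q * (exp (p * x) * p + exp (-q * x) * q) * D x - N x * N x) / D x ^ 2) x := by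
    intro x
    exact ((hasDerivAt_id x).div_const 4).sub (((hNder x).div (hDder x) (hDpos x).ne'))
  have hder_nonneg : ∀ x, 0 ≤ 1 / 4 -
      (p * q * (exp (p * x) * p + exp (-q * x) * q) * D x - N x * N x) / D x ^ 2 := by
    intro x
    rw [sub_nonneg, div_le_iff₀ (by positivity : (0:ℝ) < D x ^ 2)]
    have key : p * q * (exp (p * x) * p + exp (-q * x) * q) * D x - N x * N x
        = p * q * (exp (-q * x) * exp (p * x)) * ((p + q) ^ 2) := by
      simp only [hN, hD]; ring
    rw [key]
    have hpq : p + q = 1 := by simp [hq]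
    rw [hpq]
    have sq : 0 ≤ (p * exp (-q * x) - q * exp (p * x)) ^ 2 := sq_nonneg _
    nlinarith [sq_nonneg (p * exp (-q * x) - q * exp (p * x)), exp_pos (-q*x), exp_pos (p*x)]
  have hmono : Monotone h := by
    refine monotone_of_deriv_nonneg (fun x => (hhder x).differentiableAt) (fun x => ?_)
    rw [(hhder x).deriv]; exact hder_nonneg x
  have hh0 : h 0 = 0 := by simp [hh, hN]
  -- g = u^2/8 - log (D u) is monotone on [0, ∞)
  set g : ℝ → ℝ := fun u => u ^ 2 / 8 - Real.log (D u) with hg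
  have hgder : ∀ x, HasDerivAt g (x / 4 - N x / D x) x := by
    intro x
    have h1 : HasDerivAt (fun u : ℝ => u ^ 2 / 8) (x / 4) x := by
      have := ((hasDerivAt_id x).pow 2).div_const 8
      refine this.congr_deriv ?_; simp only [id]; norm_num; ring
    exact h1.sub ((hDder x).log (hDpos x).ne')
  have hgmono : MonotoneOn g (Set.Ici (0:ℝ)) := by
    refine monotoneOn_of_deriv_nonneg (convex_Ici 0)
      (fun x _ => (hgder x).differentiableAt.continuousAt.continuousWithinAt) ?_ ?_
    · intro x _; exact (hgder x).differentiableAt.differentiableWithinAt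
    · intro x hx
      rw [(hgder x).deriv]
      have : (0:ℝ) ≤ h x := hh0 ▸ hmono (le_of_lt (by simpa using hx))
      simpa [hh] using this
  have hg0 : g 0 = 0 := by
    have hD0 : D 0 = 1 := by simp [hD]; linarith
    simp [hg, hD0]
  have := hgmono (Set.self_mem_Ici) (Set.mem_Ici.mpr hu) hu
  rw [hg0] at this
  have hlog : Real.log (D u) ≤ u ^ 2 / 8 := by
    simp only [hg] at this; linarith
  have := (Real.log_le_iff_le_exp (hDpos u)).mp hlog
  simpa [hD, hq] using this

/-- Core Hoeffding inequality. -/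
lemma hoeff_core (p : ℝ) (hp : 0 ≤ p) (hp1 : p ≤ 1) (u : ℝ) :
    p * exp (-(1 - p) * u) + (1 - p) * exp (p * u) ≤ exp (u ^ 2 / 8) := by
  have key : ∀ v : ℝ, 0 ≤ v → ∀ r : ℝ, 0 ≤ r → r ≤ 1 →
      r * exp (-(1 - r) * v) + (1 - r) * exp (r * v) ≤ exp (v ^ 2 / 8) := by
    intro v hv r hr hr1
    rcases eq_or_lt_of_le hr with h0 | h0
    · simp [← h0]
      positivity
    rcases eq_or_lt_of_le hr1 with h1 | h1
    · simp [h1]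
      positivity
    exact hoeff_core_aux r h0 h1 v hv
  rcases le_or_gt 0 u with hu | hu
  · exact key u hu p hp hp1
  · have := key (-u) (by linarith) (1 - p) (by linarith) (by linarith)
    have e : (1 - (1 - p)) = p := by ring
    rw [e] at this
    calc p * exp (-(1 - p) * u) + (1 - p) * exp (p * u)
        = (1 - p) * exp (-p * (-u)) + p * exp ((1 - p) * (-u)) := by ring_nf
      _ ≤ exp ((-u) ^ 2 / 8) := this
      _ = exp (u ^ 2 / 8) := by ring_nf

/-- Hoeffding's lemma for the uniform distribution on a finite set of values. -/
lemma avg_exp_le (n : ℕ) (hn : 1 ≤ n) (v : Fin n → ℝ) (a b : ℝ)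
    (hva : ∀ i, a ≤ v i) (hvb : ∀ i, v i ≤ b) (s : ℝ) :
    (1 / (n:ℝ)) * ∑ i, exp (s * v i) ≤
      exp (s * ((∑ i, v i) / (n:ℝ)) + s ^ 2 * (b - a) ^ 2 / 8) := by
  have hn0 : (0:ℝ) < n := by exact_mod_cast hn
  have hab : a ≤ b := le_trans (hva ⟨0, hn⟩) (hvb ⟨0, hn⟩)
  set m : ℝ := (∑ i, v i) / (n:ℝ) with hm
  have hsum_le : ∑ i, v i ≤ n * b := by
    calc ∑ i, v i ≤ ∑ _i : Fin n, b := Finset.sum_le_sum (fun i _ => hvb i)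
      _ = n * b := by simp [Finset.sum_const, Finset.card_univ, mul_comm]
  have hle_sum : (n:ℝ) * a ≤ ∑ i, v i := by
    calc (n:ℝ) * a = ∑ _i : Fin n, a := by simp [Finset.sum_const, Finset.card_univ, mul_comm]
      _ ≤ ∑ i, v i := Finset.sum_le_sum (fun i _ => hva i)
  have hma : a ≤ m := by rw [hm, le_div_iff₀ hn0]; linarith
  have hmb : m ≤ b := by rw [hm, div_le_iff₀ hn0]; linarith
  rcases eq_or_lt_of_le hab with heq | hlt
  · have hva' : ∀ i, v i = a := fun i => le_antisymm (heq ▸ hvb i) (hva i)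
    have hmA : m = a := le_antisymm (heq ▸ hmb) hma
    have : (1 / (n:ℝ)) * ∑ i, exp (s * v i) = exp (s * a) := by
      simp only [hva']
      rw [Finset.sum_const, Finset.card_univ, Fintype.card_fin, nsmul_eq_mul]
      field_simp
    rw [this, hmA, ← heq]
    simp
  · set p : ℝ := (b - m) / (b - a) with hp
    set u : ℝ := s * (b - a) with hu
    have hba : (0:ℝ) < b - a := by linarith
    have hp0 : 0 ≤ p := by apply div_nonneg <;> linarith
    have hp1 : p ≤ 1 := by rw [hp, div_le_one hba]; linarith
    have key : ∀ i, exp (s * v i) ≤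
        ((b - v i)/(b-a)) * exp (s*a) + ((v i - a)/(b-a)) * exp (s*b) := by
      intro i
      have hθ : 0 ≤ (b - v i)/(b-a) := by apply div_nonneg <;> linarith [hvb i]
      have hσ : 0 ≤ (v i - a)/(b-a) := by apply div_nonneg <;> linarith [hva i]
      have hsum : (b - v i)/(b-a) + (v i - a)/(b-a) = 1 := by field_simp; ring
      have h := convexOn_exp.2 (Set.mem_univ (s*a)) (Set.mem_univ (s*b)) hθ hσ hsum
      have harg : ((b - v i)/(b-a)) • (s*a) + ((v i - a)/(b-a)) • (s*b) = s * v i := by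
        simp only [smul_eq_mul]; field_simp; ring
      rw [harg] at h
      simpa using h
    have step1 : (1 / (n:ℝ)) * ∑ i, exp (s * v i) ≤
        p * exp (s*a) + (1 - p) * exp (s*b) := by
      have hsum_le' : ∑ i, exp (s * v i) ≤
          ∑ i, (((b - v i)/(b-a)) * exp (s*a) + ((v i - a)/(b-a)) * exp (s*b)) :=
        Finset.sum_le_sum (fun i _ => key i)
      have expand : ∑ i, (((b - v i)/(b-a)) * exp (s*a) + ((v i - a)/(b-a)) * exp (s*b))
          = (((n:ℝ)*b - ∑ i, v i)/(b-a)) * exp (s*a) + ((∑ i, v i - (n:ℝ)*a)/(b-a)) * exp (s*b) := by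
        rw [Finset.sum_add_distrib, ← Finset.sum_mul, ← Finset.sum_mul, ← Finset.sum_div,
          ← Finset.sum_div, Finset.sum_sub_distrib, Finset.sum_sub_distrib]
        simp [Finset.sum_const, Finset.card_univ, mul_comm]
      have hple : (1 / (n:ℝ)) * ∑ i, exp (s * v i) ≤
          (1 / (n:ℝ)) * ((((n:ℝ)*b - ∑ i, v i)/(b-a)) * exp (s*a)
            + ((∑ i, v i - (n:ℝ)*a)/(b-a)) * exp (s*b)) := by
        rw [← expand]
        exact mul_le_mul_of_nonneg_left hsum_le' (by positivity)
      refine hple.trans_eq ?_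
      rw [hp, hm]
      field_simp
      ring
    have e1 : s * a = s * m + (-(1-p)*u) := by rw [hp, hu]; field_simp; ring
    have e2 : s * b = s * m + (p*u) := by rw [hp, hu]; field_simp; ring
    have step2 : p * exp (s*a) + (1 - p) * exp (s*b)
        = exp (s*m) * (p * exp (-(1-p)*u) + (1-p) * exp (p*u)) := by
      rw [e1, e2, exp_add, exp_add]; ring
    have step3 := mul_le_mul_of_nonneg_left (hoeff_core p hp0 hp1 u) (exp_nonneg (s*m))
    calc (1 / (n:ℝ)) * ∑ i, exp (s * v i) ≤ p * exp (s*a) + (1 - p) * exp (s*b) := step1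
      _ = exp (s*m) * (p * exp (-(1-p)*u) + (1-p) * exp (p*u)) := step2
      _ ≤ exp (s*m) * exp (u^2/8) := step3
      _ = exp (s * m + s ^ 2 * (b - a) ^ 2 / 8) := by rw [← exp_add, hu]; ring_nf

/-- mgf of a single uniform sample. -/
lemma mgf_sample (n : ℕ) (hn : 1 ≤ n)
    {Ω : Type*} [MeasurableSpace Ω] (μ : Measure Ω) [IsProbabilityMeasure μ]
    (I : ℕ → Ω → Fin n) (hmeas : ∀ j, Measurable (I j))
    (hunif : ∀ j, μ.map (I j) =
      (@PMF.uniformOfFintype (Fin n) _ ⟨⟨0, hn⟩⟩).toMeasure)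
    (g : Fin n → ℝ) (j : ℕ) (s : ℝ) :
    mgf (fun ω => g (I j ω)) μ s = (1 / (n:ℝ)) * ∑ i, exp (s * g i) := by
  haveI : Nonempty (Fin n) := ⟨⟨0, hn⟩⟩
  have hg : Measurable (fun x : Fin n => exp (s * g x)) := measurable_from_top
  have h1 : mgf (fun ω => g (I j ω)) μ s
      = ∫ x, exp (s * g x) ∂(μ.map (I j)) := by
    rw [mgf, integral_map (hmeas j).aemeasurable hg.aestronglyMeasurable]
  rw [h1, hunif j, PMF.integral_eq_sum]
  rw [Finset.mul_sum]
  refine Finset.sum_congr rfl (fun i _ => ?_)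
  rw [PMF.uniformOfFintype_apply, smul_eq_mul]
  congr 1
  simp [ENNReal.toReal_inv]

lemma chernoff (n : ℕ) (hn : 1 ≤ n)
    {Ω : Type*} [MeasurableSpace Ω] (μ : Measure Ω) [IsProbabilityMeasure μ]
    (I : ℕ → Ω → Fin n) (hmeas : ∀ j, Measurable (I j))
    (hindep : iIndepFun I μ)
    (hunif : ∀ j, μ.map (I j) =
      (@PMF.uniformOfFintype (Fin n) _ ⟨⟨0, hn⟩⟩).toMeasure)
    (g : Fin n → ℝ) (W : ℝ) (hW : 0 < W)
    (hga : ∀ i, -W ≤ g i) (hgb : ∀ i, g i ≤ W)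
    (m : ℕ) (hm : 1 ≤ m) (t : ℝ) (ht : 0 ≤ t) :
    μ {ω | (m:ℝ) * ((∑ i, g i)/(n:ℝ)) + t ≤ ∑ j ∈ Finset.range m, g (I j ω)} +
      μ {ω | ∑ j ∈ Finset.range m, g (I j ω) ≤ (m:ℝ) * ((∑ i, g i)/(n:ℝ)) - t} ≤
      ENNReal.ofReal (2 * exp (-(t^2) / (2*(m:ℝ)*W^2))) := by
  have hm0 : (0:ℝ) < m := by exact_mod_cast hm
  set mg : ℝ := (∑ i, g i)/(n:ℝ) with hmg
  set s : ℝ := t / ((m:ℝ) * W^2) with hs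
  have hs0 : 0 ≤ s := by positivity
  set X : ℕ → Ω → ℝ := fun j ω => g (I j ω) with hX
  have hXmeas : ∀ j, Measurable (X j) := fun j => (measurable_from_top).comp (hmeas j)
  have hXindep : iIndepFun X μ :=
    hindep.comp (fun _ => g) (fun _ => measurable_from_top)
  set T : Ω → ℝ := fun ω => ∑ j ∈ Finset.range m, X j ω with hT
  have hTsum : (∑ j ∈ Finset.range m, X j) = T := by
    ext ω; simp [hT, Finset.sum_apply]
  have hTmeas : Measurable T := by
    apply Finset.measurable_sum
    exact fun j _ => hXmeas j
  have hTbdd : ∀ ω, |T ω| ≤ (m:ℝ) * W := by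
    intro ω
    calc |T ω| ≤ ∑ j ∈ Finset.range m, |X j ω| := Finset.abs_sum_le_sum_abs _ _
      _ ≤ ∑ _j ∈ Finset.range m, W :=
        Finset.sum_le_sum (fun j _ => abs_le.mpr ⟨hga _, hgb _⟩)
      _ = (m:ℝ) * W := by simp [mul_comm]
  have hInt : ∀ r : ℝ, Integrable (fun ω => exp (r * T ω)) μ := by
    intro r
    refine Integrable.mono' (integrable_const (exp (|r| * ((m:ℝ) * W))))
      ((hTmeas.const_mul r).exp.aestronglyMeasurable) (ae_of_all _ (fun ω => ?_))
    rw [norm_eq_abs, abs_of_nonneg (exp_nonneg _), exp_le_exp]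
    calc r * T ω ≤ |r * T ω| := le_abs_self _
      _ = |r| * |T ω| := abs_mul _ _
      _ ≤ |r| * ((m:ℝ) * W) := by
          exact mul_le_mul_of_nonneg_left (hTbdd ω) (abs_nonneg r)
  have hmgf : ∀ r : ℝ, mgf T μ r ≤ exp ((m:ℝ) * (r * mg + r^2*W^2/2)) := by
    intro r
    rw [← hTsum, iIndepFun.mgf_sum hXindep hXmeas]
    have hone : ∀ j, mgf (X j) μ r ≤ exp (r * mg + r^2*W^2/2) := by
      intro j
      rw [hX, mgf_sample n hn μ I hmeas hunif g j r]
      have := avg_exp_le n hn g (-W) W hga hgb r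
      convert this using 3
      ring
    calc ∏ j ∈ Finset.range m, mgf (X j) μ r
        ≤ ∏ _j ∈ Finset.range m, exp (r * mg + r^2*W^2/2) :=
          Finset.prod_le_prod (fun j _ => mgf_nonneg) (fun j _ => hone j)
      _ = exp (r * mg + r^2*W^2/2) ^ m := by simp
      _ = exp ((m:ℝ) * (r * mg + r^2*W^2/2)) := by rw [← Real.exp_nat_mul]
  have hexp_eq : -s * ((m:ℝ)*mg + t) + (m:ℝ) * (s * mg + s^2*W^2/2)
      = -(t^2) / (2*(m:ℝ)*W^2) := by
    rw [hs]; field_simp; ring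
  have hexp_eq' : -(-s) * ((m:ℝ)*mg - t) + (m:ℝ) * ((-s) * mg + (-s)^2*W^2/2)
      = -(t^2) / (2*(m:ℝ)*W^2) := by
    rw [hs]; field_simp; ring
  have hup : (μ {ω | (m:ℝ)*mg + t ≤ T ω}).toReal ≤ exp (-(t^2) / (2*(m:ℝ)*W^2)) := by
    calc (μ {ω | (m:ℝ)*mg + t ≤ T ω}).toReal
        ≤ exp (-s * ((m:ℝ)*mg + t)) * mgf T μ s :=
          measure_ge_le_exp_mul_mgf _ hs0 (hInt s)
      _ ≤ exp (-s * ((m:ℝ)*mg + t)) * exp ((m:ℝ) * (s * mg + s^2*W^2/2)) :=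
          mul_le_mul_of_nonneg_left (hmgf s) (exp_nonneg _)
      _ = exp (-(t^2) / (2*(m:ℝ)*W^2)) := by rw [← exp_add, hexp_eq]
  have hlo : (μ {ω | T ω ≤ (m:ℝ)*mg - t}).toReal ≤ exp (-(t^2) / (2*(m:ℝ)*W^2)) := by
    calc (μ {ω | T ω ≤ (m:ℝ)*mg - t}).toReal
        ≤ exp (-(-s) * ((m:ℝ)*mg - t)) * mgf T μ (-s) :=
          measure_le_le_exp_mul_mgf _ (neg_nonpos.mpr hs0) (hInt (-s))
      _ ≤ exp (-(-s) * ((m:ℝ)*mg - t)) * exp ((m:ℝ) * ((-s) * mg + (-s)^2*W^2/2)) :=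
          mul_le_mul_of_nonneg_left (hmgf (-s)) (exp_nonneg _)
      _ = exp (-(t^2) / (2*(m:ℝ)*W^2)) := by rw [← exp_add, hexp_eq']
  have h1 : μ {ω | (m:ℝ)*mg + t ≤ T ω} ≤ ENNReal.ofReal (exp (-(t^2) / (2*(m:ℝ)*W^2))) :=
    (ENNReal.le_ofReal_iff_toReal_le (measure_ne_top μ _) (exp_nonneg _)).mpr hup
  have h2 : μ {ω | T ω ≤ (m:ℝ)*mg - t} ≤ ENNReal.ofReal (exp (-(t^2) / (2*(m:ℝ)*W^2))) :=
    (ENNReal.le_ofReal_iff_toReal_le (measure_ne_top μ _) (exp_nonneg _)).mpr hlo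
  calc μ {ω | (m:ℝ)*mg + t ≤ T ω} + μ {ω | T ω ≤ (m:ℝ)*mg - t}
      ≤ ENNReal.ofReal (exp (-(t^2) / (2*(m:ℝ)*W^2)))
        + ENNReal.ofReal (exp (-(t^2) / (2*(m:ℝ)*W^2))) := add_le_add h1 h2
    _ = ENNReal.ofReal (2 * exp (-(t^2) / (2*(m:ℝ)*W^2))) := by
        rw [← ENNReal.ofReal_add (exp_nonneg _) (exp_nonneg _)]; ring_nf

/-- Uniform-over-`m` concentration of the discrepancy estimators: for an infinite i.i.d.
sequence `I_0, I_1, …` of indices, each uniformly distributed on `{1,…,n}`, with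
probability at least `1 - δ/2`, simultaneously for all `m ≥ 1` the estimator `D̂_m`
is within `‖w‖₁·√(2 ln(2π²m²/(3δ))/m)` of `D(w)`. -/
theorem stmt1 (n : ℕ) (hn : 1 ≤ n) (w : Fin n → ℝ) (hw : ∀ i, 0 ≤ w i)
    {Ω : Type*} [MeasurableSpace Ω] (μ : Measure Ω) [IsProbabilityMeasure μ]
    (I : ℕ → Ω → Fin n) (hmeas : ∀ j, Measurable (I j))
    (hindep : iIndepFun I μ)
    (hunif : ∀ j, μ.map (I j) =
      (@PMF.uniformOfFintype (Fin n) _ ⟨⟨0, hn⟩⟩).toMeasure)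
    (δ : ℝ) (hδ : 0 < δ) (hδ1 : δ < 1) :
    ENNReal.ofReal (1 - δ / 2) ≤
      μ {ω | ∀ m : ℕ, 1 ≤ m →
        |(∑ i, |w i - (∑ i, w i) / (n : ℝ)|) -
            ((∑ i, w i) +
              ((n : ℝ) / (m : ℝ)) *
                ((∑ j ∈ Finset.range m, |w (I j ω) - (∑ i, w i) / (n : ℝ)|) -
                  ∑ j ∈ Finset.range m, w (I j ω)))| ≤
          (∑ i, w i) *
            Real.sqrt (2 * Real.log (2 * Real.pi ^ 2 * (m : ℝ) ^ 2 / (3 * δ)) / (m : ℝ))} := by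
  have hn0 : (0:ℝ) < n := by exact_mod_cast hn
  have hofReal_le_one : ENNReal.ofReal (1 - δ / 2) ≤ 1 :=
    ENNReal.ofReal_le_one.mpr (by linarith)
  by_cases hS0 : ∑ i, w i = 0
  · -- degenerate case: all weights zero
    have hwz : ∀ i, w i = 0 := by
      intro i
      have := (Finset.sum_eq_zero_iff_of_nonneg (fun i _ => hw i)).mp hS0
      exact this i (Finset.mem_univ i)
    have hset : {ω : Ω | ∀ m : ℕ, 1 ≤ m →
        |(∑ i, |w i - (∑ i, w i) / (n : ℝ)|) -
            ((∑ i, w i) + ((n : ℝ) / (m : ℝ)) *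
                ((∑ j ∈ Finset.range m, |w (I j ω) - (∑ i, w i) / (n : ℝ)|) -
                  ∑ j ∈ Finset.range m, w (I j ω)))| ≤
          (∑ i, w i) *
            Real.sqrt (2 * Real.log (2 * Real.pi ^ 2 * (m : ℝ) ^ 2 / (3 * δ)) / (m : ℝ))}
        = Set.univ := by
      ext ω
      simp only [Set.mem_setOf_eq, Set.mem_univ, iff_true]
      intro m hm
      simp [hwz, hS0]
    rw [hset, measure_univ]
    exact hofReal_le_one
  · have hSpos : 0 < ∑ i, w i :=
      lt_of_le_of_ne (Finset.sum_nonneg (fun i _ => hw i)) (Ne.symm hS0)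
    set S : ℝ := ∑ i, w i with hSdef
    set W : ℝ := S / (n:ℝ) with hWdef
    have hWpos : 0 < W := by positivity
    set f : Fin n → ℝ := fun i => |w i - W| - w i with hfdef
    have hfa : ∀ i, -W ≤ f i := by
      intro i
      have := le_abs_self (w i - W)
      simp only [hfdef]
      linarith
    have hfb : ∀ i, f i ≤ W := by
      intro i
      have h1 : |w i - W| ≤ W + w i := abs_le.mpr ⟨by linarith [hw i, hWpos.le], by linarith [hw i, hWpos.le]⟩
      simp only [hfdef]
      linarith
    set μf : ℝ := (∑ i, f i) / (n:ℝ) with hμf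
    set L : ℕ → ℝ := fun m => Real.log (2 * Real.pi ^ 2 * (m:ℝ) ^ 2 / (3 * δ)) with hLdef
    set t : ℕ → ℝ := fun m => (m:ℝ) * W * Real.sqrt (2 * L m / (m:ℝ)) with htdef
    have hL : ∀ m : ℕ, 1 ≤ m → 0 ≤ L m := by
      intro m hm
      have hm0 : (1:ℝ) ≤ (m:ℝ) := by exact_mod_cast hm
      apply Real.log_nonneg
      rw [le_div_iff₀ (by positivity)]
      have hπ2 : (9:ℝ) < Real.pi ^ 2 := by nlinarith [Real.pi_gt_three]
      have hm2 : (1:ℝ) ≤ (m:ℝ)^2 := by nlinarith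
      nlinarith
    have ht : ∀ m : ℕ, 0 ≤ t m := by
      intro m
      have := Real.sqrt_nonneg (2 * L m / (m:ℝ))
      positivity
    set T : ℕ → Ω → ℝ := fun m ω => ∑ j ∈ Finset.range m, f (I j ω) with hTdef
    have hTmeas : ∀ m, Measurable (T m) := by
      intro m
      apply Finset.measurable_sum
      exact fun j _ => (measurable_from_top (f := f)).comp (hmeas j)
    set Bad : ℕ → Set Ω := fun m => if 1 ≤ m then
        ({ω | (m:ℝ) * μf + t m ≤ T m ω} ∪ {ω | T m ω ≤ (m:ℝ) * μf - t m}) else ∅ with hBdef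
    have hBadMeas : ∀ m, MeasurableSet (Bad m) := by
      intro m
      simp only [hBdef]
      split
      · exact (measurableSet_le measurable_const (hTmeas m)).union
          (measurableSet_le (hTmeas m) measurable_const)
      · exact MeasurableSet.empty
    have hBadBound : ∀ m, μ (Bad m) ≤
        ENNReal.ofReal (3 * δ / Real.pi ^ 2 * (1 / (m:ℝ)^2)) := by
      intro m
      rcases Nat.lt_or_ge m 1 with hm | hm
      · interval_cases m
        simp [hBdef]
      · have hm0 : (0:ℝ) < m := by exact_mod_cast hm
        have hBeq : Bad m =
            {ω | (m:ℝ) * μf + t m ≤ T m ω} ∪ {ω | T m ω ≤ (m:ℝ) * μf - t m} := by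
          simp [hBdef, hm]
        have hch := chernoff n hn μ I hmeas hindep hunif f W hWpos hfa hfb m hm (t m) (ht m)
        have hμfT : ((∑ i, f i)/(n:ℝ)) = μf := rfl
        have hstep : μ (Bad m) ≤ ENNReal.ofReal (2 * Real.exp (-(t m ^ 2) / (2 * (m:ℝ) * W^2))) := by
          rw [hBeq]
          exact le_trans (measure_union_le _ _) (by rw [hμfT] at hch; exact hch)
        refine hstep.trans_eq ?_
        congr 1
        have hLm := hL m hm
        have htsq : (t m) ^ 2 = 2 * (m:ℝ) * L m * W ^ 2 := by
          rw [htdef]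
          rw [mul_pow, mul_pow, Real.sq_sqrt (by positivity)]
          field_simp
        have hexp : -(t m ^ 2) / (2 * (m:ℝ) * W^2) = -(L m) := by
          rw [htsq]; field_simp
        rw [hexp, Real.exp_neg, hLdef, Real.exp_log (by positivity)]
        have hπ := Real.pi_ne_zero
        field_simp
    have hUnion : μ (⋃ m, Bad m) ≤ ENNReal.ofReal (δ / 2) := by
      have h1 : μ (⋃ m, Bad m) ≤ ∑' m, μ (Bad m) := measure_iUnion_le _
      have h2 : ∑' m, μ (Bad m) ≤
          ∑' m : ℕ, ENNReal.ofReal (3 * δ / Real.pi ^ 2 * (1 / (m:ℝ)^2)) :=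
        ENNReal.tsum_le_tsum hBadBound
      have hnn : ∀ m : ℕ, 0 ≤ 3 * δ / Real.pi ^ 2 * (1 / (m:ℝ)^2) := by
        intro m; positivity
      have hSum : HasSum (fun m : ℕ => 3 * δ / Real.pi ^ 2 * (1 / (m:ℝ)^2))
          (3 * δ / Real.pi ^ 2 * (Real.pi ^ 2 / 6)) := hasSum_zeta_two.mul_left _
      have h3 : ∑' m : ℕ, ENNReal.ofReal (3 * δ / Real.pi ^ 2 * (1 / (m:ℝ)^2))
          = ENNReal.ofReal (δ / 2) := by
        rw [← ENNReal.ofReal_tsum_of_nonneg hnn hSum.summable, hSum.tsum_eq]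
        congr 1
        have hπ := Real.pi_ne_zero
        field_simp
        ring
      calc μ (⋃ m, Bad m) ≤ ∑' m, μ (Bad m) := h1
        _ ≤ _ := h2
        _ = ENNReal.ofReal (δ / 2) := h3
    have hsubset : (⋃ m, Bad m)ᶜ ⊆ {ω : Ω | ∀ m : ℕ, 1 ≤ m →
        |(∑ i, |w i - (∑ i, w i) / (n : ℝ)|) -
            ((∑ i, w i) + ((n : ℝ) / (m : ℝ)) *
                ((∑ j ∈ Finset.range m, |w (I j ω) - (∑ i, w i) / (n : ℝ)|) -
                  ∑ j ∈ Finset.range m, w (I j ω)))| ≤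
          (∑ i, w i) *
            Real.sqrt (2 * Real.log (2 * Real.pi ^ 2 * (m : ℝ) ^ 2 / (3 * δ)) / (m : ℝ))} := by
      intro ω hω
      simp only [Set.mem_compl_iff, Set.mem_iUnion, not_exists] at hω
      intro m hm
      have hωm := hω m
      rw [hBdef] at hωm
      simp only [hm, if_true, Set.mem_union, Set.mem_setOf_eq, not_or, not_le] at hωm
      obtain ⟨h1, h2⟩ := hωm
      have hm0 : (0:ℝ) < m := by exact_mod_cast hm
      have habs : |(m:ℝ) * μf - T m ω| ≤ t m := by
        rw [abs_le]; constructor <;> [linarith; linarith]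
      -- rewrite the goal in terms of T and μf
      have hsum_eq : (∑ j ∈ Finset.range m, |w (I j ω) - (∑ i, w i) / (n : ℝ)|) -
          ∑ j ∈ Finset.range m, w (I j ω) = T m ω := by
        rw [hTdef, ← Finset.sum_sub_distrib]
      have hfs : (∑ i, f i) = (∑ i, |w i - (∑ i, w i) / (n : ℝ)|) - (∑ i, w i) := by
        simp only [hfdef]
        exact Finset.sum_sub_distrib _ _
      have hDS : (∑ i, |w i - (∑ i, w i) / (n : ℝ)|) - (∑ i, w i) = (n:ℝ) * μf := by
        rw [hμf, hfs]
        field_simp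
        congr 1
        exact Finset.sum_congr rfl (fun x _ => by rw [mul_comm])
      have hkey : (∑ i, |w i - (∑ i, w i) / (n : ℝ)|) -
          ((∑ i, w i) + ((n : ℝ) / (m : ℝ)) * ((∑ j ∈ Finset.range m,
            |w (I j ω) - (∑ i, w i) / (n : ℝ)|) - ∑ j ∈ Finset.range m, w (I j ω)))
          = ((n:ℝ) / (m:ℝ)) * ((m:ℝ) * μf - T m ω) := by
        rw [hsum_eq]
        have : (∑ i, |w i - (∑ i, w i) / (n : ℝ)|) = (∑ i, w i) + (n:ℝ) * μf := by
          linarith [hDS]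
        rw [this]
        field_simp
        ring
      rw [hkey, abs_mul, abs_of_pos (by positivity : (0:ℝ) < (n:ℝ)/(m:ℝ))]
      calc (n:ℝ)/(m:ℝ) * |(m:ℝ) * μf - T m ω| ≤ (n:ℝ)/(m:ℝ) * t m :=
            mul_le_mul_of_nonneg_left habs (by positivity)
        _ = (∑ i, w i) * Real.sqrt (2 * Real.log (2 * Real.pi ^ 2 * (m : ℝ) ^ 2 / (3 * δ)) / (m : ℝ)) := by
            simp only [htdef, hLdef, hWdef, hSdef]
            field_simp
    refine le_trans ?_ (measure_mono hsubset)
    rw [measure_compl (MeasurableSet.iUnion hBadMeas) (measure_ne_top μ _), measure_univ]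
    have heq : ENNReal.ofReal (1 - δ / 2) = 1 - ENNReal.ofReal (δ / 2) := by
      rw [ENNReal.ofReal_sub _ (by positivity), ENNReal.ofReal_one]
    rw [heq]
    exact tsub_le_tsub_left hUnion 1
end

section
/- Let S be a nonempty finite set and w : S → ℝ a non-negative weight function. Suppose V_1, …, V_k are nonempty, pairwise disjoint subsets of S whose union is S. Then ∑_{j=1}^k D_w(V_j) ≤ 2·D_w(S). -/
/-- The discrepancy of a nonempty finite set `V` with respect to a non-negative weight
function `w`: the sum over `x ∈ V` of `|w(V)/|V| - w(x)|`. -/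
noncomputable def setDisc {α : Type*} (w : α → ℝ) (V : Finset α) : ℝ :=
  ∑ x ∈ V, |(∑ y ∈ V, w y) / (V.card : ℝ) - w x|

/-- If nonempty sets `V 1, …, V k` partition a nonempty finite set `S`, then the sum of their
discrepancies is at most twice the discrepancy of `S`. -/
theorem stmt3 {α : Type*} [DecidableEq α] (S : Finset α) (hS : S.Nonempty)
    (w : α → ℝ) (hw : ∀ x ∈ S, 0 ≤ w x) (k : ℕ) (V : Fin k → Finset α)
    (hne : ∀ j, (V j).Nonempty)
    (hdisj : ∀ i j, i ≠ j → Disjoint (V i) (V j))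
    (hunion : Finset.univ.biUnion V = S) :
    ∑ j, setDisc w (V j) ≤ 2 * setDisc w S := by
  set c : ℝ := (∑ y ∈ S, w y) / (S.card : ℝ) with hc
  have key : ∀ j, setDisc w (V j) ≤ 2 * ∑ x ∈ V j, |c - w x| := by
    intro j
    set T := V j
    have hT : (0:ℝ) < T.card := by exact_mod_cast (hne j).card_pos
    set a : ℝ := (∑ y ∈ T, w y) / (T.card : ℝ) with ha
    have hdiff : |a - c| * T.card ≤ ∑ y ∈ T, |c - w y| := by
      have h1 : (a - c) * T.card = ∑ y ∈ T, (w y - c) := by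
        rw [Finset.sum_sub_distrib, Finset.sum_const, nsmul_eq_mul, ha]
        field_simp
      calc |a - c| * T.card = |(a - c) * T.card| := by
            rw [abs_mul, abs_of_nonneg hT.le]
        _ = |∑ y ∈ T, (w y - c)| := by rw [h1]
        _ ≤ ∑ y ∈ T, |w y - c| := Finset.abs_sum_le_sum_abs _ _
        _ = ∑ y ∈ T, |c - w y| := by simp [abs_sub_comm]
    calc setDisc w T = ∑ x ∈ T, |a - w x| := rfl
      _ ≤ ∑ x ∈ T, (|a - c| + |c - w x|) := by
          refine Finset.sum_le_sum fun x _ => ?_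
          calc |a - w x| = |(a - c) + (c - w x)| := by ring_nf
            _ ≤ |a - c| + |c - w x| := abs_add_le _ _
      _ = |a - c| * T.card + ∑ x ∈ T, |c - w x| := by
          rw [Finset.sum_add_distrib, Finset.sum_const, nsmul_eq_mul]; ring
      _ ≤ ∑ x ∈ T, |c - w x| + ∑ x ∈ T, |c - w x| := by linarith [hdiff]
      _ = 2 * ∑ x ∈ T, |c - w x| := by ring
  calc ∑ j, setDisc w (V j) ≤ ∑ j, 2 * ∑ x ∈ V j, |c - w x| :=
        Finset.sum_le_sum fun j _ => key j
    _ = 2 * ∑ j, ∑ x ∈ V j, |c - w x| := by rw [Finset.mul_sum]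
    _ = 2 * ∑ x ∈ S, |c - w x| := by
        rw [← hunion, Finset.sum_biUnion]
        intro i _ j _ hij
        exact hdisj i j hij
    _ = 2 * setDisc w S := rfl
end

section
/- Let S be a nonempty finite set and w : S → ℝ a non-negative weight function, and let V be a nonempty subset of S. Then D_w(V) ≤ 2·D_w(S). (In particular, in a hierarchical tree, the discrepancy of any descendant node is at most twice the discrepancy of any of its ancestors.) -/
/-- For a nonempty subset `V` of a nonempty finite set `S`, the discrepancy of `V` is at most
twice the discrepancy of `S`. -/
theorem stmt4 {α : Type*} [DecidableEq α] (S : Finset α) (hS : S.Nonempty)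
    (w : α → ℝ) (hw : ∀ x ∈ S, 0 ≤ w x)
    (V : Finset α) (hV : V ⊆ S) (hVne : V.Nonempty) :
    setDisc w V ≤ 2 * setDisc w S := by
  have hn : (0:ℝ) < V.card := by exact_mod_cast Finset.card_pos.mpr hVne
  set c : ℝ := (∑ y ∈ S, w y) / S.card with hc
  set m : ℝ := (∑ y ∈ V, w y) / V.card with hm
  have hnm : (V.card : ℝ) * m = ∑ y ∈ V, w y := by
    rw [hm]; field_simp
  have key1 : ∑ x ∈ V, |m - w x| ≤ ∑ x ∈ V, (|m - c| + |c - w x|) :=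
    Finset.sum_le_sum fun x _ => by
      have : m - w x = (m - c) + (c - w x) := by ring
      rw [this]; exact abs_add_le _ _
  have h2 : ∑ x ∈ V, (|m - c| + |c - w x|) = V.card * |m - c| + ∑ x ∈ V, |c - w x| := by
    rw [Finset.sum_add_distrib, Finset.sum_const, nsmul_eq_mul]
  have h3 : (V.card:ℝ) * |m - c| ≤ ∑ x ∈ V, |c - w x| := by
    have e0 : (V.card:ℝ) * (m - c) = ∑ x ∈ V, (w x - c) := by
      rw [Finset.sum_sub_distrib, Finset.sum_const, nsmul_eq_mul, ← hnm]; ring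
    have e1 : (V.card:ℝ) * |m - c| = |∑ x ∈ V, (w x - c)| := by
      rw [← e0, abs_mul, abs_of_pos hn]
    rw [e1]
    calc |∑ x ∈ V, (w x - c)| ≤ ∑ x ∈ V, |w x - c| := Finset.abs_sum_le_sum_abs _ _
      _ = ∑ x ∈ V, |c - w x| := by simp [abs_sub_comm]
  have h4 : ∑ x ∈ V, |c - w x| ≤ ∑ x ∈ S, |c - w x| :=
    Finset.sum_le_sum_of_subset_of_nonneg hV (fun _ _ _ => abs_nonneg _)
  have hVdef : setDisc w V = ∑ x ∈ V, |m - w x| := rfl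
  have hSdef : setDisc w S = ∑ x ∈ S, |c - w x| := rfl
  rw [hVdef, hSdef]
  linarith
end

section
/- For every ε > 0 there exists a hierarchical tree with root r, such that the tree has split quality q for some q < 1, the root discrepancy satisfies D_r > 0, and there exists a pruning P of the tree with |P| = 2 satisfying D_P ≥ (2 − ε)·D_r. -/
/-- A hierarchical tree: a finite rooted binary tree in which every internal node has exactly
two children and every leaf carries a real weight. -/
inductive HTree : Type
  | leaf (w : ℝ) : HTree
  | node (l r : HTree) : HTree

namespace HTree

/-- All leaf weights are non-negative. -/
def NonnegWeights : HTree → Prop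
  | leaf w => 0 ≤ w
  | node l r => l.NonnegWeights ∧ r.NonnegWeights

/-- The subtree of `t` reached by following the path `p` from the root
(`false` = left child, `true` = right child), if it exists. -/
def subtreeAt : HTree → List Bool → Option HTree
  | t, [] => some t
  | leaf _, _ :: _ => none
  | node l r, b :: p => (if b then r else l).subtreeAt p

/-- `p` is (the path to) a node of `t`. -/
def IsNodePath (t : HTree) (p : List Bool) : Prop := (t.subtreeAt p).isSome

/-- `p` is (the path to) a leaf of `t`. -/
def IsLeafPath (t : HTree) (p : List Bool) : Prop := ∃ w, t.subtreeAt p = some (leaf w)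

/-- The list of weights of the leaves weakly below the root of `t`. -/
def leafWeights : HTree → List ℝ
  | leaf w => [w]
  | node l r => l.leafWeights ++ r.leafWeights

/-- The discrepancy of the root of `t`: `∑_{x ∈ L_t} |w_t/N_t − w(x)|`. -/
noncomputable def disc (t : HTree) : ℝ :=
  (t.leafWeights.map
    (fun x => |t.leafWeights.sum / (t.leafWeights.length : ℝ) - x|)).sum

/-- The discrepancy of the node of `t` at path `p` (junk value `0` if there is no such node). -/
noncomputable def discAt (t : HTree) (p : List Bool) : ℝ :=
  ((t.subtreeAt p).map disc).getD 0

/-- A pruning of `t`: a finite set of nodes such that every leaf of `t` has exactly one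
weak ancestor (i.e. prefix) in the set. -/
def IsPruning (t : HTree) (P : Finset (List Bool)) : Prop :=
  (∀ p ∈ P, t.IsNodePath p) ∧ ∀ q, t.IsLeafPath q → ∃! p, p ∈ P ∧ p <+: q

/-- The discrepancy of a pruning: the sum of the discrepancies of its nodes. -/
noncomputable def discP (t : HTree) (P : Finset (List Bool)) : ℝ := ∑ p ∈ P, t.discAt p

/-- The tree `t` has split quality `q`: for every node and every one of its children,
the discrepancy of the child is at most `q` times the discrepancy of the parent. -/
def HasSplitQuality (t : HTree) (q : ℝ) : Prop :=
  ∀ p, t.IsNodePath p → ∀ b : Bool, t.IsNodePath (p ++ [b]) →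
    t.discAt (p ++ [b]) ≤ q * t.discAt p

end HTree

namespace HTreeAux

open HTree

/-- A comb of `n+1` leaves, all of weight 1. -/
def ones : ℕ → HTree
  | 0 => .leaf 1
  | n+1 => .node (ones n) (.leaf 1)

lemma leafWeights_ones (n : ℕ) : (ones n).leafWeights = List.replicate (n+1) 1 := by
  induction n with
  | zero => rfl
  | succ n ih =>
      rw [List.replicate_succ']
      simp [ones, HTree.leafWeights, ih]

lemma nonneg_ones (n : ℕ) : (ones n).NonnegWeights := by
  induction n with
  | zero => exact zero_le_one
  | succ n ih => exact ⟨ih, zero_le_one⟩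

lemma disc_leaf (w : ℝ) : (HTree.leaf w).disc = 0 := by
  simp [HTree.disc, HTree.leafWeights]

lemma disc_ones (n : ℕ) : (ones n).disc = 0 := by
  have h : ((n : ℝ) + 1) ≠ 0 := by positivity
  simp [HTree.disc, leafWeights_ones, List.map_replicate, List.sum_replicate, nsmul_eq_mul,
    mul_div_assoc, div_self h, abs_of_nonneg]

lemma disc_subtree_ones (n : ℕ) : ∀ p t', (ones n).subtreeAt p = some t' → t'.disc = 0 := by
  induction n with
  | zero =>
      intro p t' h
      cases p with
      | nil => simp [HTree.subtreeAt] at h; rw [← h]; exact disc_ones 0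
      | cons b p => simp [ones, HTree.subtreeAt] at h
  | succ n ih =>
      intro p t' h
      cases p with
      | nil => simp [HTree.subtreeAt] at h; rw [← h]; exact disc_ones (n+1)
      | cons b p =>
          cases b with
          | false => exact ih p t' h
          | true =>
              cases p with
              | nil =>
                  simp [ones, HTree.subtreeAt] at h
                  rw [← h]; exact disc_leaf 1
              | cons b' p' => simp [ones, HTree.subtreeAt] at h

/-- Child with leaves `replicate (n+1) 1 ++ [c]`. -/
lemma disc_node_ones_leaf (n : ℕ) (c : ℝ) :
    (HTree.node (ones n) (HTree.leaf c)).disc =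
      ((n:ℝ)+1) * |((n:ℝ)+1+c)/((n:ℝ)+2) - 1| + |((n:ℝ)+1+c)/((n:ℝ)+2) - c| := by
  have hne : ((n:ℝ) + 2) ≠ 0 := by positivity
  simp [HTree.disc, HTree.leafWeights, leafWeights_ones, List.map_replicate,
    List.sum_replicate, nsmul_eq_mul]
  ring_nf

end HTreeAux
namespace HTreeAux

lemma disc_left (n : ℕ) :
    (HTree.node (ones n) (HTree.leaf 0)).disc = 2*((n:ℝ)+1)/((n:ℝ)+2) := by
  have h2 : (0:ℝ) < (n:ℝ) + 2 := by positivity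
  rw [disc_node_ones_leaf]
  have e1 : ((n:ℝ)+1+0)/((n:ℝ)+2) - 1 = -(1/((n:ℝ)+2)) := by field_simp; norm_num
  have e2 : ((n:ℝ)+1+0)/((n:ℝ)+2) - 0 = ((n:ℝ)+1)/((n:ℝ)+2) := by ring
  rw [e1, e2, abs_neg, abs_of_nonneg (by positivity), abs_of_nonneg (by positivity)]
  field_simp
  ring

lemma disc_right (n : ℕ) :
    (HTree.node (ones n) (HTree.leaf 2)).disc = 2*((n:ℝ)+1)/((n:ℝ)+2) := by
  have h2 : (0:ℝ) < (n:ℝ) + 2 := by positivity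
  rw [disc_node_ones_leaf]
  have e1 : ((n:ℝ)+1+2)/((n:ℝ)+2) - 1 = 1/((n:ℝ)+2) := by field_simp; ring
  have e2 : ((n:ℝ)+1+2)/((n:ℝ)+2) - 2 = -(((n:ℝ)+1)/((n:ℝ)+2)) := by field_simp; ring
  rw [e1, e2, abs_neg, abs_of_nonneg (by positivity), abs_of_nonneg (by positivity)]
  field_simp
  ring

/-- The full tree. -/
def T (n : ℕ) : HTree :=
  HTree.node (HTree.node (ones n) (HTree.leaf 0)) (HTree.node (ones n) (HTree.leaf 2))

lemma leafWeights_T (n : ℕ) :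
    (T n).leafWeights =
      (List.replicate (n+1) 1 ++ [0]) ++ (List.replicate (n+1) 1 ++ [2]) := by
  simp [T, HTree.leafWeights, leafWeights_ones]

lemma disc_T (n : ℕ) : (T n).disc = 2 := by
  have hlen : ((T n).leafWeights.length : ℝ) = 2*(n:ℝ) + 4 := by
    simp [leafWeights_T]; ring
  have hsum : (T n).leafWeights.sum = 2*(n:ℝ) + 4 := by
    simp [leafWeights_T, List.sum_replicate, nsmul_eq_mul]; ring
  have hmean : (T n).leafWeights.sum / ((T n).leafWeights.length : ℝ) = 1 := by
    rw [hlen, hsum, div_self]; positivity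
  rw [HTree.disc, hmean, leafWeights_T]
  simp [List.map_replicate, List.sum_replicate]
  norm_num

end HTreeAux
namespace HTreeAux

lemma disc_nonneg (t : HTree) : 0 ≤ t.disc := by
  apply List.sum_nonneg
  intro x hx
  simp only [List.mem_map] at hx
  obtain ⟨y, _, hy⟩ := hx
  rw [← hy]; exact abs_nonneg _

lemma discAt_nonneg (t : HTree) (p : List Bool) : 0 ≤ t.discAt p := by
  cases h : t.subtreeAt p with
  | none => simp [HTree.discAt, h]
  | some t' => simp [HTree.discAt, h, disc_nonneg]

lemma discAt_T_nil (n : ℕ) : (T n).discAt [] = 2 := by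
  simpa [HTree.discAt, HTree.subtreeAt] using disc_T n

lemma discAt_T_false (n : ℕ) :
    (T n).discAt [false] = 2*((n:ℝ)+1)/((n:ℝ)+2) := by
  simpa [HTree.discAt, T, HTree.subtreeAt] using disc_left n

lemma discAt_T_true (n : ℕ) :
    (T n).discAt [true] = 2*((n:ℝ)+1)/((n:ℝ)+2) := by
  simpa [HTree.discAt, T, HTree.subtreeAt] using disc_right n

lemma discAt_T_deep (n : ℕ) (b0 b1 : Bool) (p' : List Bool) :
    (T n).discAt (b0 :: b1 :: p') = 0 := by
  have key : ∀ c : ℝ, ∀ p' : List Bool,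
      ((HTree.node (ones n) (HTree.leaf c)).subtreeAt (b1 :: p')).map HTree.disc
        = some 0 ∨
      ((HTree.node (ones n) (HTree.leaf c)).subtreeAt (b1 :: p')).map HTree.disc
        = none := by
    intro c p'
    cases b1 with
    | false =>
        have e : (HTree.node (ones n) (HTree.leaf c)).subtreeAt (false :: p')
            = (ones n).subtreeAt p' := rfl
        rw [e]
        cases h : (ones n).subtreeAt p' with
        | none => right; simp [h]
        | some t' => left; simp [h, disc_subtree_ones n p' t' h]
    | true =>
        have e : (HTree.node (ones n) (HTree.leaf c)).subtreeAt (true :: p')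
            = (HTree.leaf c).subtreeAt p' := rfl
        rw [e]
        cases p' with
        | nil => left; simp [HTree.subtreeAt, disc_leaf]
        | cons b'' p'' => right; simp [HTree.subtreeAt]
  cases b0 with
  | false =>
      have : (T n).subtreeAt (false :: b1 :: p')
          = (HTree.node (ones n) (HTree.leaf 0)).subtreeAt (b1 :: p') := by
        simp [T, HTree.subtreeAt]
      rw [HTree.discAt, this]
      rcases key 0 p' with h | h <;> rw [h] <;> rfl
  | true =>
      have : (T n).subtreeAt (true :: b1 :: p')
          = (HTree.node (ones n) (HTree.leaf 2)).subtreeAt (b1 :: p') := by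
        simp [T, HTree.subtreeAt]
      rw [HTree.discAt, this]
      rcases key 2 p' with h | h <;> rw [h] <;> rfl

lemma splitq (n : ℕ) : (T n).HasSplitQuality (((n:ℝ)+1)/((n:ℝ)+2)) := by
  have h2 : (0:ℝ) < (n:ℝ) + 2 := by positivity
  have hq0 : 0 ≤ ((n:ℝ)+1)/((n:ℝ)+2) := by positivity
  intro p _ b _
  match p with
  | [] =>
      have hb : (T n).discAt ([] ++ [b]) = 2*((n:ℝ)+1)/((n:ℝ)+2) := by
        cases b
        · simpa using discAt_T_false n
        · simpa using discAt_T_true n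
      rw [hb, discAt_T_nil]
      apply le_of_eq; ring
  | [b0] =>
      have hb : (T n).discAt ([b0] ++ [b]) = 0 := discAt_T_deep n b0 b []
      rw [hb]
      exact mul_nonneg hq0 (discAt_nonneg _ _)
  | b0 :: b1 :: rest =>
      have h1 : (T n).discAt ((b0 :: b1 :: rest) ++ [b]) = 0 := by
        simpa using discAt_T_deep n b0 b1 (rest ++ [b])
      have h3 : (T n).discAt (b0 :: b1 :: rest) = 0 := discAt_T_deep n b0 b1 rest
      rw [h1, h3, mul_zero]

lemma pruning (n : ℕ) :
    (T n).IsPruning ({[false], [true]} : Finset (List Bool)) := by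
  constructor
  · intro p hp
    simp only [Finset.mem_insert, Finset.mem_singleton] at hp
    rcases hp with rfl | rfl <;> simp [HTree.IsNodePath, T, HTree.subtreeAt]
  · rintro q ⟨w, hw⟩
    cases q with
    | nil => simp [HTree.subtreeAt, T] at hw
    | cons b q' =>
        refine ⟨[b], ⟨?_, ⟨q', rfl⟩⟩, ?_⟩
        · cases b <;> simp
        · rintro p' ⟨hm, u, hu⟩
          simp only [Finset.mem_insert, Finset.mem_singleton] at hm
          rcases hm with rfl | rfl <;>
            · simp only [List.cons_append, List.nil_append, List.cons.injEq] at hu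
              rw [← hu.1]

end HTreeAux
/-- Lemma 5.2, second part: for every `ε > 0` there is a hierarchical tree with split
quality `q < 1`, positive root discrepancy, and a pruning of size `2` whose discrepancy
is at least `(2 − ε)` times the root discrepancy. -/
theorem stmt6 (ε : ℝ) (hε : 0 < ε) :
    ∃ (t : HTree) (q : ℝ) (P : Finset (List Bool)),
      t.NonnegWeights ∧ q < 1 ∧ t.HasSplitQuality q ∧ 0 < t.disc ∧
      t.IsPruning P ∧ P.card = 2 ∧ (2 - ε) * t.disc ≤ t.discP P := by
  classical
  set n : ℕ := ⌈2/ε⌉₊ with hn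
  have hle : 2/ε ≤ (n:ℝ) := Nat.le_ceil _
  have hεn : 2 ≤ (n:ℝ) * ε := by
    have := (div_le_iff₀ hε).mp hle
    linarith
  have h2 : (0:ℝ) < (n:ℝ) + 2 := by positivity
  refine ⟨HTreeAux.T n, ((n:ℝ)+1)/((n:ℝ)+2), {[false], [true]}, ?_, ?_, ?_, ?_, ?_, ?_, ?_⟩
  · exact ⟨⟨HTreeAux.nonneg_ones n, le_refl 0⟩, HTreeAux.nonneg_ones n, show (0:ℝ) ≤ 2 by norm_num⟩
  · rw [div_lt_one h2]; linarith
  · exact HTreeAux.splitq n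
  · rw [HTreeAux.disc_T]; norm_num
  · exact HTreeAux.pruning n
  · rw [Finset.card_insert_of_notMem (by simp), Finset.card_singleton]
  · rw [HTree.discP, Finset.sum_insert (by simp), Finset.sum_singleton,
      HTreeAux.discAt_T_false, HTreeAux.discAt_T_true, HTreeAux.disc_T]
    rw [← add_div, le_div_iff₀ h2]
    nlinarith [hε.le, (Nat.cast_nonneg n : (0:ℝ) ≤ n)]
end

section
/- Let T be a hierarchical tree with split quality q for some q ∈ (0,1). Let K ≥ 2 be an integer and let P and Q be prunings of T with |P| = |Q| = K. Suppose there are real numbers β ≥ 1 and d ≥ 0 such that: (i) D_v ≤ β·d for every node v ∈ P, and (ii) d ≤ D_u for every node u of T that is a strict ancestor of some node of P. Then D_P ≤ 2β·(log K / log(1/q) + 1)·D_Q. -/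
namespace Stmt7Aux
open HTree


/-- antichain w.r.t. prefix order -/
def AC (A : Finset (List Bool)) : Prop := ∀ v ∈ A, ∀ w ∈ A, v <+: w → v = w

def tailsb (b : Bool) (A : Finset (List Bool)) : Finset (List Bool) :=
  (A.filter (fun v => v.head? = some b)).image List.tail

lemma head?_eq_cons {b : Bool} {v : List Bool} (h : v.head? = some b) : v = b :: v.tail := by
  cases v <;> simp_all

lemma mem_tailsb {b : Bool} {A : Finset (List Bool)} {w : List Bool} :
    w ∈ tailsb b A ↔ b :: w ∈ A := by
  constructor
  · rintro hw
    obtain ⟨v, hv, rfl⟩ := Finset.mem_image.mp hw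
    obtain ⟨hvA, hvh⟩ := Finset.mem_filter.mp hv
    rwa [← head?_eq_cons hvh]
  · intro h
    exact Finset.mem_image.mpr ⟨b :: w, Finset.mem_filter.mpr ⟨h, rfl⟩, rfl⟩

lemma sum_split {M : Type*} [AddCommMonoid M] (A : Finset (List Bool)) (h0 : [] ∉ A)
    (f : List Bool → M) :
    ∑ v ∈ A, f v = (∑ w ∈ tailsb false A, f (false :: w)) + ∑ w ∈ tailsb true A, f (true :: w) := by
  have himg : ∀ b : Bool, ∑ w ∈ tailsb b A, f (b :: w)
      = ∑ v ∈ A.filter (fun v => v.head? = some b), f v := by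
    intro b
    rw [tailsb, Finset.sum_image ?_]
    · apply Finset.sum_congr rfl
      intro v hv
      rw [← head?_eq_cons (Finset.mem_filter.mp hv).2]
    · intro x hx y hy hxy
      rw [head?_eq_cons (Finset.mem_filter.mp hx).2, head?_eq_cons (Finset.mem_filter.mp hy).2, hxy]
  rw [himg, himg, ← Finset.sum_filter_add_sum_filter_not A (fun v => v.head? = some false) f]
  congr 1
  apply Finset.sum_congr ?_ (fun _ _ => rfl)
  apply Finset.filter_congr
  intro v hv
  have hvne : v ≠ [] := fun h => h0 (h ▸ hv)
  cases v with
  | nil => simp at hvne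
  | cons b w => cases b <;> simp

lemma card_split (A : Finset (List Bool)) (h0 : [] ∉ A) :
    A.card = (tailsb false A).card + (tailsb true A).card := by
  have := sum_split A h0 (fun _ => (1 : ℕ))
  simpa using this

lemma AC_tailsb {A : Finset (List Bool)} (h : AC A) (b : Bool) : AC (tailsb b A) := by
  intro v hv w hw hvw
  have := h _ (mem_tailsb.mp hv) _ (mem_tailsb.mp hw) (by simpa using hvw)
  simpa using this

lemma AC_nil_mem {A : Finset (List Bool)} (h : AC A) (h0 : [] ∈ A) : A = {[]} := by
  apply Finset.eq_singleton_iff_unique_mem.mpr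
  exact ⟨h0, fun w hw => (h _ h0 _ hw (List.nil_prefix)).symm⟩

lemma len_tailsb {A : Finset (List Bool)} {n : ℕ} (hn : ∀ v ∈ A, v.length ≤ n + 1)
    (b : Bool) : ∀ w ∈ tailsb b A, w.length ≤ n := by
  intro w hw
  have := hn _ (mem_tailsb.mp hw)
  simpa using this

/-- Kraft-type inequality. -/
lemma kraft_aux : ∀ n : ℕ, ∀ A : Finset (List Bool), ∀ r : ℝ, 0 ≤ r → r ≤ 1/2 →
    (∀ v ∈ A, v.length ≤ n) → AC A → [] ∉ A → ∑ v ∈ A, r ^ v.length ≤ 2 * r := by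
  intro n
  induction n with
  | zero =>
    intro A r hr0 hr hlen hac h0
    have : A = ∅ := by
      apply Finset.eq_empty_of_forall_notMem
      intro v hv
      have := hlen v hv
      have : v = [] := List.eq_nil_of_length_eq_zero (Nat.le_zero.mp this)
      exact h0 (this ▸ hv)
    simp [this]; positivity
  | succ n ih =>
    intro A r hr0 hr hlen hac h0
    have h1 : ∀ b : Bool, ∑ w ∈ tailsb b A, r ^ w.length ≤ 1 := by
      intro b
      by_cases hb : [] ∈ tailsb b A
      · rw [AC_nil_mem (AC_tailsb hac b) hb]; simp
      · calc ∑ w ∈ tailsb b A, r ^ w.length ≤ 2 * r :=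
              ih _ r hr0 hr (len_tailsb hlen b) (AC_tailsb hac b) hb
          _ ≤ 1 := by linarith
    rw [sum_split A h0 (fun v => r ^ v.length)]
    simp only [List.length_cons, pow_succ]
    calc (∑ w ∈ tailsb false A, r ^ w.length * r) + ∑ w ∈ tailsb true A, r ^ w.length * r
        = (∑ w ∈ tailsb false A, r ^ w.length) * r + (∑ w ∈ tailsb true A, r ^ w.length) * r := by
          rw [Finset.sum_mul, Finset.sum_mul]
      _ ≤ 1 * r + 1 * r := by
          apply add_le_add <;> exact mul_le_mul_of_nonneg_right (h1 _) hr0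
      _ = 2 * r := by ring

lemma kraft_one {A : Finset (List Bool)} {r : ℝ} (hr0 : 0 ≤ r) (hr : r ≤ 1/2)
    (hac : AC A) : ∑ v ∈ A, r ^ v.length ≤ 1 := by
  by_cases h0 : [] ∈ A
  · rw [AC_nil_mem hac h0]; simp
  · exact (kraft_aux (A.sup List.length) A r hr0 hr (fun v hv => Finset.le_sup hv) hac h0).trans
      (by linarith)



/-- the set of "branching nodes" of a set of paths -/
def Br (A : Finset (List Bool)) : Finset (List Bool) :=
  (A.biUnion fun p => p.inits.toFinset).filter
    (fun v => (∃ p ∈ A, v ++ [false] <+: p) ∧ (∃ p ∈ A, v ++ [true] <+: p))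

lemma mem_Br {A : Finset (List Bool)} {v : List Bool} :
    v ∈ Br A ↔ (∃ p ∈ A, v ++ [false] <+: p) ∧ (∃ p ∈ A, v ++ [true] <+: p) := by
  rw [Br, Finset.mem_filter]
  constructor
  · exact fun h => h.2
  · intro h
    refine ⟨?_, h⟩
    obtain ⟨p, hp, hpre⟩ := h.1
    apply Finset.mem_biUnion.mpr ⟨p, hp, ?_⟩
    rw [List.mem_toFinset, List.mem_inits]
    exact ((v.prefix_append [false]).trans hpre)

lemma Br_tailsb {A : Finset (List Bool)} (b : Bool) :
    (Br (tailsb b A)).image (b :: ·) ⊆ Br A := by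
  intro v hv
  obtain ⟨w, hw, rfl⟩ := Finset.mem_image.mp hv
  obtain ⟨⟨p, hp, hpre⟩, ⟨p', hp', hpre'⟩⟩ := mem_Br.mp hw
  refine mem_Br.mpr ⟨⟨b :: p, mem_tailsb.mp hp, ?_⟩, ⟨b :: p', mem_tailsb.mp hp', ?_⟩⟩
  · show (b :: w) ++ [false] <+: b :: p
    rw [List.cons_append]
    exact List.cons_prefix_cons.mpr ⟨rfl, hpre⟩
  · show (b :: w) ++ [true] <+: b :: p'
    rw [List.cons_append]
    exact List.cons_prefix_cons.mpr ⟨rfl, hpre'⟩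

lemma Br_card : ∀ n : ℕ, ∀ A : Finset (List Bool), (∀ v ∈ A, v.length ≤ n) → AC A →
    A.card ≤ (Br A).card + 1 := by
  intro n
  induction n with
  | zero =>
    intro A hlen hac
    have : A ⊆ {[]} := fun v hv =>
      Finset.mem_singleton.mpr (List.eq_nil_of_length_eq_zero (Nat.le_zero.mp (hlen v hv)))
    calc A.card ≤ ({[]} : Finset (List Bool)).card := Finset.card_le_card this
      _ = 1 := rfl
      _ ≤ _ := le_add_self
  | succ n ih =>
    intro A hlen hac
    by_cases h0 : [] ∈ A
    · rw [AC_nil_mem hac h0]; simp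
    rw [card_split A h0]
    have hcardimg : ∀ b : Bool, ((Br (tailsb b A)).image (b :: ·)).card = (Br (tailsb b A)).card :=
      fun b => Finset.card_image_of_injective _ (fun x y h => by simpa using h)
    have hf := ih (tailsb false A) (len_tailsb hlen false) (AC_tailsb hac false)
    have ht := ih (tailsb true A) (len_tailsb hlen true) (AC_tailsb hac true)
    rcases Finset.eq_empty_or_nonempty (tailsb false A) with he | hne
    · have : (Br (tailsb true A)).card ≤ (Br A).card := by
        rw [← hcardimg true]; exact Finset.card_le_card (Br_tailsb true)
      simp [he]; omega
    rcases Finset.eq_empty_or_nonempty (tailsb true A) with he' | hne'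
    · have : (Br (tailsb false A)).card ≤ (Br A).card := by
        rw [← hcardimg false]; exact Finset.card_le_card (Br_tailsb false)
      simp [he']; omega
    · -- both nonempty : [] ∈ Br A and the two images are disjoint subsets of Br A \ {[]}
      obtain ⟨wf, hwf⟩ := hne
      obtain ⟨wt, hwt⟩ := hne'
      have hnil : [] ∈ Br A := by
        refine mem_Br.mpr ⟨⟨false :: wf, mem_tailsb.mp hwf, ?_⟩,
          ⟨true :: wt, mem_tailsb.mp hwt, ?_⟩⟩
        · simp
        · simp
      have hsub : ((Br (tailsb false A)).image (false :: ·)) ∪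
          ((Br (tailsb true A)).image (true :: ·)) ⊆ (Br A).erase [] := by
        intro v hv
        rcases Finset.mem_union.mp hv with h | h
        · refine Finset.mem_erase.mpr ⟨?_, Br_tailsb false h⟩
          obtain ⟨w, _, rfl⟩ := Finset.mem_image.mp h; simp
        · refine Finset.mem_erase.mpr ⟨?_, Br_tailsb true h⟩
          obtain ⟨w, _, rfl⟩ := Finset.mem_image.mp h; simp
      have hdisj : Disjoint ((Br (tailsb false A)).image (false :: ·))
          ((Br (tailsb true A)).image (true :: ·)) := by
        rw [Finset.disjoint_left]
        intro v hvf hvt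
        obtain ⟨w, _, rfl⟩ := Finset.mem_image.mp hvf
        obtain ⟨w', _, h⟩ := Finset.mem_image.mp hvt
        simp at h
      have hcard : (Br (tailsb false A)).card + (Br (tailsb true A)).card ≤ ((Br A).erase []).card := by
        rw [← hcardimg false, ← hcardimg true, ← Finset.card_union_of_disjoint hdisj]
        exact Finset.card_le_card hsub
      have herase : ((Br A).erase []).card = (Br A).card - 1 := Finset.card_erase_of_mem hnil
      have hpos : 1 ≤ (Br A).card := Finset.card_pos.mpr ⟨[], hnil⟩
      omega



open HTree

lemma list_sum_map_sub (l : List ℝ) (c : ℝ) :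
    (l.map (fun x => x - c)).sum = l.sum - l.length * c := by
  induction l with
  | nil => simp
  | cons a l ih => simp [ih]; ring

lemma list_sum_map_const (l : List ℝ) (a : ℝ) : (l.map (fun _ => a)).sum = l.length * a := by
  induction l with
  | nil => simp
  | cons x l ih => simp [ih]; ring

lemma list_abs_sum (l : List ℝ) : |l.sum| ≤ (l.map abs).sum := by
  induction l with
  | nil => simp
  | cons a l ih =>
    simp only [List.sum_cons, List.map_cons]
    exact (abs_add_le _ _).trans (by linarith)

lemma list_sum_le_sum {l : List ℝ} {f g : ℝ → ℝ} (h : ∀ x ∈ l, f x ≤ g x) :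
    (l.map f).sum ≤ (l.map g).sum := by
  induction l with
  | nil => simp
  | cons a l ih =>
    simp only [List.map_cons, List.sum_cons]
    exact add_le_add (h a (by simp)) (ih fun x hx => h x (by simp [hx]))

lemma list_sum_nonneg {l : List ℝ} (h : ∀ x ∈ l, 0 ≤ x) : 0 ≤ l.sum := by
  induction l with
  | nil => simp
  | cons a l ih =>
    simp only [List.sum_cons]
    have := h a (by simp)
    have := ih fun x hx => h x (by simp [hx])
    linarith

lemma subtreeAt_append (t : HTree) (p q : List Bool) :
    t.subtreeAt (p ++ q) = (t.subtreeAt p).bind (fun s => s.subtreeAt q) := by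
  induction p generalizing t with
  | nil => simp [subtreeAt]
  | cons b p ih =>
    cases t with
    | leaf w => simp [subtreeAt]
    | node l r => simp only [List.cons_append, subtreeAt]; exact ih _

lemma isNodePath_prefix {t : HTree} {u w : List Bool} (h : t.IsNodePath w) (hp : u <+: w) :
    t.IsNodePath u := by
  obtain ⟨r, rfl⟩ := hp
  rw [IsNodePath, subtreeAt_append] at h
  cases hs : t.subtreeAt u with
  | none => rw [hs] at h; simp at h
  | some s => rw [IsNodePath, hs]; rfl

lemma leafWeights_ne_nil (t : HTree) : t.leafWeights ≠ [] := by
  cases t with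
  | leaf w => simp [leafWeights]
  | node l r =>
    simp only [leafWeights, ne_eq, List.append_eq_nil_iff]
    intro h
    exact leafWeights_ne_nil l h.1

lemma disc_nonneg (t : HTree) : 0 ≤ disc t := by
  apply list_sum_nonneg
  intro x hx
  obtain ⟨y, _, rfl⟩ := List.mem_map.mp hx
  exact abs_nonneg _

lemma discAt_nonneg (t : HTree) (p : List Bool) : 0 ≤ t.discAt p := by
  rw [discAt]
  cases t.subtreeAt p with
  | none => simp
  | some s => simpa using disc_nonneg s

lemma discAt_nil (t : HTree) : t.discAt [] = disc t := by cases t <;> rfl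

lemma discAt_append {t s : HTree} {u : List Bool} (h : t.subtreeAt u = some s) (w : List Bool) :
    t.discAt (u ++ w) = s.discAt w := by
  rw [discAt, subtreeAt_append, h, discAt]; rfl

lemma isNodePath_append {t s : HTree} {u : List Bool} (h : t.subtreeAt u = some s)
    (w : List Bool) : t.IsNodePath (u ++ w) ↔ s.IsNodePath w := by
  rw [IsNodePath, subtreeAt_append, h, IsNodePath]; rfl

/-- center sum -/
noncomputable def ctr (s : HTree) (c : ℝ) : ℝ := (s.leafWeights.map (fun x => |c - x|)).sum

lemma ctr_nonneg (s : HTree) (c : ℝ) : 0 ≤ ctr s c := by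
  apply list_sum_nonneg
  intro x hx
  obtain ⟨y, _, rfl⟩ := List.mem_map.mp hx
  exact abs_nonneg _

lemma ctr_node (l r : HTree) (c : ℝ) : ctr (node l r) c = ctr l c + ctr r c := by
  simp [ctr, leafWeights]

lemma disc_le_two_ctr (s : HTree) (c : ℝ) : disc s ≤ 2 * ctr s c := by
  set l := s.leafWeights with hl
  have hne : l ≠ [] := leafWeights_ne_nil s
  have hn : 0 < (l.length : ℝ) := by
    have := List.length_pos_iff.mpr hne
    exact_mod_cast this
  set μ := l.sum / l.length with hμ
  have h1 : disc s ≤ ctr s c + l.length * |μ - c| := by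
    rw [disc, ← hl, ← hμ, ctr, ← hl]
    calc (l.map (fun x => |μ - x|)).sum ≤ (l.map (fun x => |c - x| + |μ - c|)).sum := by
          apply list_sum_le_sum
          intro x _
          calc |μ - x| = |(μ - c) + (c - x)| := by ring_nf
            _ ≤ |μ - c| + |c - x| := abs_add_le _ _
            _ = |c - x| + |μ - c| := by ring
      _ = (l.map (fun x => |c - x|)).sum + (l.map (fun _ => |μ - c|)).sum := by
          rw [← List.sum_map_add]  -- might not exist; fallback below
      _ = (l.map (fun x => |c - x|)).sum + l.length * |μ - c| := by
          rw [list_sum_map_const]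
  have h2 : (l.length : ℝ) * |μ - c| ≤ ctr s c := by
    have hsum : l.length * μ = l.sum := by
      rw [hμ]; field_simp
    have : (l.length : ℝ) * |μ - c| = |l.sum - l.length * c| := by
      rw [show (l.length : ℝ) * |μ - c| = |(l.length : ℝ) * (μ - c)| by
            rw [abs_mul, abs_of_pos hn]]
      congr 1
      rw [mul_sub, hsum]
    rw [this]
    calc |l.sum - (l.length : ℝ) * c| = |(l.map (fun x => x - c)).sum| := by
          rw [list_sum_map_sub]
      _ ≤ ((l.map (fun x => x - c)).map abs).sum := list_abs_sum _
      _ = ctr s c := by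
          rw [ctr, ← hl, List.map_map]
          exact congrArg List.sum (List.map_congr_left (fun x _ => by
            simp only [Function.comp_apply]
            exact abs_sub_comm _ _))
  linarith

lemma antichain_ctr : ∀ (s : HTree) (A : Finset (List Bool)),
    (∀ v ∈ A, s.IsNodePath v) → AC A → ∀ c, ∑ v ∈ A, s.discAt v ≤ 2 * ctr s c := by
  intro s
  induction s with
  | leaf w =>
    intro A hnp hac c
    by_cases h0 : [] ∈ A
    · rw [AC_nil_mem hac h0]
      have : disc (leaf w) = 0 := by simp [disc, leafWeights]
      rw [Finset.sum_singleton, discAt_nil, this]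
      exact mul_nonneg (by norm_num) (ctr_nonneg _ _)
    · have : A = ∅ := by
        apply Finset.eq_empty_of_forall_notMem
        intro v hv
        have := hnp v hv
        cases v with
        | nil => exact h0 hv
        | cons b p => rw [IsNodePath] at this; simp [subtreeAt] at this
      rw [this, Finset.sum_empty]
      exact mul_nonneg (by norm_num) (ctr_nonneg _ _)
  | node l r ihl ihr =>
    intro A hnp hac c
    by_cases h0 : [] ∈ A
    · rw [AC_nil_mem hac h0]
      simpa [discAt_nil] using disc_le_two_ctr (node l r) c
    · rw [sum_split A h0]
      have hf : ∀ w, discAt (node l r) (false :: w) = discAt l w := by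
        intro w; rw [discAt, discAt]; simp [subtreeAt]
      have ht : ∀ w, discAt (node l r) (true :: w) = discAt r w := by
        intro w; rw [discAt, discAt]; simp [subtreeAt]
      have hnl : ∀ w ∈ tailsb false A, l.IsNodePath w := by
        intro w hw
        have := hnp _ (mem_tailsb.mp hw)
        rwa [IsNodePath, subtreeAt, if_neg (by simp)] at this
      have hnr : ∀ w ∈ tailsb true A, r.IsNodePath w := by
        intro w hw
        have := hnp _ (mem_tailsb.mp hw)
        rwa [IsNodePath, subtreeAt, if_pos rfl] at this
      calc (∑ w ∈ tailsb false A, discAt (node l r) (false :: w)) +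
            ∑ w ∈ tailsb true A, discAt (node l r) (true :: w)
          = (∑ w ∈ tailsb false A, discAt l w) + ∑ w ∈ tailsb true A, discAt r w := by
            congr 1 <;> exact Finset.sum_congr rfl (fun w _ => by rw [hf] <;> rw [ht])
        _ ≤ 2 * ctr l c + 2 * ctr r c :=
            add_le_add (ihl _ hnl (AC_tailsb hac false) c) (ihr _ hnr (AC_tailsb hac true) c)
        _ = 2 * ctr (node l r) c := by rw [ctr_node]; ring

lemma antichain_disc (s : HTree) (A : Finset (List Bool))
    (hnp : ∀ v ∈ A, s.IsNodePath v) (hac : AC A) :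
    ∑ v ∈ A, s.discAt v ≤ 2 * disc s := by
  have := antichain_ctr s A hnp hac (s.leafWeights.sum / (s.leafWeights.length : ℝ))
  rwa [show ctr s (s.leafWeights.sum / (s.leafWeights.length : ℝ)) = disc s from rfl] at this

lemma exists_leafPath (s : HTree) : ∃ p, s.IsLeafPath p := by
  induction s with
  | leaf w => exact ⟨[], w, rfl⟩
  | node l r ihl ihr =>
    obtain ⟨p, w, hp⟩ := ihl
    exact ⟨false :: p, w, by rw [subtreeAt, if_neg (by simp)]; exact hp⟩

lemma decay {t : HTree} {q : ℝ} (hsq : t.HasSplitQuality q) (hq0 : 0 ≤ q)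
    (u : List Bool) : ∀ w : List Bool, t.IsNodePath (u ++ w) →
    t.discAt (u ++ w) ≤ q ^ w.length * t.discAt u := by
  intro w
  induction w using List.reverseRecOn with
  | nil => intro _; simp
  | append_singleton w b ih =>
    intro h
    rw [← List.append_assoc] at h ⊢
    have hpre : t.IsNodePath (u ++ w) :=
      isNodePath_prefix h ((u ++ w).prefix_append [b])
    calc t.discAt ((u ++ w) ++ [b]) ≤ q * t.discAt (u ++ w) := hsq _ hpre b h
      _ ≤ q * (q ^ w.length * t.discAt u) := by
          apply mul_le_mul_of_nonneg_left (ih hpre) hq0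
      _ = q ^ (w ++ [b]).length * t.discAt u := by
          rw [List.length_append, List.length_singleton, pow_succ]
          ring


lemma one_div_exp_le_log_two : 1 / Real.exp 1 ≤ Real.log 2 := by
  rw [div_le_iff₀ (Real.exp_pos 1)]
  nlinarith [Real.exp_one_gt_d9, Real.log_two_gt_d9]

/-- for `0 < q ≤ 1/2` we have `q ≤ log 2 / log (1/q)` -/
lemma q_le_L {q : ℝ} (hq0 : 0 < q) (hq : q ≤ 1/2) : q * Real.log (1/q) ≤ Real.log 2 := by
  have h1q : (0:ℝ) < 1/q := by positivity
  have heq : (1:ℝ)/q = Real.exp 1 * (1/(Real.exp 1 * q)) := by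
    field_simp
  have hpos : (0:ℝ) < 1/(Real.exp 1 * q) := by positivity
  have hlog : Real.log (1/q) ≤ 1/(Real.exp 1 * q) := by
    rw [heq, Real.log_mul (Real.exp_ne_zero 1) (ne_of_gt hpos), Real.log_exp]
    have := Real.log_le_sub_one_of_pos hpos
    linarith
  calc q * Real.log (1/q) ≤ q * (1/(Real.exp 1 * q)) :=
        mul_le_mul_of_nonneg_left hlog (le_of_lt hq0)
    _ = 1 / Real.exp 1 := by field_simp
    _ ≤ Real.log 2 := one_div_exp_le_log_two

set_option maxHeartbeats 1000000 in
theorem core (t : HTree) (q : ℝ) (hq0 : 0 < q) (hq1 : q < 1) (hsq : t.HasSplitQuality q)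
    (K : ℕ) (hK : 2 ≤ K) (β d : ℝ) (hβ : 1 ≤ β) (hd : 0 ≤ d)
    (u : List Bool) (hu : t.IsNodePath u) (M : Finset (List Bool))
    (hMnp : ∀ p ∈ M, t.IsNodePath p)
    (hMpre : ∀ p ∈ M, u <+: p ∧ u ≠ p)
    (hMac : AC M) (hMK : M.card ≤ K)
    (hdanc : ∀ v, (∃ p ∈ M, v <+: p ∧ v ≠ p) → d ≤ t.discAt v) :
    (∑ p ∈ M, t.discAt p) + β * d * ((M.card : ℝ) - 1) ≤
      2 * β * (Real.log K / Real.log (1/q) + 1) * t.discAt u := by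
  have hβ0 : 0 < β := lt_of_lt_of_le one_pos hβ
  have hlq : 0 < Real.log (1/q) := Real.log_pos (by rw [lt_div_iff₀ hq0]; linarith)
  have hlK : Real.log 2 ≤ Real.log K := by
    apply Real.log_le_log (by norm_num)
    exact_mod_cast hK
  have hl2 : (0:ℝ) < Real.log 2 := Real.log_pos (by norm_num)
  obtain ⟨L, hL⟩ : ∃ L : ℝ, L = Real.log K / Real.log (1/q) := ⟨_, rfl⟩
  obtain ⟨D, hDdef⟩ : ∃ D : ℝ, D = t.discAt u := ⟨_, rfl⟩
  rw [← hL, ← hDdef]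
  have hL0 : 0 < L := hL ▸ div_pos (lt_of_lt_of_le hl2 hlK) hlq
  have hD0 : 0 ≤ D := hDdef ▸ discAt_nonneg t u
  have hRHS0 : 0 ≤ 2 * β * (L + 1) * D := by positivity
  rcases Finset.eq_empty_or_nonempty M with rfl | hMne
  · simp only [Finset.sum_empty, Finset.card_empty, Nat.cast_zero]
    have := mul_nonneg hβ0.le hd
    linarith
  -- the subtree at u
  obtain ⟨s, hs⟩ : ∃ s, t.subtreeAt u = some s := by
    rw [IsNodePath, Option.isSome_iff_exists] at hu
    exact hu
  -- stripped set
  set M' : Finset (List Bool) := M.image (fun p => p.drop u.length) with hM'def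
  have hrepr : ∀ p ∈ M, u ++ p.drop u.length = p := by
    intro p hp
    obtain ⟨r, rfl⟩ := (hMpre p hp).1
    rw [List.drop_left]
  have hmem' : ∀ w, w ∈ M' ↔ u ++ w ∈ M := by
    intro w
    constructor
    · intro hw
      obtain ⟨p, hp, rfl⟩ := Finset.mem_image.mp hw
      rwa [hrepr p hp]
    · intro hw
      refine Finset.mem_image.mpr ⟨u ++ w, hw, ?_⟩
      simp
  have hinj : Set.InjOn (fun p : List Bool => p.drop u.length) ↑M := by
    intro p hp p' hp' h
    simp only at h
    rw [← hrepr p hp, ← hrepr p' hp', h]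
  have hcard' : M'.card = M.card := Finset.card_image_of_injOn hinj
  have hne' : ∀ w ∈ M', w ≠ [] := by
    intro w hw hwnil
    have := (hmem' w).mp hw
    rw [hwnil, List.append_nil] at this
    exact (hMpre u this).2 rfl
  have hnil' : [] ∉ M' := fun h => hne' [] h rfl
  have hnp' : ∀ w ∈ M', s.IsNodePath w := by
    intro w hw
    exact (isNodePath_append hs w).mp (hMnp _ ((hmem' w).mp hw))
  have hac' : AC M' := by
    intro v hv w hw hvw
    obtain ⟨r, rfl⟩ := hvw
    have h1 : u ++ v ∈ M := (hmem' v).mp hv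
    have h2 : u ++ (v ++ r) ∈ M := (hmem' _).mp hw
    have := hMac _ h1 _ h2 (by rw [← List.append_assoc]; exact (u ++ v).prefix_append r)
    exact List.append_cancel_left this
  have hdisc_s : disc s = D := by
    rw [hDdef, show u = u ++ ([] : List Bool) by simp, discAt_append hs, discAt_nil]
  have hsum_eq : ∑ p ∈ M, t.discAt p = ∑ w ∈ M', s.discAt w := by
    rw [hM'def, Finset.sum_image hinj]
    apply Finset.sum_congr rfl
    intro p hp
    conv_lhs => rw [← hrepr p hp]
    rw [discAt_append hs]
  have hdecay : ∀ w, s.IsNodePath w → s.discAt w ≤ q ^ w.length * D := by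
    intro w hw
    have h2 := decay hsq (le_of_lt hq0) u w ((isNodePath_append hs w).mpr hw)
    rw [discAt_append hs] at h2
    rwa [← hDdef] at h2
  have hd_at : ∀ w, (∃ p' ∈ M', w <+: p' ∧ w ≠ p') → d ≤ s.discAt w := by
    intro w ⟨p', hp', hpre, hne⟩
    have : d ≤ t.discAt (u ++ w) := by
      apply hdanc
      refine ⟨u ++ p', (hmem' p').mp hp', ?_, ?_⟩
      · obtain ⟨r, rfl⟩ := hpre
        rw [← List.append_assoc]
        exact (u ++ w).prefix_append r
      · intro h
        exact hne (List.append_cancel_left h)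
    rwa [discAt_append hs] at this
  have hdD : d ≤ D := by
    obtain ⟨p, hp⟩ := hMne
    have hp' : p.drop u.length ∈ M' := (hmem' _).mpr (by rwa [hrepr p hp])
    rw [← hdisc_s, ← discAt_nil]
    exact hd_at [] ⟨_, hp', List.nil_prefix, fun h => hne' _ hp' h.symm⟩
  -- branching nodes
  set B : Finset (List Bool) := Br M' with hBdef
  have hBstrict : ∀ v ∈ B, ∃ p' ∈ M', v <+: p' ∧ v ≠ p' := by
    intro v hv
    obtain ⟨⟨p', hp', hpre⟩, _⟩ := mem_Br.mp hv
    refine ⟨p', hp', (List.prefix_append v [false]).trans hpre, ?_⟩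
    rintro rfl
    have := List.IsPrefix.length_le hpre
    simp at this
  have hBnp : ∀ v ∈ B, s.IsNodePath v := by
    intro v hv
    obtain ⟨p', hp', hpre, _⟩ := hBstrict v hv
    exact isNodePath_prefix (hnp' p' hp') hpre
  have hBd : ∀ v ∈ B, d ≤ s.discAt v := fun v hv => hd_at v (hBstrict v hv)
  have hBq : ∀ v ∈ B, s.discAt v ≤ q ^ v.length * D := fun v hv => hdecay v (hBnp v hv)
  have hBcard : M.card ≤ B.card + 1 := by
    rw [← hcard']
    exact Br_card (M'.sup List.length) M' (fun v hv => Finset.le_sup hv) hac'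
  -- levels
  set J : ℕ := B.sup List.length with hJ
  have hlev_np : ∀ j : ℕ, ∀ v ∈ B.filter (fun v => v.length = j), s.IsNodePath v :=
    fun j v hv => hBnp v (Finset.mem_filter.mp hv).1
  have hlev_ac : ∀ j : ℕ, AC (B.filter (fun v => v.length = j)) := by
    intro j v hv w hw hvw
    have h1 := (Finset.mem_filter.mp hv).2
    have h2 := (Finset.mem_filter.mp hw).2
    exact List.IsPrefix.eq_of_length hvw (h1.trans h2.symm)
  have hlev : ∀ j : ℕ, ((B.filter (fun v => v.length = j)).card : ℝ) * d ≤ 2 * D := by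
    intro j
    calc ((B.filter (fun v => v.length = j)).card : ℝ) * d
        = ∑ _v ∈ B.filter (fun v => v.length = j), d := by
          rw [Finset.sum_const, nsmul_eq_mul]
      _ ≤ ∑ v ∈ B.filter (fun v => v.length = j), s.discAt v :=
          Finset.sum_le_sum (fun v hv => hBd v (Finset.mem_filter.mp hv).1)
      _ ≤ 2 * disc s := antichain_disc s _ (hlev_np j) (hlev_ac j)
      _ = 2 * D := by rw [hdisc_s]
  have hlev_kraft : ∀ j : ℕ, ((B.filter (fun v => v.length = j)).card : ℝ) ≤ 2 ^ j := by
    intro j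
    have := kraft_one (A := B.filter (fun v => v.length = j)) (r := 1/2)
      (by norm_num) (le_refl _) (hlev_ac j)
    rw [Finset.sum_congr rfl (fun v hv => by
      rw [(Finset.mem_filter.mp hv).2]) , Finset.sum_const, nsmul_eq_mul] at this
    rw [show ((1:ℝ)/2)^j = ((2:ℝ)^j)⁻¹ by rw [div_pow, one_pow, one_div]] at this
    rw [← le_div_iff₀ (by positivity)] at this
    simpa [div_eq_mul_inv] using (this.trans (by simp [one_div]))
  have hBsum : B.card = ∑ j ∈ Finset.range (J + 1), (B.filter (fun v => v.length = j)).card := by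
    apply Finset.card_eq_sum_card_fiberwise
    intro v hv
    rw [Finset.mem_coe, Finset.mem_range]
    exact Nat.lt_succ_of_le (Finset.le_sup hv)
  -- the sum of discrepancies of M
  have hSD2 : ∑ w ∈ M', s.discAt w ≤ 2 * D := by
    calc ∑ w ∈ M', s.discAt w ≤ 2 * disc s := antichain_disc s M' hnp' hac'
      _ = 2 * D := by rw [hdisc_s]
  -- main case analysis
  rcases Finset.eq_empty_or_nonempty B with hB0 | hBne
  · -- no branching: M.card ≤ 1, so M.card = 1
    have hm1 : M.card ≤ 1 := by rw [hB0] at hBcard; simpa using hBcard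
    have hbd0 : 0 ≤ β * d := mul_nonneg hβ0.le hd
    have hm1' : (M.card : ℝ) ≤ 1 := by exact_mod_cast hm1
    have hneg : β * d * ((M.card : ℝ) - 1) ≤ 0 :=
      mul_nonpos_of_nonneg_of_nonpos hbd0 (by linarith)
    have h2 : ∑ p ∈ M, t.discAt p ≤ 2 * D := by rw [hsum_eq]; exact hSD2
    have hcoef : 1 ≤ β * (L + 1) := by
      have h := mul_le_mul_of_nonneg_right hβ (by linarith : (0:ℝ) ≤ L + 1)
      linarith
    have h3 : 2 * D ≤ 2 * β * (L + 1) * D := by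
      have h := mul_le_mul_of_nonneg_right hcoef hD0
      nlinarith [h]
    linarith
  obtain ⟨vm, hvm, hvmJ⟩ : ∃ v ∈ B, List.length v = J := by
    obtain ⟨v, hv, hvJ⟩ := Finset.exists_mem_eq_sup B hBne List.length
    exact ⟨v, hv, hvJ.symm⟩
  have hdqJ : d ≤ q ^ J * D := by
    calc d ≤ s.discAt vm := hBd vm hvm
      _ ≤ q ^ vm.length * D := hBq vm hvm
      _ = q ^ J * D := by rw [hvmJ]
  have hmB : (M.card : ℝ) - 1 ≤ (B.card : ℝ) := by
    have : (M.card : ℝ) ≤ (B.card : ℝ) + 1 := by exact_mod_cast hBcard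
    linarith
  rcases le_or_gt q (1/2) with hqhalf | hqhalf
  · -- Regime I : q ≤ 1/2
    have hSD : ∑ w ∈ M', s.discAt w ≤ 2 * q * D := by
      calc ∑ w ∈ M', s.discAt w ≤ ∑ w ∈ M', q ^ w.length * D :=
            Finset.sum_le_sum (fun w hw => hdecay w (hnp' w hw))
        _ = (∑ w ∈ M', q ^ w.length) * D := by rw [Finset.sum_mul]
        _ ≤ (2 * q) * D := by
            apply mul_le_mul_of_nonneg_right ?_ hD0
            exact kraft_aux (M'.sup List.length) M' q (le_of_lt hq0) hqhalf
              (fun v hv => Finset.le_sup hv) hac' hnil'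
        _ = 2 * q * D := by ring
    have hBbound : (B.card : ℝ) ≤ 2 * 2 ^ J := by
      calc (B.card : ℝ) = ∑ j ∈ Finset.range (J + 1), ((B.filter (fun v => v.length = j)).card : ℝ) := by
            rw [hBsum]; push_cast; ring
        _ ≤ ∑ j ∈ Finset.range (J + 1), (2:ℝ) ^ j := Finset.sum_le_sum (fun j _ => hlev_kraft j)
        _ = 2 ^ (J + 1) - 1 := by
            induction (J + 1) with
            | zero => simp
            | succ n ih => rw [Finset.sum_range_succ, ih]; ring
        _ ≤ 2 * 2 ^ J := by rw [pow_succ]; linarith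
    have hmd : ((M.card : ℝ) - 1) * d ≤ 2 * D := by
      calc ((M.card : ℝ) - 1) * d ≤ (2 * 2 ^ J) * d := by
            apply mul_le_mul_of_nonneg_right (hmB.trans hBbound) hd
        _ ≤ (2 * 2 ^ J) * (q ^ J * D) := by
            apply mul_le_mul_of_nonneg_left hdqJ (by positivity)
        _ = 2 * ((2 * q) ^ J * D) := by rw [mul_pow]; ring
        _ ≤ 2 * (1 * D) := by
            apply mul_le_mul_of_nonneg_left ?_ (by norm_num)
            apply mul_le_mul_of_nonneg_right ?_ hD0
            exact pow_le_one₀ (by linarith) (by linarith)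
        _ = 2 * D := by ring
    have hqL : q ≤ L := by
      rw [hL, le_div_iff₀ hlq]
      exact (q_le_L hq0 hqhalf).trans hlK
    calc (∑ p ∈ M, t.discAt p) + β * d * ((M.card : ℝ) - 1)
        ≤ 2 * q * D + β * (2 * D) := by
          rw [hsum_eq]
          have : β * d * ((M.card : ℝ) - 1) ≤ β * (2 * D) := by
            rw [mul_assoc]
            apply mul_le_mul_of_nonneg_left ?_ (le_of_lt hβ0)
            rw [mul_comm]; exact hmd
          linarith [hSD]
      _ ≤ 2 * β * (L + 1) * D := by
          have h1 := mul_le_mul_of_nonneg_right hqL hD0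
          have h2 := mul_le_mul_of_nonneg_right hβ (mul_nonneg hL0.le hD0)
          nlinarith [h1, h2]
  · -- Regime II : q > 1/2
    have hL1 : 1 < L := by
      rw [hL, lt_div_iff₀ hlq]
      have : Real.log (1/q) < Real.log 2 := by
        apply Real.log_lt_log (by positivity)
        rw [div_lt_iff₀ hq0]; linarith
      linarith
    rcases le_or_gt ((K:ℝ) * q ^ J) 2 with hdeep | hshallow
    · -- deep case
      have hmd : ((M.card : ℝ) - 1) * d ≤ 2 * L * D := by
        calc ((M.card : ℝ) - 1) * d ≤ (K : ℝ) * d := by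
              apply mul_le_mul_of_nonneg_right ?_ hd
              have : (M.card : ℝ) ≤ (K : ℝ) := by exact_mod_cast hMK
              linarith
          _ ≤ (K : ℝ) * (q ^ J * D) := by
              apply mul_le_mul_of_nonneg_left hdqJ (by positivity)
          _ = ((K:ℝ) * q ^ J) * D := by ring
          _ ≤ 2 * D := mul_le_mul_of_nonneg_right hdeep hD0
          _ ≤ 2 * L * D := by
              have h := mul_nonneg (sub_nonneg.mpr hL1.le) hD0
              nlinarith [h]
      calc (∑ p ∈ M, t.discAt p) + β * d * ((M.card : ℝ) - 1)
          ≤ 2 * D + β * (2 * L * D) := by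
            rw [hsum_eq]
            have : β * d * ((M.card : ℝ) - 1) ≤ β * (2 * L * D) := by
              rw [mul_assoc]
              apply mul_le_mul_of_nonneg_left ?_ (le_of_lt hβ0)
              rw [mul_comm]; exact hmd
            linarith [hSD2]
        _ ≤ 2 * β * (L + 1) * D := by
            have h := mul_le_mul_of_nonneg_right hβ hD0
            rw [one_mul] at h
            ring_nf
            nlinarith [h]
    · -- shallow case : J < L - 1
      have hJL : (J : ℝ) < L - 1 := by
        have hlog : Real.log 2 < Real.log K + J * Real.log q := by
          have h1 : Real.log ((K:ℝ) * q ^ J) = Real.log K + J * Real.log q := by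
            rw [Real.log_mul (by positivity) (by positivity), Real.log_pow]
          have h2 : Real.log 2 < Real.log ((K:ℝ) * q ^ J) :=
            Real.log_lt_log (by norm_num) hshallow
          linarith [h2, h1.le, h1.ge]
        have hlogq_neg : Real.log q = - Real.log (1/q) := by
          rw [one_div, Real.log_inv]; ring
        rw [hlogq_neg] at hlog
        -- log 2 < log K - J * log(1/q)  ⇒  J * log(1/q) < log K - log 2 ⇒ J < L - log2/log(1/q)
        have h3 : (J : ℝ) * Real.log (1/q) < Real.log K - Real.log 2 := by linarith
        have h4 : (J : ℝ) < (Real.log K - Real.log 2) / Real.log (1/q) := by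
          rw [lt_div_iff₀ hlq]; linarith
        have h5 : (Real.log K - Real.log 2) / Real.log (1/q) = L - Real.log 2 / Real.log (1/q) := by
          rw [hL]; ring
        have h6 : 1 ≤ Real.log 2 / Real.log (1/q) := by
          rw [le_div_iff₀ hlq]
          have : Real.log (1/q) < Real.log 2 := by
            apply Real.log_lt_log (by positivity)
            rw [div_lt_iff₀ hq0]; linarith
          linarith
        linarith
      have hmd : ((M.card : ℝ) - 1) * d ≤ 2 * L * D := by
        have hB0le : ((B.filter (fun v => v.length = 0)).card : ℝ) * d ≤ D := by
          have hsub : B.filter (fun v => v.length = 0) ⊆ {[]} := by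
            intro v hv
            have := (Finset.mem_filter.mp hv).2
            simp only [Finset.mem_singleton]
            exact List.eq_nil_of_length_eq_zero this
          have : ((B.filter (fun v => v.length = 0)).card : ℝ) ≤ 1 := by
            have := Finset.card_le_card hsub
            simp only [Finset.card_singleton] at this
            exact_mod_cast this
          nlinarith [hdD, hd]
        calc ((M.card : ℝ) - 1) * d ≤ (B.card : ℝ) * d := mul_le_mul_of_nonneg_right hmB hd
          _ = ∑ j ∈ Finset.range (J + 1), ((B.filter (fun v => v.length = j)).card : ℝ) * d := by
              rw [hBsum]; push_cast; rw [Finset.sum_mul]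
          _ = ((B.filter (fun v => v.length = 0)).card : ℝ) * d +
              ∑ j ∈ Finset.range J, ((B.filter (fun v => v.length = (j+1))).card : ℝ) * d := by
              rw [Finset.sum_range_succ']
              ring
          _ ≤ D + ∑ j ∈ Finset.range J, 2 * D := by
              apply add_le_add hB0le
              exact Finset.sum_le_sum (fun j _ => hlev (j + 1))
          _ = D + J * (2 * D) := by
              rw [Finset.sum_const, Finset.card_range, nsmul_eq_mul]
          _ ≤ D + (L - 1) * (2 * D) := by
              nlinarith [mul_le_mul_of_nonneg_right (le_of_lt hJL) (by linarith : (0:ℝ) ≤ 2 * D)]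
          _ ≤ 2 * L * D := by nlinarith
      calc (∑ p ∈ M, t.discAt p) + β * d * ((M.card : ℝ) - 1)
          ≤ 2 * D + β * (2 * L * D) := by
            rw [hsum_eq]
            have : β * d * ((M.card : ℝ) - 1) ≤ β * (2 * L * D) := by
              rw [mul_assoc]
              apply mul_le_mul_of_nonneg_left ?_ (le_of_lt hβ0)
              rw [mul_comm]; exact hmd
            linarith [hSD2]
        _ ≤ 2 * β * (L + 1) * D := by
            have h := mul_le_mul_of_nonneg_right hβ hD0
            rw [one_mul] at h
            ring_nf
            nlinarith [h]


section Assembly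
variable {t : HTree} {q : ℝ} {K : ℕ} {P Q : Finset (List Bool)} {β d : ℝ}

lemma prefix_antisymm {a b : List Bool} (h1 : a <+: b) (h2 : b <+: a) : a = b :=
  h1.eq_of_length (le_antisymm h1.length_le h2.length_le)

lemma leafBelow (hv : t.IsNodePath v) : ∃ r, t.IsLeafPath (v ++ r) := by
  obtain ⟨s, hs⟩ : ∃ s, t.subtreeAt v = some s := Option.isSome_iff_exists.mp hv
  obtain ⟨p, w, hp⟩ := exists_leafPath s
  exact ⟨p, w, by rw [subtreeAt_append, hs]; exact hp⟩

lemma pruning_AC (hP : t.IsPruning P) : AC P := by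
  intro v hv w hw hvw
  obtain ⟨r, hr⟩ := leafBelow (hP.1 w hw)
  obtain ⟨p0, _, hp0uniq⟩ := hP.2 _ hr
  have h1 := hp0uniq v ⟨hv, hvw.trans (w.prefix_append r)⟩
  have h2 := hp0uniq w ⟨hw, w.prefix_append r⟩
  rw [h1, h2]

lemma pruning_comparable (hQ : t.IsPruning Q) (hp : t.IsNodePath p) :
    ∃ u ∈ Q, u <+: p ∨ p <+: u := by
  obtain ⟨r, hr⟩ := leafBelow hp
  obtain ⟨u, ⟨huQ, hupre⟩, _⟩ := hQ.2 _ hr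
  exact ⟨u, huQ, (List.prefix_or_prefix_of_prefix hupre (p.prefix_append r)).imp id (fun h => h)⟩

end Assembly


end Stmt7Aux

open Stmt7Aux HTree in
set_option maxHeartbeats 1000000 in
/-- Deterministic core of Lemma 5.3: if `T` has split quality `q ∈ (0,1)`, `P` and `Q` are
prunings of size `K ≥ 2`, every node of `P` has discrepancy at most `β·d`, and every strict
ancestor of a node of `P` has discrepancy at least `d`, then
`D_P ≤ 2β(log K/log(1/q) + 1)·D_Q`. -/
theorem stmt7 (t : HTree) (hw : t.NonnegWeights)
    (q : ℝ) (hq0 : 0 < q) (hq1 : q < 1) (hsq : t.HasSplitQuality q)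
    (K : ℕ) (hK : 2 ≤ K)
    (P Q : Finset (List Bool)) (hP : t.IsPruning P) (hQ : t.IsPruning Q)
    (hPcard : P.card = K) (hQcard : Q.card = K)
    (β d : ℝ) (hβ : 1 ≤ β) (hd : 0 ≤ d)
    (hPd : ∀ v ∈ P, t.discAt v ≤ β * d)
    (hanc : ∀ u, t.IsNodePath u → (∃ v ∈ P, u <+: v ∧ u ≠ v) → d ≤ t.discAt u) :
    t.discP P ≤ 2 * β * (Real.log K / Real.log (1 / q) + 1) * t.discP Q := by
  classical
  have hβ0 : (0:ℝ) < β := lt_of_lt_of_le one_pos hβ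
  have hACP : AC P := pruning_AC hP
  have hACQ : AC Q := pruning_AC hQ
  set C : ℝ := 2 * β * (Real.log K / Real.log (1/q) + 1) with hC
  have hlq : 0 < Real.log (1/q) := Real.log_pos (by rw [lt_div_iff₀ hq0]; linarith)
  have hlK : (0:ℝ) < Real.log K := Real.log_pos (by exact_mod_cast lt_of_lt_of_le one_lt_two hK)
  have hL0 : 0 < Real.log K / Real.log (1/q) := div_pos hlK hlq
  have hC1 : 1 ≤ C := by
    rw [hC]
    nlinarith
  -- the pieces
  set Peq : Finset (List Bool) := P ∩ Q with hPeq
  set Pbel : Finset (List Bool) := P.filter (fun p => ∃ u ∈ Q, u <+: p ∧ u ≠ p) with hPbel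
  set Pabv : Finset (List Bool) := P.filter (fun p => ∃ u ∈ Q, p <+: u ∧ p ≠ u) with hPabv
  set Qanc : Finset (List Bool) := Q.filter (fun u => ∃ p ∈ P, u <+: p ∧ u ≠ p) with hQanc
  set Qbel : Finset (List Bool) := Q.filter (fun u => ∃ p ∈ P, p <+: u ∧ p ≠ u) with hQbel
  set M : List Bool → Finset (List Bool) :=
    fun u => P.filter (fun p => u <+: p ∧ u ≠ p) with hM
  set N : List Bool → Finset (List Bool) :=
    fun p => Q.filter (fun v => p <+: v ∧ p ≠ v) with hN
  -- no Q-node weakly above an element of Pabv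
  have habv_noabove : ∀ p ∈ Pabv, ∀ u ∈ Q, ¬ u <+: p := by
    intro p hp u huQ hupre
    obtain ⟨hpP, u2, hu2Q, hpu2, hpne2⟩ := Finset.mem_filter.mp hp
    have : u = u2 := hACQ u huQ u2 hu2Q (hupre.trans hpu2)
    subst this
    exact hpne2 (prefix_antisymm hpu2 hupre)
  -- partition of P
  have hPsplit : ∀ p ∈ P, p ∈ Peq ∨ p ∈ Pbel ∨ p ∈ Pabv := by
    intro p hp
    obtain ⟨u, huQ, hcomp⟩ := pruning_comparable hQ (hP.1 p hp)
    by_cases hup : u = p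
    · exact Or.inl (Finset.mem_inter.mpr ⟨hp, hup ▸ huQ⟩)
    rcases hcomp with h | h
    · exact Or.inr (Or.inl (Finset.mem_filter.mpr ⟨hp, u, huQ, h, hup⟩))
    · exact Or.inr (Or.inr (Finset.mem_filter.mpr ⟨hp, u, huQ, h, fun h' => hup h'.symm⟩))
  have hd12 : Disjoint Peq Pbel := by
    rw [Finset.disjoint_left]
    intro p hpe hpb
    obtain ⟨_, u, huQ, hupre, hune⟩ := Finset.mem_filter.mp hpb
    exact hune (hACQ u huQ p (Finset.mem_inter.mp hpe).2 hupre)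
  have hd13 : Disjoint Peq Pabv := by
    rw [Finset.disjoint_left]
    intro p hpe hpb
    exact habv_noabove p hpb p (Finset.mem_inter.mp hpe).2 (List.prefix_refl p)
  have hd23 : Disjoint Pbel Pabv := by
    rw [Finset.disjoint_left]
    intro p hpb hpa
    obtain ⟨_, u, huQ, hupre, hune⟩ := Finset.mem_filter.mp hpb
    exact habv_noabove p hpa u huQ hupre
  have hPunion : P = Peq ∪ (Pbel ∪ Pabv) := by
    apply Finset.Subset.antisymm
    · intro p hp
      rcases hPsplit p hp with h | h | h
      · exact Finset.mem_union.mpr (Or.inl h)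
      · exact Finset.mem_union.mpr (Or.inr (Finset.mem_union.mpr (Or.inl h)))
      · exact Finset.mem_union.mpr (Or.inr (Finset.mem_union.mpr (Or.inr h)))
    · intro p hp
      rcases Finset.mem_union.mp hp with h | h
      · exact (Finset.mem_inter.mp h).1
      · rcases Finset.mem_union.mp h with h | h
        · exact (Finset.mem_filter.mp h).1
        · exact (Finset.mem_filter.mp h).1
  have hPsum : ∀ f : List Bool → ℝ,
      ∑ p ∈ P, f p = ∑ p ∈ Peq, f p + (∑ p ∈ Pbel, f p + ∑ p ∈ Pabv, f p) := by
    intro f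
    conv_lhs => rw [hPunion]
    rw [Finset.sum_union (by
      rw [Finset.disjoint_union_right]; exact ⟨hd12, hd13⟩), Finset.sum_union hd23]
  have hPcard3 : P.card = Peq.card + (Pbel.card + Pabv.card) := by
    rw [hPunion, Finset.card_union_of_disjoint (by
      rw [Finset.disjoint_union_right]; exact ⟨hd12, hd13⟩), Finset.card_union_of_disjoint hd23]
  -- partition of Q
  set Qeq : Finset (List Bool) := Q ∩ P with hQeq
  have hPeqQeq : Peq = Qeq := Finset.inter_comm P Q
  have hQsplit : ∀ u ∈ Q, u ∈ Qeq ∨ u ∈ Qanc ∨ u ∈ Qbel := by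
    intro u hu
    obtain ⟨p, hpP, hcomp⟩ := pruning_comparable hP (hQ.1 u hu)
    by_cases hup : p = u
    · exact Or.inl (Finset.mem_inter.mpr ⟨hu, hup ▸ hpP⟩)
    rcases hcomp with h | h
    · exact Or.inr (Or.inr (Finset.mem_filter.mpr ⟨hu, p, hpP, h, hup⟩))
    · exact Or.inr (Or.inl (Finset.mem_filter.mpr ⟨hu, p, hpP, h, fun h' => hup h'.symm⟩))
  have hqd12 : Disjoint Qeq Qanc := by
    rw [Finset.disjoint_left]
    intro u hue hub
    obtain ⟨_, p, hpP, hpre, hne⟩ := Finset.mem_filter.mp hub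
    exact hne (hACP u (Finset.mem_inter.mp hue).2 p hpP hpre)
  have hqd13 : Disjoint Qeq Qbel := by
    rw [Finset.disjoint_left]
    intro u hue hub
    obtain ⟨_, p, hpP, hpre, hne⟩ := Finset.mem_filter.mp hub
    exact hne (hACP p hpP u (Finset.mem_inter.mp hue).2 hpre)
  have hqd23 : Disjoint Qanc Qbel := by
    rw [Finset.disjoint_left]
    intro u hua hub
    obtain ⟨_, p1, hp1P, hpre1, hne1⟩ := Finset.mem_filter.mp hua
    obtain ⟨_, p2, hp2P, hpre2, hne2⟩ := Finset.mem_filter.mp hub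
    have : p2 = p1 := hACP p2 hp2P p1 hp1P (hpre2.trans hpre1)
    subst this
    exact hne2 (prefix_antisymm hpre2 hpre1)
  have hQunion : Q = Qeq ∪ (Qanc ∪ Qbel) := by
    apply Finset.Subset.antisymm
    · intro u hu
      rcases hQsplit u hu with h | h | h
      · exact Finset.mem_union.mpr (Or.inl h)
      · exact Finset.mem_union.mpr (Or.inr (Finset.mem_union.mpr (Or.inl h)))
      · exact Finset.mem_union.mpr (Or.inr (Finset.mem_union.mpr (Or.inr h)))
    · intro u hu
      rcases Finset.mem_union.mp hu with h | h
      · exact (Finset.mem_inter.mp h).1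
      · rcases Finset.mem_union.mp h with h | h
        · exact (Finset.mem_filter.mp h).1
        · exact (Finset.mem_filter.mp h).1
  have hQsum : ∀ f : List Bool → ℝ,
      ∑ u ∈ Q, f u = ∑ u ∈ Qeq, f u + (∑ u ∈ Qanc, f u + ∑ u ∈ Qbel, f u) := by
    intro f
    conv_lhs => rw [hQunion]
    rw [Finset.sum_union (by
      rw [Finset.disjoint_union_right]; exact ⟨hqd12, hqd13⟩), Finset.sum_union hqd23]
  have hQcard3 : Q.card = Qeq.card + (Qanc.card + Qbel.card) := by
    rw [hQunion, Finset.card_union_of_disjoint (by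
      rw [Finset.disjoint_union_right]; exact ⟨hqd12, hqd13⟩), Finset.card_union_of_disjoint hqd23]
  -- Pbel as a disjoint union of the fibers M u
  have hMdisj : (↑Qanc : Set (List Bool)).PairwiseDisjoint M := by
    intro u1 hu1 u2 hu2 hne
    rw [Function.onFun, Finset.disjoint_left]
    intro p hp1 hp2
    obtain ⟨hpP, hpre1, _⟩ := Finset.mem_filter.mp hp1
    obtain ⟨_, hpre2, _⟩ := Finset.mem_filter.mp hp2
    have hu1Q := (Finset.mem_filter.mp hu1).1
    have hu2Q := (Finset.mem_filter.mp hu2).1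
    rcases List.prefix_or_prefix_of_prefix hpre1 hpre2 with h | h
    · exact hne (hACQ u1 hu1Q u2 hu2Q h)
    · exact hne (hACQ u2 hu2Q u1 hu1Q h).symm
  have hPbel_eq : Pbel = Qanc.biUnion M := by
    apply Finset.Subset.antisymm
    · intro p hp
      obtain ⟨hpP, u, huQ, hpre, hne⟩ := Finset.mem_filter.mp hp
      refine Finset.mem_biUnion.mpr ⟨u, Finset.mem_filter.mpr ⟨huQ, p, hpP, hpre, hne⟩, ?_⟩
      exact Finset.mem_filter.mpr ⟨hpP, hpre, hne⟩
    · intro p hp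
      obtain ⟨u, hu, hpMu⟩ := Finset.mem_biUnion.mp hp
      obtain ⟨hpP, hpre, hne⟩ := Finset.mem_filter.mp hpMu
      exact Finset.mem_filter.mpr ⟨hpP, u, (Finset.mem_filter.mp hu).1, hpre, hne⟩
  have hPbel_sum : ∀ f : List Bool → ℝ,
      ∑ p ∈ Pbel, f p = ∑ u ∈ Qanc, ∑ p ∈ M u, f p := by
    intro f
    rw [hPbel_eq]
    exact Finset.sum_biUnion hMdisj
  have hPbel_card : Pbel.card = ∑ u ∈ Qanc, (M u).card := by
    rw [hPbel_eq]
    exact Finset.card_biUnion hMdisj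
  -- each p in Pabv has at least two elements of Q strictly below it
  have hN2 : ∀ p ∈ Pabv, 2 ≤ (N p).card := by
    intro p hp
    have hpP : p ∈ P := (Finset.mem_filter.mp hp).1
    have hpnp : t.IsNodePath p := hP.1 p hpP
    obtain ⟨s, hs⟩ : ∃ s, t.subtreeAt p = some s := Option.isSome_iff_exists.mp hpnp
    cases s with
    | leaf w =>
      obtain ⟨u, ⟨huQ, hupre⟩, _⟩ := hQ.2 p ⟨w, hs⟩
      exact absurd hupre (habv_noabove p hp u huQ)
    | node l r =>
      have hvb : ∀ b : Bool, ∃ v ∈ Q, p ++ [b] <+: v := by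
        intro b
        have hnb : t.IsNodePath (p ++ [b]) := by
          rw [IsNodePath, subtreeAt_append, hs]
          cases b <;> simp [HTree.subtreeAt]
        obtain ⟨rb, hrb⟩ := leafBelow hnb
        obtain ⟨v, ⟨hvQ, hvpre⟩, _⟩ := hQ.2 _ hrb
        refine ⟨v, hvQ, ?_⟩
        rcases List.prefix_or_prefix_of_prefix hvpre ((p ++ [b]).prefix_append rb) with h | h
        · -- v <+: p ++ [b]
          rcases le_or_gt v.length p.length with hlen | hlen
          · exact absurd (List.prefix_of_prefix_length_le h (p.prefix_append [b]) hlen)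
              (habv_noabove p hp v hvQ)
          · have : v = p ++ [b] := by
              apply h.eq_of_length
              have := h.length_le
              simp only [List.length_append, List.length_singleton] at this ⊢
              omega
            rw [this]
        · exact h
      obtain ⟨vf, hvfQ, hvf⟩ := hvb false
      obtain ⟨vt, hvtQ, hvt⟩ := hvb true
      have hlenf : p.length < vf.length := by
        have := hvf.length_le; simp only [List.length_append, List.length_singleton] at this; omega
      have hlent : p.length < vt.length := by
        have := hvt.length_le; simp only [List.length_append, List.length_singleton] at this; omega
      have hvfN : vf ∈ N p := Finset.mem_filter.mpr ⟨hvfQ, (p.prefix_append [false]).trans hvf,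
        fun h => by rw [← h] at hlenf; omega⟩
      have hvtN : vt ∈ N p := Finset.mem_filter.mpr ⟨hvtQ, (p.prefix_append [true]).trans hvt,
        fun h => by rw [← h] at hlent; omega⟩
      have hne : vf ≠ vt := by
        rintro rfl
        rcases List.prefix_or_prefix_of_prefix hvf hvt with h | h
        · have := List.append_cancel_left (h.eq_of_length (by simp))
          simp at this
        · have := List.append_cancel_left (h.eq_of_length (by simp))
          simp at this
      calc 2 = ({vf, vt} : Finset (List Bool)).card := by
            rw [Finset.card_insert_of_notMem (by simpa using hne), Finset.card_singleton]
        _ ≤ (N p).card := Finset.card_le_card (by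
            intro v hv
            rcases Finset.mem_insert.mp hv with rfl | hv
            · exact hvfN
            · rw [Finset.mem_singleton.mp hv]; exact hvtN)
  have hNdisj : (↑Pabv : Set (List Bool)).PairwiseDisjoint N := by
    intro p1 hp1 p2 hp2 hne
    rw [Function.onFun, Finset.disjoint_left]
    intro v hv1 hv2
    obtain ⟨hvQ, hpre1, _⟩ := Finset.mem_filter.mp hv1
    obtain ⟨_, hpre2, _⟩ := Finset.mem_filter.mp hv2
    have hp1P := (Finset.mem_filter.mp (hp1 : p1 ∈ Pabv)).1
    have hp2P := (Finset.mem_filter.mp (hp2 : p2 ∈ Pabv)).1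
    rcases List.prefix_or_prefix_of_prefix hpre1 hpre2 with h | h
    · exact hne (hACP p1 hp1P p2 hp2P h)
    · exact hne (hACP p2 hp2P p1 hp1P h).symm
  have hNsub : Pabv.biUnion N ⊆ Qbel := by
    intro v hv
    obtain ⟨p, hp, hvN⟩ := Finset.mem_biUnion.mp hv
    obtain ⟨hvQ, hpre, hne⟩ := Finset.mem_filter.mp hvN
    exact Finset.mem_filter.mpr ⟨hvQ, p, (Finset.mem_filter.mp hp).1, hpre, hne⟩
  have h2f : 2 * Pabv.card ≤ Qbel.card := by
    calc 2 * Pabv.card = ∑ _p ∈ Pabv, 2 := by rw [Finset.sum_const, smul_eq_mul, mul_comm]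
      _ ≤ ∑ p ∈ Pabv, (N p).card := Finset.sum_le_sum hN2
      _ = (Pabv.biUnion N).card := (Finset.card_biUnion hNdisj).symm
      _ ≤ Qbel.card := Finset.card_le_card hNsub
  -- the counting inequality
  have hcount : (Pabv.card : ℝ) ≤ ∑ u ∈ Qanc, (((M u).card : ℝ) - 1) := by
    have h1 : ∑ u ∈ Qanc, (((M u).card : ℝ) - 1) = (Pbel.card : ℝ) - Qanc.card := by
      rw [Finset.sum_sub_distrib, Finset.sum_const, nsmul_eq_mul, mul_one, hPbel_card,
        Nat.cast_sum]
    rw [h1]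
    have e1 : (P.card : ℝ) = Peq.card + (Pbel.card + Pabv.card) := by exact_mod_cast hPcard3
    have e2 : (Q.card : ℝ) = Qeq.card + (Qanc.card + Qbel.card) := by exact_mod_cast hQcard3
    have e3 : (2 : ℝ) * Pabv.card ≤ Qbel.card := by exact_mod_cast h2f
    have e4 : (P.card : ℝ) = (Q.card : ℝ) := by rw [hPcard, hQcard]
    have e5 : (Peq.card : ℝ) = Qeq.card := by rw [hPeqQeq]
    linarith
  -- the per-ancestor bound from `core`
  have hACsub : ∀ A ⊆ P, AC A := fun A hA v hv w hw hvw => hACP v (hA hv) w (hA hw) hvw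
  have hcore_u : ∀ u ∈ Qanc,
      (∑ p ∈ M u, t.discAt p) + β * d * (((M u).card : ℝ) - 1) ≤ C * t.discAt u := by
    intro u hu
    rw [hC]
    apply core t q hq0 hq1 hsq K hK β d hβ hd u (hQ.1 u (Finset.mem_filter.mp hu).1)
    · exact fun p hp => hP.1 p (Finset.mem_filter.mp hp).1
    · exact fun p hp => (Finset.mem_filter.mp hp).2
    · exact hACsub _ (Finset.filter_subset _ _)
    · rw [← hPcard]; exact Finset.card_filter_le _ _
    · rintro v ⟨p, hpMu, hpre, hne⟩
      have hpP : p ∈ P := (Finset.mem_filter.mp hpMu).1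
      exact hanc v (isNodePath_prefix (hP.1 p hpP) hpre) ⟨p, hpP, hpre, hne⟩
  -- final chain
  have hDnn : ∀ A : Finset (List Bool), 0 ≤ ∑ v ∈ A, t.discAt v :=
    fun A => Finset.sum_nonneg (fun v _ => discAt_nonneg t v)
  have hbd0 : 0 ≤ β * d := mul_nonneg hβ0.le hd
  have step1 : ∑ p ∈ Pabv, t.discAt p ≤ (Pabv.card : ℝ) * (β * d) := by
    calc ∑ p ∈ Pabv, t.discAt p ≤ ∑ _p ∈ Pabv, β * d :=
          Finset.sum_le_sum (fun p hp => hPd p (Finset.mem_filter.mp hp).1)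
      _ = (Pabv.card : ℝ) * (β * d) := by rw [Finset.sum_const, nsmul_eq_mul]
  have step2 : ∑ p ∈ Pbel, t.discAt p + ∑ p ∈ Pabv, t.discAt p ≤ C * ∑ u ∈ Qanc, t.discAt u := by
    calc ∑ p ∈ Pbel, t.discAt p + ∑ p ∈ Pabv, t.discAt p
        ≤ (∑ u ∈ Qanc, ∑ p ∈ M u, t.discAt p) + (∑ u ∈ Qanc, (((M u).card : ℝ) - 1)) * (β * d) := by
          rw [hPbel_sum]
          have := mul_le_mul_of_nonneg_right hcount hbd0
          linarith [step1]
      _ = ∑ u ∈ Qanc, ((∑ p ∈ M u, t.discAt p) + β * d * (((M u).card : ℝ) - 1)) := by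
          rw [Finset.sum_add_distrib, Finset.sum_mul]
          congr 1
          apply Finset.sum_congr rfl
          intro u _
          ring
      _ ≤ ∑ u ∈ Qanc, C * t.discAt u := Finset.sum_le_sum hcore_u
      _ = C * ∑ u ∈ Qanc, t.discAt u := by rw [Finset.mul_sum]
  have step3 : ∑ p ∈ Peq, t.discAt p ≤ C * ∑ u ∈ Qeq, t.discAt u := by
    rw [← hPeqQeq]
    nlinarith [hDnn Peq, hC1]
  calc t.discP P = ∑ p ∈ Peq, t.discAt p + (∑ p ∈ Pbel, t.discAt p + ∑ p ∈ Pabv, t.discAt p) :=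
        hPsum _
    _ ≤ C * ∑ u ∈ Qeq, t.discAt u + C * ∑ u ∈ Qanc, t.discAt u := by linarith [step2, step3]
    _ ≤ C * ∑ u ∈ Qeq, t.discAt u + (C * ∑ u ∈ Qanc, t.discAt u + C * ∑ u ∈ Qbel, t.discAt u) := by
        nlinarith [hDnn Qbel, hC1]
    _ = C * t.discP Q := by rw [discP, hQsum (t.discAt ·)]; ring
end

section
/- Let P and Q be prunings of a hierarchical tree with |P| = |Q|. Let P_a be the set of nodes of P that are strict ancestors of some node of Q, let P_d be the set of nodes of P that are strict descendants of some node of Q, let Q_a be the set of nodes of Q that are strict ancestors of some node of P, and let Q_d be the set of nodes of Q that are strict descendants of some node of P. If any one of the four sets P_a, P_d, Q_a, Q_d is empty, then all four are empty and P = Q. -/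
namespace HTree

lemma subtreeAt_append (t : HTree) (p q : List Bool) :
    t.subtreeAt (p ++ q) = (t.subtreeAt p).bind (·.subtreeAt q) := by
  induction p generalizing t with
  | nil => simp [subtreeAt]
  | cons b p ih =>
    cases t with
    | leaf w => simp [subtreeAt]
    | node l r => simp [subtreeAt, ih]

lemma exists_leaf (s : HTree) : ∃ q w, s.subtreeAt q = some (leaf w) := by
  induction s with
  | leaf w => exact ⟨[], w, rfl⟩
  | node l r ihl ihr =>
    obtain ⟨q, w, h⟩ := ihl
    exact ⟨false :: q, w, by simpa [subtreeAt] using h⟩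

lemma exists_leafPath_ext {t : HTree} {p : List Bool} (h : t.IsNodePath p) :
    ∃ q, p <+: q ∧ t.IsLeafPath q := by
  rw [IsNodePath, Option.isSome_iff_exists] at h
  obtain ⟨s, hs⟩ := h
  obtain ⟨q, w, hq⟩ := exists_leaf s
  exact ⟨p ++ q, ⟨q, rfl⟩, w, by rw [subtreeAt_append, hs]; exact hq⟩

lemma antichain {t : HTree} {Q : Finset (List Bool)} (hQ : t.IsPruning Q)
    {u₁ u₂ : List Bool} (h1 : u₁ ∈ Q) (h2 : u₂ ∈ Q) (h12 : u₁ <+: u₂) : u₁ = u₂ := by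
  obtain ⟨q, hpre, hleaf⟩ := exists_leafPath_ext (hQ.1 u₂ h2)
  obtain ⟨u, hu, huniq⟩ := hQ.2 q hleaf
  rw [huniq u₁ ⟨h1, h12.trans hpre⟩, huniq u₂ ⟨h2, hpre⟩]

/-- Main lemma: if no element of `P` is a strict ancestor of an element of `Q`,
then `P = Q`. -/
lemma pruning_eq {t : HTree} {P Q : Finset (List Bool)} (hP : t.IsPruning P)
    (hQ : t.IsPruning Q) (hcard : P.card = Q.card)
    (hno : ∀ v ∈ P, ∀ u ∈ Q, v <+: u → v = u) : P = Q := by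
  classical
  -- the fiber of `u ∈ Q`: elements of `P` weakly below `u`
  set S : List Bool → Finset (List Bool) := fun u => P.filter (fun v => u <+: v) with hS
  -- every element of `P` lies in some fiber
  have hcover : P = Q.biUnion S := by
    ext v
    simp only [Finset.mem_biUnion, hS, Finset.mem_filter]
    constructor
    · intro hv
      obtain ⟨q, hpre, hleaf⟩ := exists_leafPath_ext (hP.1 v hv)
      obtain ⟨u, ⟨huQ, huq⟩, -⟩ := hQ.2 q hleaf
      rcases List.prefix_or_prefix_of_prefix hpre huq with hvu | huv
      · exact ⟨u, huQ, hv, (hno v hv u huQ hvu) ▸ List.prefix_refl v⟩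
      · exact ⟨u, huQ, hv, huv⟩
    · rintro ⟨u, -, hv, -⟩; exact hv
  -- fibers are pairwise disjoint
  have hdisj : ∀ u₁ ∈ Q, ∀ u₂ ∈ Q, u₁ ≠ u₂ → Disjoint (S u₁) (S u₂) := by
    intro u₁ h1 u₂ h2 hne
    rw [Finset.disjoint_left]
    intro v hv1 hv2
    simp only [hS, Finset.mem_filter] at hv1 hv2
    rcases List.prefix_or_prefix_of_prefix hv1.2 hv2.2 with h | h
    · exact hne (antichain hQ h1 h2 h)
    · exact hne (antichain hQ h2 h1 h).symm
  -- each fiber is nonempty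
  have hne : ∀ u ∈ Q, (S u).Nonempty := by
    intro u hu
    obtain ⟨q, hpre, hleaf⟩ := exists_leafPath_ext (hQ.1 u hu)
    obtain ⟨v, ⟨hvP, hvq⟩, -⟩ := hP.2 q hleaf
    rcases List.prefix_or_prefix_of_prefix hvq hpre with hvu | huv
    · exact ⟨u, by simp [hS, Finset.mem_filter, (hno v hvP u hu hvu) ▸ hvP]⟩
    · exact ⟨v, by simp [hS, Finset.mem_filter, hvP, huv]⟩
  -- counting: each fiber has exactly one element
  have hsum : ∑ u ∈ Q, (S u).card = ∑ u ∈ Q, 1 := by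
    rw [← Finset.card_biUnion hdisj, ← hcover, hcard, Finset.sum_const, smul_eq_mul, mul_one]
  have hone : ∀ u ∈ Q, (S u).card = 1 := by
    intro u hu
    by_contra hc
    have h1le : ∀ x ∈ Q, 1 ≤ (S x).card := fun x hx => Finset.card_pos.mpr (hne x hx)
    have : ∑ u ∈ Q, 1 < ∑ u ∈ Q, (S u).card :=
      Finset.sum_lt_sum (fun x hx => h1le x hx)
        ⟨u, hu, lt_of_le_of_ne (h1le u hu) (Ne.symm hc)⟩
    omega
  -- each fiber is `{u}` itself, hence `Q ⊆ P`
  have hQP : Q ⊆ P := by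
    intro u hu
    obtain ⟨v, hv⟩ := Finset.card_eq_one.mp (hone u hu)
    have hvmem : v ∈ S u := hv ▸ Finset.mem_singleton_self v
    simp only [hS, Finset.mem_filter] at hvmem
    obtain ⟨hvP, huv⟩ := hvmem
    by_cases heq : u = v
    · exact heq ▸ hvP
    · exfalso
      -- v = u ++ b :: rest for some b, rest
      obtain ⟨tail, rfl⟩ := huv
      cases tail with
      | nil => exact heq (by simp)
      | cons b rest =>
        -- the sibling node `u ++ [!b]` exists
        have hnode : t.IsNodePath (u ++ b :: rest) := hP.1 _ hvP
        rw [IsNodePath, subtreeAt_append] at hnode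
        obtain ⟨s, hs⟩ : ∃ s, t.subtreeAt u = some s := by
          cases hts : t.subtreeAt u with
          | none => rw [hts] at hnode; simp at hnode
          | some s => exact ⟨s, rfl⟩
        rw [hs, Option.bind_some] at hnode
        cases s with
        | leaf w => simp [subtreeAt] at hnode
        | node l r =>
          have hsib : t.IsNodePath (u ++ [!b]) := by
            rw [IsNodePath, subtreeAt_append, hs, Option.bind_some]
            cases b <;> simp [subtreeAt]
          obtain ⟨q, hpre, hleaf⟩ := exists_leafPath_ext hsib
          obtain ⟨p, ⟨hpP, hpq⟩, -⟩ := hP.2 q hleaf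
          have huq : u <+: q := (List.prefix_append u [!b]).trans hpre
          -- v is not a prefix of q
          have hvq : ¬ (u ++ b :: rest <+: q) := by
            intro hvq
            obtain ⟨t1, rfl⟩ := hpre
            obtain ⟨t2, ht2⟩ := hvq
            rw [List.append_assoc, List.append_assoc] at ht2
            have := List.append_cancel_left ht2
            simp at this
          -- p is in the fiber S u
          have hpSu : p ∈ S u := by
            rcases List.prefix_or_prefix_of_prefix hpq huq with hpu | hup
            · have : p = u := hno p hpP u hu hpu
              subst this
              simp [hS, Finset.mem_filter, hpP]
            · simp [hS, Finset.mem_filter, hpP, hup]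
          have hpv : p = u ++ b :: rest := by
            have := hv ▸ hpSu
            simpa using this
          exact hvq (hpv ▸ hpq)
  exact (Finset.eq_of_subset_of_card_le hQP (hcard ▸ le_refl _)).symm

end HTree

/-- Claim 1 inside the proof of Lemma 5.3: for prunings `P`, `Q` of the same size, if any of
the four sets `P_a` (nodes of `P` strictly above some node of `Q`), `P_d` (nodes of `P`
strictly below some node of `Q`), `Q_a`, `Q_d` is empty, then all four are empty and
`P = Q`. -/
theorem stmt8 (t : HTree) (P Q : Finset (List Bool))
    (hP : t.IsPruning P) (hQ : t.IsPruning Q) (hcard : P.card = Q.card)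
    (Pa Pd Qa Qd : Finset (List Bool))
    (hPa : ∀ v, v ∈ Pa ↔ v ∈ P ∧ ∃ u ∈ Q, v <+: u ∧ v ≠ u)
    (hPd : ∀ v, v ∈ Pd ↔ v ∈ P ∧ ∃ u ∈ Q, u <+: v ∧ u ≠ v)
    (hQa : ∀ u, u ∈ Qa ↔ u ∈ Q ∧ ∃ v ∈ P, u <+: v ∧ u ≠ v)
    (hQd : ∀ u, u ∈ Qd ↔ u ∈ Q ∧ ∃ v ∈ P, v <+: u ∧ v ≠ u)
    (h : Pa = ∅ ∨ Pd = ∅ ∨ Qa = ∅ ∨ Qd = ∅) :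
    Pa = ∅ ∧ Pd = ∅ ∧ Qa = ∅ ∧ Qd = ∅ ∧ P = Q := by
  have hPQ : P = Q := by
    rcases h with h | h | h | h
    · -- Pa = ∅ : no v ∈ P strictly above u ∈ Q
      refine HTree.pruning_eq hP hQ hcard (fun v hv u hu hvu => ?_)
      by_contra hne
      have : v ∈ Pa := (hPa v).mpr ⟨hv, u, hu, hvu, hne⟩
      simp [h] at this
    · -- Pd = ∅ : no v ∈ P strictly below u ∈ Q
      refine (HTree.pruning_eq hQ hP hcard.symm (fun u hu v hv huv => ?_)).symm
      by_contra hne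
      have : v ∈ Pd := (hPd v).mpr ⟨hv, u, hu, huv, hne⟩
      simp [h] at this
    · -- Qa = ∅ : no u ∈ Q strictly above v ∈ P
      refine (HTree.pruning_eq hQ hP hcard.symm (fun u hu v hv huv => ?_)).symm
      by_contra hne
      have : u ∈ Qa := (hQa u).mpr ⟨hu, v, hv, huv, hne⟩
      simp [h] at this
    · -- Qd = ∅ : no u ∈ Q strictly below v ∈ P
      refine HTree.pruning_eq hP hQ hcard (fun v hv u hu hvu => ?_)
      by_contra hne
      have : u ∈ Qd := (hQd u).mpr ⟨hu, v, hv, hvu, hne⟩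
      simp [h] at this
  subst hPQ
  have hanti : ∀ v ∈ P, ∀ u ∈ P, v <+: u → v = u :=
    fun v hv u hu hvu => HTree.antichain hP hv hu hvu
  refine ⟨?_, ?_, ?_, ?_, rfl⟩ <;> rw [Finset.eq_empty_iff_forall_notMem] <;> intro x hx
  · obtain ⟨hx1, u, hu, hpre, hne⟩ := (hPa x).mp hx; exact hne (hanti x hx1 u hu hpre)
  · obtain ⟨hx1, u, hu, hpre, hne⟩ := (hPd x).mp hx; exact hne (hanti u hu x hx1 hpre)
  · obtain ⟨hx1, u, hu, hpre, hne⟩ := (hQa x).mp hx; exact hne (hanti x hx1 u hu hpre)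
  · obtain ⟨hx1, u, hu, hpre, hne⟩ := (hQd x).mp hx; exact hne (hanti u hu x hx1 hpre)
end

section
/- Let P and Q be prunings of a hierarchical tree with |P| = |Q|. Let P_a be the set of nodes of P that are strict ancestors of some node of Q, let P_d be the set of nodes of P that are strict descendants of some node of Q, and let Q_a be the set of nodes of Q that are strict ancestors of some node of P. Assume P_a, P_d and Q_a are nonempty. Let P'_d be the set of nodes of the tree both of whose children belong to P_d, and let n := |P'_d|. For each v ∈ P'_d, let l_v be the length of the path from the (unique) weak ancestor of v in Q_a down to v, and let L := ∑_{v∈P'_d} l_v. Then L ≥ |P_a| − n. -/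
namespace Stmt9Aux
open List

lemma diverge : ∀ (l₁ l₂ : List Bool), ¬ l₁ <+: l₂ → ¬ l₂ <+: l₁ →
    ∃ c b, c ++ [b] <+: l₁ ∧ c ++ [!b] <+: l₂
  | [], _, h1, _ => absurd (nil_prefix) h1
  | _ :: _, [], _, h2 => absurd (nil_prefix) h2
  | a :: l₁, a' :: l₂, h1, h2 => by
    by_cases haa : a = a'
    · subst haa
      obtain ⟨c, b, hb1, hb2⟩ := diverge l₁ l₂
        (fun h => h1 (by simpa [List.cons_prefix_cons] using h))
        (fun h => h2 (by simpa [List.cons_prefix_cons] using h))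
      exact ⟨a :: c, b, by simpa [List.cons_prefix_cons] using hb1,
        by simpa [List.cons_prefix_cons] using hb2⟩
    · refine ⟨[], a, by simp [List.cons_prefix_cons], ?_⟩
      have : a' = !a := by cases a <;> cases a' <;> simp_all
      simp [this, List.cons_prefix_cons]

lemma subtreeAt_append (t : HTree) (p q : List Bool) :
    t.subtreeAt (p ++ q) = (t.subtreeAt p).bind (fun s => s.subtreeAt q) := by
  induction p generalizing t with
  | nil => simp [HTree.subtreeAt]
  | cons b p ih =>
    cases t with
    | leaf w => simp [HTree.subtreeAt]
    | node l r =>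
      simp only [List.cons_append, HTree.subtreeAt]
      exact ih _

lemma isNodePath_of_prefix {t : HTree} {p q : List Bool} (h : p <+: q)
    (hq : t.IsNodePath q) : t.IsNodePath p := by
  obtain ⟨r, rfl⟩ := h
  unfold HTree.IsNodePath at *
  rw [subtreeAt_append] at hq
  cases hs : t.subtreeAt p with
  | none => rw [hs] at hq; simp at hq
  | some s => simp

lemma exists_leaf (t : HTree) : ∃ q w, t.subtreeAt q = some (HTree.leaf w) := by
  induction t with
  | leaf w => exact ⟨[], w, rfl⟩
  | node l r ihl ihr =>
    obtain ⟨q, w, h⟩ := ihl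
    exact ⟨false :: q, w, by simpa [HTree.subtreeAt] using h⟩

lemma exists_leafPath_ext {t : HTree} {p : List Bool} (h : t.IsNodePath p) :
    ∃ l, t.IsLeafPath l ∧ p <+: l := by
  unfold HTree.IsNodePath at h
  cases hs : t.subtreeAt p with
  | none => rw [hs] at h; simp at h
  | some s =>
    obtain ⟨q, w, hq⟩ := exists_leaf s
    exact ⟨p ++ q, ⟨w, by rw [subtreeAt_append, hs]; exact hq⟩, List.prefix_append _ _⟩

lemma sibling {t : HTree} {p : List Bool} {b : Bool} {m : List Bool}
    (h : t.IsNodePath (p ++ b :: m)) (b' : Bool) : t.IsNodePath (p ++ [b']) := by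
  unfold HTree.IsNodePath at *
  rw [subtreeAt_append] at h ⊢
  cases hs : t.subtreeAt p with
  | none => rw [hs] at h; simp at h
  | some s =>
    rw [hs] at h
    cases s with
    | leaf w => simp [HTree.subtreeAt] at h
    | node l r => cases b' <;> simp [HTree.subtreeAt]

open scoped Classical in
noncomputable def meets (S : Finset (List Bool)) : Finset (List Bool) :=
  (S.biUnion fun p => p.inits.toFinset).filter
    (fun c => (∃ p ∈ S, c ++ [false] <+: p) ∧ (∃ p ∈ S, c ++ [true] <+: p))

lemma mem_meets {S : Finset (List Bool)} {c : List Bool} :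
    c ∈ meets S ↔ (∃ p ∈ S, c ++ [false] <+: p) ∧ (∃ p ∈ S, c ++ [true] <+: p) := by
  unfold meets
  simp only [Finset.mem_filter, Finset.mem_biUnion, List.mem_toFinset, List.mem_inits]
  constructor
  · tauto
  · intro h
    refine ⟨?_, h⟩
    obtain ⟨⟨p, hp, hpre⟩, -⟩ := h
    exact ⟨p, hp, (List.prefix_append _ _).trans hpre⟩

lemma prefix_of_mem_meets {S : Finset (List Bool)} {u c : List Bool}
    (hS : ∀ p ∈ S, u <+: p) (hc : c ∈ meets S) : u <+: c := by
  obtain ⟨⟨pf, hpf, hf⟩, ⟨pt, hpt, ht⟩⟩ := mem_meets.mp hc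
  rcases List.prefix_or_prefix_of_prefix (hS pf hpf) hf with h | h
  · rcases le_or_gt u.length c.length with hl | hl
    · exact List.prefix_of_prefix_length_le h (List.prefix_append _ _) hl
    · exfalso
      have h1 : u = c ++ [false] := h.eq_of_length (by
        have := h.length_le; simp at this ⊢; omega)
      have h2 : u = c ++ [true] := by
        rcases List.prefix_or_prefix_of_prefix (hS pt hpt) ht with h' | h'
        · exact h'.eq_of_length (by rw [h1]; simp)
        · exact (h'.eq_of_length (by rw [h1]; simp)).symm
      rw [h1] at h2
      simpa using h2
  · exfalso
    have h2 : c ++ [true] <+: u := by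
      rcases List.prefix_or_prefix_of_prefix ht (hS pt hpt) with h' | h'
      · exact h'
      · have hlen : u.length = c.length + 1 := by
          have := h.length_le; have := h'.length_le; simp at *; omega
        have : u = c ++ [true] := h'.eq_of_length (by simp [hlen])
        exact this ▸ List.prefix_refl _
    have := (List.prefix_of_prefix_length_le h2 h (by simp)).eq_of_length (by simp)
    simp at this

lemma card_le_meets : ∀ n (S : Finset (List Bool)), S.card = n →
    (∀ p ∈ S, ∀ q ∈ S, p <+: q → p = q) → S.card ≤ (meets S).card + 1 := by
  intro n
  induction n using Nat.strong_induction_on with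
  | _ n ih =>
    intro S hcard hanti
    rcases le_or_gt S.card 1 with h1 | h1
    · omega
    obtain ⟨p, hp, q, hq, hpq⟩ := Finset.one_lt_card.mp h1
    have hBne : (meets S).Nonempty := by
      obtain ⟨c, b, hb1, hb2⟩ := diverge p q (fun h => hpq (hanti p hp q hq h))
        (fun h => hpq ((hanti q hq p hp h).symm))
      refine ⟨c, mem_meets.mpr ?_⟩
      cases b
      · exact ⟨⟨p, hp, hb1⟩, ⟨q, hq, by simpa using hb2⟩⟩
      · exact ⟨⟨q, hq, by simpa using hb2⟩, ⟨p, hp, hb1⟩⟩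
    obtain ⟨c, hc, hcmax⟩ := Finset.exists_max_image (meets S) List.length hBne
    obtain ⟨⟨p₀, hp₀, hp₀f⟩, -⟩ := mem_meets.mp hc
    have huniq : ∀ p' ∈ S, c ++ [false] <+: p' → p' = p₀ := by
      intro p' hp' hf
      by_contra hne
      obtain ⟨c', e, h₁, h₂⟩ := diverge p' p₀ (fun h => hne (hanti _ hp' _ hp₀ h))
        (fun h => hne ((hanti _ hp₀ _ hp' h).symm))
      have hc' : c' ∈ meets S := mem_meets.mpr (by
        cases e
        · exact ⟨⟨p', hp', h₁⟩, ⟨p₀, hp₀, by simpa using h₂⟩⟩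
        · exact ⟨⟨p₀, hp₀, by simpa using h₂⟩, ⟨p', hp', h₁⟩⟩)
      have hlen : c.length < c'.length := by
        rcases List.prefix_or_prefix_of_prefix hf h₁ with hcase | hcase
        · rcases Nat.lt_or_ge c.length c'.length with h | h
          · exact h
          · exfalso
            have heq : c ++ [false] = c' ++ [e] := hcase.eq_of_length (by
              have := hcase.length_le; simp at this ⊢; omega)
            obtain ⟨hce, he⟩ : c = c' ∧ [false] = [e] := List.append_inj' heq (by simp)
            -- then c' ++ [!e] = c ++ [true] <+: p₀ and c ++ [false] <+: p₀
            have he' : e = false := by simpa using he.symm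
            have h2' : c ++ [true] <+: p₀ := by
              rw [hce]; simpa [he'] using h₂
            have := List.prefix_or_prefix_of_prefix h2' hp₀f
            rcases this with h' | h'
            · have := h'.eq_of_length (by simp); simp at this
            · have := h'.eq_of_length (by simp); simp at this
        · exfalso
          have h1' : c' ++ [e] <+: p₀ := hcase.trans hp₀f
          rcases List.prefix_or_prefix_of_prefix h1' h₂ with h' | h'
          · have := h'.eq_of_length (by simp); simp at this
          · have := h'.eq_of_length (by simp); simp at this
      exact absurd (hcmax c' hc') (by omega)
    set S' := S.erase p₀ with hS'
    have hsub : meets S' ⊆ (meets S).erase c := by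
      intro x hx
      obtain ⟨⟨pf, hpf, hxf⟩, ⟨pt, hpt, hxt⟩⟩ := mem_meets.mp hx
      have hxS : x ∈ meets S := mem_meets.mpr
        ⟨⟨pf, Finset.mem_of_mem_erase hpf, hxf⟩, ⟨pt, Finset.mem_of_mem_erase hpt, hxt⟩⟩
      refine Finset.mem_erase.mpr ⟨?_, hxS⟩
      rintro rfl
      exact (Finset.mem_erase.mp hpf).1 (huniq pf (Finset.mem_of_mem_erase hpf) hxf)
    have hcard' : S'.card = n - 1 := by
      rw [hS', Finset.card_erase_of_mem hp₀]; omega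
    have hIH := ih (n - 1) (by omega) S' hcard'
      (fun a ha b hb => hanti a (Finset.mem_of_mem_erase ha) b (Finset.mem_of_mem_erase hb))
    have h2 : (meets S').card ≤ (meets S).card - 1 := by
      calc (meets S').card ≤ ((meets S).erase c).card := Finset.card_le_card hsub
        _ = (meets S).card - 1 := Finset.card_erase_of_mem hc
    have hBpos : 1 ≤ (meets S).card := Finset.card_pos.mpr hBne
    omega

end Stmt9Aux

/-- Claim 4 inside the proof of Lemma 5.3: with `P'_d` the set of nodes both of whose
children lie in `P_d`, `n := |P'_d|`, and `l_v` the length of the path from the unique weak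
ancestor of `v` in `Q_a` down to `v`, the total length `L := ∑_{v ∈ P'_d} l_v` satisfies
`L ≥ |P_a| − n`. -/
theorem stmt9 (t : HTree) (P Q : Finset (List Bool))
    (hP : t.IsPruning P) (hQ : t.IsPruning Q) (hcard : P.card = Q.card)
    (Pa Pd Qa P'd : Finset (List Bool))
    (hPa : ∀ v, v ∈ Pa ↔ v ∈ P ∧ ∃ u ∈ Q, v <+: u ∧ v ≠ u)
    (hPd : ∀ v, v ∈ Pd ↔ v ∈ P ∧ ∃ u ∈ Q, u <+: v ∧ u ≠ v)
    (hQa : ∀ u, u ∈ Qa ↔ u ∈ Q ∧ ∃ v ∈ P, u <+: v ∧ u ≠ v)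
    (hPa_ne : Pa.Nonempty) (hPd_ne : Pd.Nonempty) (hQa_ne : Qa.Nonempty)
    (hP'd : ∀ v, v ∈ P'd ↔ t.IsNodePath v ∧ v ++ [false] ∈ Pd ∧ v ++ [true] ∈ Pd)
    (anc : List Bool → List Bool)
    (hanc : ∀ v ∈ P'd, anc v ∈ Qa ∧ anc v <+: v) :
    (Pa.card : ℤ) - (P'd.card : ℤ) ≤ ∑ v ∈ P'd, ((v.length : ℤ) - ((anc v).length : ℤ)) := by
  classical
  -- strictness helper
  have hstrict : ∀ {a b : List Bool}, a <+: b → a ≠ b → a.length < b.length := by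
    intro a b h hne
    rcases lt_or_ge a.length b.length with h' | h'
    · exact h'
    · exact absurd (h.eq_of_length (le_antisymm h.length_le h')) hne
  -- antichain properties
  have hPanti : ∀ p ∈ P, ∀ p' ∈ P, p <+: p' → p = p' := by
    intro p hp p' hp' hpre
    obtain ⟨l, hl, hext⟩ := Stmt9Aux.exists_leafPath_ext (hP.1 p' hp')
    obtain ⟨a, -, hau⟩ := hP.2 l hl
    exact (hau p ⟨hp, hpre.trans hext⟩).trans (hau p' ⟨hp', hext⟩).symm
  have hQanti : ∀ p ∈ Q, ∀ p' ∈ Q, p <+: p' → p = p' := by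
    intro p hp p' hp' hpre
    obtain ⟨l, hl, hext⟩ := Stmt9Aux.exists_leafPath_ext (hQ.1 p' hp')
    obtain ⟨a, -, hau⟩ := hQ.2 l hl
    exact (hau p ⟨hp, hpre.trans hext⟩).trans (hau p' ⟨hp', hext⟩).symm
  have hPcompat : ∀ {p p' l : List Bool}, p ∈ P → p' ∈ P → p <+: l → p' <+: l → p = p' := by
    intro p p' l hp hp' h h'
    rcases List.prefix_or_prefix_of_prefix h h' with hc | hc
    · exact hPanti p hp p' hp' hc
    · exact (hPanti p' hp' p hp hc).symm
  have hQcompat : ∀ {p p' l : List Bool}, p ∈ Q → p' ∈ Q → p <+: l → p' <+: l → p = p' := by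
    intro p p' l hp hp' h h'
    rcases List.prefix_or_prefix_of_prefix h h' with hc | hc
    · exact hQanti p hp p' hp' hc
    · exact (hQanti p' hp' p hp hc).symm
  have hPa_sub : Pa ⊆ P := fun v hv => ((hPa v).mp hv).1
  have hPd_sub : Pd ⊆ P := fun v hv => ((hPd v).mp hv).1
  -- Qd
  set Qd : Finset (List Bool) := Q.filter (fun u => ∃ v ∈ P, v <+: u ∧ v ≠ u) with hQddef
  have hQdmem : ∀ u, u ∈ Qd ↔ u ∈ Q ∧ ∃ v ∈ P, v <+: u ∧ v ≠ u := by
    intro u; rw [hQddef]; simp [Finset.mem_filter]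
  -- comparable elements across prunings
  have hcompQ : ∀ p ∈ P, ∃ q ∈ Q, p <+: q ∨ q <+: p := by
    intro p hp
    obtain ⟨l, hl, hext⟩ := Stmt9Aux.exists_leafPath_ext (hP.1 p hp)
    obtain ⟨q, ⟨hq, hql⟩, -⟩ := hQ.2 l hl
    exact ⟨q, hq, List.prefix_or_prefix_of_prefix hext hql⟩
  have hcompP : ∀ q ∈ Q, ∃ p ∈ P, q <+: p ∨ p <+: q := by
    intro q hq
    obtain ⟨l, hl, hext⟩ := Stmt9Aux.exists_leafPath_ext (hQ.1 q hq)
    obtain ⟨p, ⟨hp, hpl⟩, -⟩ := hP.2 l hl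
    exact ⟨p, hp, List.prefix_or_prefix_of_prefix hext hpl⟩
  -- partition of P
  have hcardP : P.card = (P ∩ Q).card + Pa.card + Pd.card := by
    have hd1 : Disjoint (P ∩ Q) Pa := by
      rw [Finset.disjoint_left]
      intro p hp1 hp2
      obtain ⟨hpP, hpQ⟩ := Finset.mem_inter.mp hp1
      obtain ⟨-, q, hqQ, hpre, hne⟩ := (hPa p).mp hp2
      exact hne (hQanti p hpQ q hqQ hpre)
    have hd2 : Disjoint ((P ∩ Q) ∪ Pa) Pd := by
      rw [Finset.disjoint_left]
      intro p hp1 hp2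
      obtain ⟨-, q, hqQ, hqp, hqne⟩ := (hPd p).mp hp2
      rcases Finset.mem_union.mp hp1 with h | h
      · obtain ⟨hpP, hpQ⟩ := Finset.mem_inter.mp h
        exact hqne (hQanti q hqQ p hpQ hqp)
      · obtain ⟨-, q', hq'Q, hpre, hne⟩ := (hPa p).mp h
        have heqq : q = q' := hQanti q hqQ q' hq'Q (hqp.trans hpre)
        have h1 := hstrict hqp hqne
        have h2 := hpre.length_le
        rw [heqq] at h1; omega
    have hU : P = (P ∩ Q) ∪ Pa ∪ Pd := by
      apply Finset.Subset.antisymm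
      · intro p hp
        obtain ⟨q, hq, hc⟩ := hcompQ p hp
        simp only [Finset.mem_union, Finset.mem_inter]
        by_cases hpq : p = q
        · exact Or.inl (Or.inl ⟨hp, hpq ▸ hq⟩)
        · rcases hc with h | h
          · exact Or.inl (Or.inr ((hPa p).mpr ⟨hp, q, hq, h, hpq⟩))
          · exact Or.inr ((hPd p).mpr ⟨hp, q, hq, h, fun he => hpq he.symm⟩)
      · intro p hp
        rcases Finset.mem_union.mp hp with h | h
        · rcases Finset.mem_union.mp h with h' | h'
          · exact (Finset.mem_inter.mp h').1
          · exact hPa_sub h'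
        · exact hPd_sub h
    calc P.card = ((P ∩ Q) ∪ Pa ∪ Pd).card := by rw [← hU]
      _ = (P ∩ Q).card + Pa.card + Pd.card := by
        rw [Finset.card_union_of_disjoint hd2, Finset.card_union_of_disjoint hd1]
  -- partition of Q
  have hcardQ : Q.card = (Q ∩ P).card + Qa.card + Qd.card := by
    have hQa_sub : Qa ⊆ Q := fun v hv => ((hQa v).mp hv).1
    have hQd_sub : Qd ⊆ Q := fun v hv => ((hQdmem v).mp hv).1
    have hd1 : Disjoint (Q ∩ P) Qa := by
      rw [Finset.disjoint_left]
      intro p hp1 hp2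
      obtain ⟨hpQ, hpP⟩ := Finset.mem_inter.mp hp1
      obtain ⟨-, q, hqP, hpre, hne⟩ := (hQa p).mp hp2
      exact hne (hPanti p hpP q hqP hpre)
    have hd2 : Disjoint ((Q ∩ P) ∪ Qa) Qd := by
      rw [Finset.disjoint_left]
      intro p hp1 hp2
      obtain ⟨-, q, hqP, hqp, hqne⟩ := (hQdmem p).mp hp2
      rcases Finset.mem_union.mp hp1 with h | h
      · obtain ⟨hpQ, hpP⟩ := Finset.mem_inter.mp h
        exact hqne (hPanti q hqP p hpP hqp)
      · obtain ⟨-, q', hq'P, hpre, hne⟩ := (hQa p).mp h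
        have heqq : q = q' := hPanti q hqP q' hq'P (hqp.trans hpre)
        have h1 := hstrict hqp hqne
        have h2 := hpre.length_le
        rw [heqq] at h1; omega
    have hU : Q = (Q ∩ P) ∪ Qa ∪ Qd := by
      apply Finset.Subset.antisymm
      · intro p hp
        obtain ⟨q, hq, hc⟩ := hcompP p hp
        simp only [Finset.mem_union, Finset.mem_inter]
        by_cases hpq : p = q
        · exact Or.inl (Or.inl ⟨hp, hpq ▸ hq⟩)
        · rcases hc with h | h
          · exact Or.inl (Or.inr ((hQa p).mpr ⟨hp, q, hq, h, hpq⟩))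
          · exact Or.inr ((hQdmem p).mpr ⟨hp, q, hq, h, fun he => hpq he.symm⟩)
      · intro p hp
        rcases Finset.mem_union.mp hp with h | h
        · rcases Finset.mem_union.mp h with h' | h'
          · exact (Finset.mem_inter.mp h').1
          · exact hQa_sub h'
        · exact hQd_sub h
    calc Q.card = ((Q ∩ P) ∪ Qa ∪ Qd).card := by rw [← hU]
      _ = (Q ∩ P).card + Qa.card + Qd.card := by
        rw [Finset.card_union_of_disjoint hd2, Finset.card_union_of_disjoint hd1]
  have hbal : Pa.card + Pd.card = Qa.card + Qd.card := by
    have hic : (P ∩ Q).card = (Q ∩ P).card := by rw [Finset.inter_comm]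
    omega
  -- 2 * |Pa| ≤ |Qd|
  set fP : List Bool → List Bool :=
    fun q => if h : ∃ v ∈ P, v <+: q ∧ v ≠ q then h.choose else [] with hfPdef
  have hfP : ∀ q, (∃ v ∈ P, v <+: q ∧ v ≠ q) → fP q ∈ P ∧ fP q <+: q ∧ fP q ≠ q := by
    intro q h
    have he : fP q = h.choose := by rw [hfPdef]; exact dif_pos h
    rw [he]
    exact h.choose_spec
  have hfP_eq : ∀ q, ∀ v ∈ P, v <+: q → v ≠ q → fP q = v := by
    intro q v hv h1 h2
    obtain ⟨h3, h4, h5⟩ := hfP q ⟨v, hv, h1, h2⟩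
    exact hPcompat h3 hv h4 h1
  have hmapsQd : ∀ q ∈ Qd, fP q ∈ Pa := by
    intro q hq
    obtain ⟨hqQ, hex⟩ := (hQdmem q).mp hq
    obtain ⟨h1, h2, h3⟩ := hfP q hex
    exact (hPa (fP q)).mpr ⟨h1, q, hqQ, h2, h3⟩
  have hQdcard : Qd.card = ∑ u ∈ Pa, (Qd.filter (fun q => fP q = u)).card :=
    Finset.card_eq_sum_card_fiberwise hmapsQd
  have hfiber2 : ∀ u ∈ Pa, 2 ≤ (Qd.filter (fun q => fP q = u)).card := by
    intro u hu
    obtain ⟨huP, q, hqQ, huq, hne⟩ := (hPa u).mp hu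
    obtain ⟨r, hr⟩ := id huq
    rcases r with _ | ⟨b, m⟩
    · exact absurd (by simpa using hr) hne
    · have hq_node : t.IsNodePath (u ++ b :: m) := by rw [hr]; exact hQ.1 q hqQ
      have hsib : t.IsNodePath (u ++ [!b]) := Stmt9Aux.sibling hq_node (!b)
      obtain ⟨l, hl, hext⟩ := Stmt9Aux.exists_leafPath_ext hsib
      obtain ⟨q', ⟨hq'Q, hq'l⟩, -⟩ := hQ.2 l hl
      have hkey : u ++ [!b] <+: q' := by
        rcases List.prefix_or_prefix_of_prefix hext hq'l with h | h
        · exact h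
        · rcases le_or_gt q'.length u.length with hl' | hl'
          · exfalso
            have hq'u : q' <+: u := List.prefix_of_prefix_length_le h (List.prefix_append _ _) hl'
            have heq : q' = q := hQcompat hq'Q hqQ (hq'u.trans huq) (List.prefix_refl q)
            have h1 := hstrict huq hne
            rw [heq] at hl'; omega
          · have hh : q' = u ++ [!b] := h.eq_of_length (by
              have := h.length_le; simp at this ⊢; omega)
            exact hh ▸ List.prefix_refl _
      have huq' : u <+: q' := (List.prefix_append u [!b]).trans hkey
      have hneq' : u ≠ q' := by
        intro he
        have := hkey.length_le
        rw [← he] at this; simp at this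
      have hq'Qd : q' ∈ Qd := (hQdmem q').mpr ⟨hq'Q, u, huP, huq', hneq'⟩
      have hqQd : q ∈ Qd := (hQdmem q).mpr ⟨hqQ, u, huP, huq, hne⟩
      have hfq : fP q = u := hfP_eq q u huP huq hne
      have hfq' : fP q' = u := hfP_eq q' u huP huq' hneq'
      have hqb : u ++ [b] <+: q := ⟨m, by simpa using hr⟩
      have hqq' : q ≠ q' := by
        intro he
        have h1 : u ++ [b] <+: q' := he ▸ hqb
        have := (List.prefix_of_prefix_length_le h1 hkey (by simp)).eq_of_length (by simp)
        simp at this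
      have hlt : 1 < (Qd.filter (fun q2 => fP q2 = u)).card :=
        Finset.one_lt_card.mpr ⟨q, Finset.mem_filter.mpr ⟨hqQd, hfq⟩, q',
          Finset.mem_filter.mpr ⟨hq'Qd, hfq'⟩, hqq'⟩
      omega
  have h2Pa : 2 * Pa.card ≤ Qd.card := by
    rw [hQdcard]
    calc 2 * Pa.card = ∑ _u ∈ Pa, 2 := by rw [Finset.sum_const, smul_eq_mul, mul_comm]
      _ ≤ ∑ u ∈ Pa, (Qd.filter (fun q => fP q = u)).card := Finset.sum_le_sum hfiber2
  -- Pd fibered over Qa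
  set fQ : List Bool → List Bool :=
    fun q => if h : ∃ v ∈ Q, v <+: q ∧ v ≠ q then h.choose else [] with hfQdef
  have hfQ : ∀ q, (∃ v ∈ Q, v <+: q ∧ v ≠ q) → fQ q ∈ Q ∧ fQ q <+: q ∧ fQ q ≠ q := by
    intro q h
    have he : fQ q = h.choose := by rw [hfQdef]; exact dif_pos h
    rw [he]
    exact h.choose_spec
  have hfQ_eq : ∀ q, ∀ v ∈ Q, v <+: q → v ≠ q → fQ q = v := by
    intro q v hv h1 h2
    obtain ⟨h3, h4, h5⟩ := hfQ q ⟨v, hv, h1, h2⟩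
    exact hQcompat h3 hv h4 h1
  have hmapsPd : ∀ p ∈ Pd, fQ p ∈ Qa := by
    intro p hp
    obtain ⟨hpP, u, huQ, h1, h2⟩ := (hPd p).mp hp
    obtain ⟨h3, h4, h5⟩ := hfQ p ⟨u, huQ, h1, h2⟩
    exact (hQa (fQ p)).mpr ⟨h3, p, hpP, h4, h5⟩
  have hPdcard : Pd.card = ∑ u ∈ Qa, (Pd.filter (fun p => fQ p = u)).card :=
    Finset.card_eq_sum_card_fiberwise hmapsPd
  set S : List Bool → Finset (List Bool) :=
    fun u => P.filter (fun p => u <+: p ∧ u ≠ p) with hSdef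
  have hSmem : ∀ u p, p ∈ S u ↔ p ∈ P ∧ u <+: p ∧ u ≠ p := by
    intro u p; rw [hSdef]; simp [Finset.mem_filter]
  have hfib_eq : ∀ u ∈ Qa, Pd.filter (fun p => fQ p = u) = S u := by
    intro u hu
    have huQ : u ∈ Q := ((hQa u).mp hu).1
    ext p
    rw [Finset.mem_filter, hSmem]
    constructor
    · rintro ⟨hpPd, hfq⟩
      obtain ⟨hpP, u', hu'Q, h1, h2⟩ := (hPd p).mp hpPd
      obtain ⟨h3, h4, h5⟩ := hfQ p ⟨u', hu'Q, h1, h2⟩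
      exact ⟨hpP, hfq ▸ h4, hfq ▸ h5⟩
    · rintro ⟨hpP, hpre, hne⟩
      exact ⟨(hPd p).mpr ⟨hpP, u, huQ, hpre, hne⟩, hfQ_eq p u huQ hpre hne⟩
  -- the per-u core inequality
  have hcore : ∀ u ∈ Qa, ((S u).card : ℤ) - 1 ≤
      ∑ v ∈ P'd.filter (fun v => anc v = u), ((v.length : ℤ) - (u.length : ℤ) + 1) := by
    intro u hu
    have huQ : u ∈ Q := ((hQa u).mp hu).1
    have hSanti : ∀ p ∈ S u, ∀ q ∈ S u, p <+: q → p = q := by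
      intro p hp q hq h
      exact hPanti p ((hSmem u p).mp hp).1 q ((hSmem u q).mp hq).1 h
    have hA : (S u).card ≤ (Stmt9Aux.meets (S u)).card + 1 :=
      Stmt9Aux.card_le_meets (S u).card (S u) rfl hSanti
    have hUc : ∀ c ∈ Stmt9Aux.meets (S u), u <+: c := fun c hc =>
      Stmt9Aux.prefix_of_mem_meets (fun p hp => ((hSmem u p).mp hp).2.1) hc
    -- Claim B: below every meet there is a cherry
    have hcherry : ∀ c ∈ Stmt9Aux.meets (S u), ∃ v, v ∈ P'd ∧ anc v = u ∧ c <+: v := by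
      intro c hc
      set B' := (Stmt9Aux.meets (S u)).filter (fun c' => c <+: c') with hB'def
      have hB'ne : B'.Nonempty := ⟨c, Finset.mem_filter.mpr ⟨hc, List.prefix_refl c⟩⟩
      obtain ⟨c', hc'B', hmax⟩ := Finset.exists_max_image B' List.length hB'ne
      obtain ⟨hc'B, hcc'⟩ := Finset.mem_filter.mp hc'B'
      have huc' : u <+: c' := hUc c' hc'B
      obtain ⟨⟨pf, hpfS, hpff⟩, ⟨pt, hptS, hptt⟩⟩ := Stmt9Aux.mem_meets.mp hc'B
      have hwit : ∀ b : Bool, ∃ p ∈ S u, c' ++ [b] <+: p := by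
        intro b; cases b
        · exact ⟨pf, hpfS, hpff⟩
        · exact ⟨pt, hptS, hptt⟩
      have hchild : ∀ b : Bool, ∀ p ∈ S u, c' ++ [b] <+: p → p = c' ++ [b] := by
        intro b p hpS hpre
        by_contra hne
        obtain ⟨r, hr⟩ := hpre
        rcases r with _ | ⟨e, m⟩
        · exact hne (by simpa using hr.symm)
        · have hpP : p ∈ P := ((hSmem u p).mp hpS).1
          have hpnode : t.IsNodePath ((c' ++ [b]) ++ e :: m) := by
            rw [hr]; exact hP.1 p hpP
          have hsig : t.IsNodePath ((c' ++ [b]) ++ [!e]) := Stmt9Aux.sibling hpnode (!e)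
          obtain ⟨l, hl, hext⟩ := Stmt9Aux.exists_leafPath_ext hsig
          obtain ⟨p', ⟨hp'P, hp'l⟩, -⟩ := hP.2 l hl
          have hplen : p.length = c'.length + 2 + m.length := by
            rw [← hr]; simp [List.length_append]; omega
          have hsigp' : (c' ++ [b]) ++ [!e] <+: p' := by
            rcases List.prefix_or_prefix_of_prefix hp'l hext with h | h
            · rcases le_or_gt p'.length (c'.length + 1) with hl' | hl'
              · exfalso
                have hp'cb : p' <+: c' ++ [b] :=
                  List.prefix_of_prefix_length_le h (List.prefix_append _ _) (by simp; omega)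
                have hp'p : p' <+: p := hp'cb.trans ⟨e :: m, hr⟩
                have heq : p' = p := hPanti p' hp'P p hpP hp'p
                rw [heq] at hl'; omega
              · have hh : p' = (c' ++ [b]) ++ [!e] := h.eq_of_length (by
                  have := h.length_le; simp at this ⊢; omega)
                exact hh ▸ List.prefix_refl _
            · exact h
          have hp'ne : p' ≠ p := by
            intro he
            have h1 : (c' ++ [b]) ++ [e] <+: p := ⟨m, by simpa using hr⟩
            have h2 : (c' ++ [b]) ++ [!e] <+: p := he ▸ hsigp'
            have := (List.prefix_of_prefix_length_le h1 h2 (by simp)).eq_of_length (by simp)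
            simp at this
          have hp'S : p' ∈ S u := by
            rw [hSmem]
            refine ⟨hp'P, (huc'.trans (List.prefix_append _ _)).trans
              ((List.prefix_append _ _).trans hsigp'), ?_⟩
            intro he
            have h1 := hsigp'.length_le
            have h2 := huc'.length_le
            rw [← he] at h1
            simp at h1
            omega
          have hc'' : c' ++ [b] ∈ Stmt9Aux.meets (S u) := by
            rw [Stmt9Aux.mem_meets]
            have hp_ext : (c' ++ [b]) ++ [e] <+: p := ⟨m, by simpa using hr⟩
            cases e
            · exact ⟨⟨p, hpS, hp_ext⟩, ⟨p', hp'S, by simpa using hsigp'⟩⟩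
            · exact ⟨⟨p', hp'S, by simpa using hsigp'⟩, ⟨p, hpS, hp_ext⟩⟩
          have : (c' ++ [b]).length ≤ c'.length := hmax _ (Finset.mem_filter.mpr
            ⟨hc'', hcc'.trans (List.prefix_append _ _)⟩)
          simp at this
      have hboth : ∀ b : Bool, c' ++ [b] ∈ S u := by
        intro b
        obtain ⟨p, hpS, hpre⟩ := hwit b
        exact (hchild b p hpS hpre) ▸ hpS
      have hPdmem : ∀ b : Bool, c' ++ [b] ∈ Pd := by
        intro b
        obtain ⟨h1, h2, h3⟩ := (hSmem u _).mp (hboth b)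
        exact (hPd _).mpr ⟨h1, u, huQ, h2, h3⟩
      have hc'node : t.IsNodePath c' := Stmt9Aux.isNodePath_of_prefix
        (List.prefix_append c' [false]) (hP.1 _ ((hSmem u _).mp (hboth false)).1)
      have hc'P'd : c' ∈ P'd := (hP'd c').mpr ⟨hc'node, hPdmem false, hPdmem true⟩
      have hancc' : anc c' = u := by
        obtain ⟨h1, h2⟩ := hanc c' hc'P'd
        exact hQcompat ((hQa (anc c')).mp h1).1 huQ h2 huc'
      exact ⟨c', hc'P'd, hancc', hcc'⟩
    -- choose cherries
    set F : List Bool → List Bool :=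
      fun c => if h : ∃ v, v ∈ P'd ∧ anc v = u ∧ c <+: v then h.choose else [] with hFdef
    have hF : ∀ c ∈ Stmt9Aux.meets (S u),
        F c ∈ P'd ∧ anc (F c) = u ∧ c <+: F c := by
      intro c hc
      have h := hcherry c hc
      have he : F c = h.choose := by rw [hFdef]; exact dif_pos h
      rw [he]
      exact h.choose_spec
    have hmapsF : ∀ c ∈ Stmt9Aux.meets (S u), F c ∈ P'd.filter (fun v => anc v = u) := by
      intro c hc
      obtain ⟨h1, h2, h3⟩ := hF c hc
      exact Finset.mem_filter.mpr ⟨h1, h2⟩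
    have hfibw : (Stmt9Aux.meets (S u)).card = ∑ v ∈ P'd.filter (fun v => anc v = u),
        ((Stmt9Aux.meets (S u)).filter (fun c => F c = v)).card :=
      Finset.card_eq_sum_card_fiberwise hmapsF
    have hfib_le : ∀ v ∈ P'd.filter (fun v => anc v = u),
        (((Stmt9Aux.meets (S u)).filter (fun c => F c = v)).card : ℤ) ≤
          (v.length : ℤ) - (u.length : ℤ) + 1 := by
      intro v hv
      obtain ⟨hvP'd, hancv⟩ := Finset.mem_filter.mp hv
      have huv : u <+: v := hancv ▸ (hanc v hvP'd).2
      have hsub2 : (Stmt9Aux.meets (S u)).filter (fun c => F c = v) ⊆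
          (Finset.Icc u.length v.length).image (fun i => v.take i) := by
        intro c hc
        obtain ⟨hcB, hFc⟩ := Finset.mem_filter.mp hc
        have hcv : c <+: v := hFc ▸ (hF c hcB).2.2
        have huc : u <+: c := hUc c hcB
        rw [Finset.mem_image]
        exact ⟨c.length, Finset.mem_Icc.mpr ⟨huc.length_le, hcv.length_le⟩,
          (List.prefix_iff_eq_take.mp hcv).symm⟩
      have h1 : ((Stmt9Aux.meets (S u)).filter (fun c => F c = v)).card ≤
          v.length + 1 - u.length := by
        calc ((Stmt9Aux.meets (S u)).filter (fun c => F c = v)).card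
            ≤ ((Finset.Icc u.length v.length).image (fun i => v.take i)).card :=
              Finset.card_le_card hsub2
          _ ≤ (Finset.Icc u.length v.length).card := Finset.card_image_le
          _ = v.length + 1 - u.length := Nat.card_Icc _ _
      have h2 := huv.length_le
      omega
    calc ((S u).card : ℤ) - 1 ≤ ((Stmt9Aux.meets (S u)).card : ℤ) := by
          have := hA; omega
      _ = ∑ v ∈ P'd.filter (fun v => anc v = u),
            (((Stmt9Aux.meets (S u)).filter (fun c => F c = v)).card : ℤ) := by
          rw [hfibw]; push_cast; ring
      _ ≤ ∑ v ∈ P'd.filter (fun v => anc v = u), ((v.length : ℤ) - (u.length : ℤ) + 1) :=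
          Finset.sum_le_sum hfib_le
  -- assemble
  have hsumS : ∑ u ∈ Qa, ((S u).card : ℤ) = (Pd.card : ℤ) := by
    rw [hPdcard]
    push_cast
    exact (Finset.sum_congr rfl (fun u hu => by rw [hfib_eq u hu])).symm
  have hmain : (Pd.card : ℤ) - (Qa.card : ℤ) ≤
      ∑ u ∈ Qa, ∑ v ∈ P'd.filter (fun v => anc v = u),
        ((v.length : ℤ) - ((anc v).length : ℤ) + 1) := by
    have hstep : ∑ u ∈ Qa, ∑ v ∈ P'd.filter (fun v => anc v = u),
        ((v.length : ℤ) - (u.length : ℤ) + 1) =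
        ∑ u ∈ Qa, ∑ v ∈ P'd.filter (fun v => anc v = u),
        ((v.length : ℤ) - ((anc v).length : ℤ) + 1) := by
      refine Finset.sum_congr rfl (fun u hu => Finset.sum_congr rfl (fun v hv => ?_))
      rw [(Finset.mem_filter.mp hv).2]
    calc (Pd.card : ℤ) - (Qa.card : ℤ) = ∑ u ∈ Qa, (((S u).card : ℤ) - 1) := by
          rw [Finset.sum_sub_distrib, hsumS]
          simp
      _ ≤ ∑ u ∈ Qa, ∑ v ∈ P'd.filter (fun v => anc v = u),
            ((v.length : ℤ) - (u.length : ℤ) + 1) := Finset.sum_le_sum hcore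
      _ = _ := hstep
  have hdisj : (Qa : Set (List Bool)).PairwiseDisjoint
      (fun u => P'd.filter (fun v => anc v = u)) := by
    intro a _ b _ hab
    simp only [Function.onFun]
    rw [Finset.disjoint_left]
    intro v hv1 hv2
    exact hab (((Finset.mem_filter.mp hv1).2).symm.trans (Finset.mem_filter.mp hv2).2)
  have hbig : ∑ u ∈ Qa, ∑ v ∈ P'd.filter (fun v => anc v = u),
      ((v.length : ℤ) - ((anc v).length : ℤ) + 1) =
      ∑ v ∈ Qa.biUnion (fun u => P'd.filter (fun v => anc v = u)),
      ((v.length : ℤ) - ((anc v).length : ℤ) + 1) :=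
    (Finset.sum_biUnion hdisj).symm
  have hsubB : Qa.biUnion (fun u => P'd.filter (fun v => anc v = u)) ⊆ P'd := by
    intro v hv
    obtain ⟨u, -, hv⟩ := Finset.mem_biUnion.mp hv
    exact (Finset.mem_filter.mp hv).1
  have hle2 : ∑ v ∈ Qa.biUnion (fun u => P'd.filter (fun v => anc v = u)),
      ((v.length : ℤ) - ((anc v).length : ℤ) + 1) ≤
      ∑ v ∈ P'd, ((v.length : ℤ) - ((anc v).length : ℤ) + 1) := by
    refine Finset.sum_le_sum_of_subset_of_nonneg hsubB (fun v hv _ => ?_)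
    have := ((hanc v hv).2).length_le
    omega
  have hfinal : ∑ v ∈ P'd, ((v.length : ℤ) - ((anc v).length : ℤ) + 1) =
      (∑ v ∈ P'd, ((v.length : ℤ) - ((anc v).length : ℤ))) + (P'd.card : ℤ) := by
    rw [Finset.sum_add_distrib]
    simp
  have hPaPd : (Pa.card : ℤ) ≤ (Pd.card : ℤ) - (Qa.card : ℤ) := by omega
  have := hmain.trans_eq hbig |>.trans hle2
  rw [hfinal] at this
  omega
end

section
/- Let μ > 0, φ ≥ 0 and p ≥ 0 be real numbers. If p < φ·ln(μ·p), then p < e·φ·ln(e·μ·φ). -/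
/-- Auxiliary Lemma F.1: if `p < φ·ln(μ·p)` then `p < e·φ·ln(e·μ·φ)`. -/
theorem stmt11 (μ φ p : ℝ) (hμ : 0 < μ) (hφ : 0 ≤ φ) (hp : 0 ≤ p)
    (h : p < φ * Real.log (μ * p)) :
    p < Real.exp 1 * φ * Real.log (Real.exp 1 * μ * φ) := by
  have hE : (0:ℝ) < Real.exp 1 := Real.exp_pos 1
  have hE2 : (2:ℝ) < Real.exp 1 := by
    have := Real.exp_one_gt_d9; linarith
  have hp0 : 0 < p := by
    rcases hp.lt_or_eq with h1 | h1
    · exact h1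
    · exfalso; rw [← h1] at h; simp [Real.log_zero] at h
  have hφ0 : 0 < φ := by
    rcases hφ.lt_or_eq with h1 | h1
    · exact h1
    · exfalso; rw [← h1] at h; simp at h; linarith
  have hq : 0 < p / (Real.exp 1 * φ) := by positivity
  have hlog : Real.log (p / (Real.exp 1 * φ)) ≤ p / (Real.exp 1 * φ) - 1 :=
    Real.log_le_sub_one_of_pos hq
  have hsplit : Real.log (μ * p)
      = Real.log (Real.exp 1 * μ * φ) + Real.log (p / (Real.exp 1 * φ)) := by
    have heq : μ * p = (Real.exp 1 * μ * φ) * (p / (Real.exp 1 * φ)) := by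
      field_simp
    rw [heq, Real.log_mul (by positivity) (ne_of_gt hq)]
  set L := Real.log (Real.exp 1 * μ * φ) with hL
  have h2 : p < φ * L + φ * (p / (Real.exp 1 * φ) - 1) := by
    rw [hsplit, mul_add] at h
    nlinarith [mul_le_mul_of_nonneg_left hlog hφ]
  have hsimp : φ * (p / (Real.exp 1 * φ) - 1) = p / Real.exp 1 - φ := by
    field_simp
  have hkey : p - p / Real.exp 1 < φ * L := by linarith [h2, hsimp.symm ▸ h2]
  have hmul := mul_lt_mul_of_pos_left hkey hE
  have hEp : Real.exp 1 * (p / Real.exp 1) = p := by field_simp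
  nlinarith [mul_pos (sub_pos.mpr hE2) hp0]
end
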